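/- arXiv:math/0608292 — 9 statements merged into one kernel-verified Lean document; each statement's English description precedes it below -/
import Mathlib

section
/- If x and y are nonzero quaternions whose images in SO_3(R) under the standard rotation homomorphism commute, then xy = yx or xy = -yx. -/
noncomputable def theta (x : Quaternion ℝ) : Matrix (Fin 3) (Fin 3) ℝ :=
  (x.re ^ 2 + x.imI ^ 2 + x.imJ ^ 2 + x.imK ^ 2)⁻¹ •
    !![x.re ^ 2 + x.imI ^ 2 - x.imJ ^ 2 - x.imK ^ 2,
         2 * (x.imI * x.imJ - x.re * x.imK), 2 * (x.imI * x.imK + x.re * x.imJ);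
       2 * (x.imI * x.imJ + x.re * x.imK),
         x.re ^ 2 - x.imI ^ 2 + x.imJ ^ 2 - x.imK ^ 2, 2 * (x.imJ * x.imK - x.re * x.imI);
       2 * (x.imI * x.imK - x.re * x.imJ), 2 * (x.imJ * x.imK + x.re * x.imI),
         x.re ^ 2 - x.imI ^ 2 - x.imJ ^ 2 + x.imK ^ 2]

lemma nz (x : Quaternion ℝ) (hx : x ≠ 0) :
    x.re ^ 2 + x.imI ^ 2 + x.imJ ^ 2 + x.imK ^ 2 ≠ 0 := by
  rw [← Quaternion.normSq_def']
  exact Quaternion.normSq_ne_zero.2 hx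

set_option maxHeartbeats 4000000 in
lemma theta_mul (x y : Quaternion ℝ) (hx : x ≠ 0) (hy : y ≠ 0) :
    theta (x * y) = theta x * theta y := by
  have hN : (x * y).re ^ 2 + (x * y).imI ^ 2 + (x * y).imJ ^ 2 + (x * y).imK ^ 2 =
      (x.re ^ 2 + x.imI ^ 2 + x.imJ ^ 2 + x.imK ^ 2) *
        (y.re ^ 2 + y.imI ^ 2 + y.imJ ^ 2 + y.imK ^ 2) := by
    simp only [Quaternion.re_mul, Quaternion.imI_mul, Quaternion.imJ_mul, Quaternion.imK_mul]
    ring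
  simp only [theta]
  rw [hN, mul_inv, Matrix.smul_mul, Matrix.mul_smul, smul_smul, Matrix.mul_fin_three]
  congr 1
  ext i j
  fin_cases i <;> fin_cases j <;>
    · simp [Quaternion.re_mul, Quaternion.imI_mul, Quaternion.imJ_mul, Quaternion.imK_mul]
      ring

lemma theta_one : theta (1 : Quaternion ℝ) = 1 := by
  ext i j
  fin_cases i <;> fin_cases j <;>
    simp [theta, Matrix.one_apply, Matrix.vecHead, Matrix.vecTail, Quaternion.re_one,
        Quaternion.imI_one, Quaternion.imJ_one, Quaternion.imK_one]

lemma theta_ker (z : Quaternion ℝ) (hz : z ≠ 0) (h : theta z = 1) :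
    z.imI = 0 ∧ z.imJ = 0 ∧ z.imK = 0 := by
  have hz' := nz z hz
  have h00 := congrFun (congrFun h 0) 0
  have h11 := congrFun (congrFun h 1) 1
  simp [theta, Matrix.one_apply] at h00 h11
  field_simp at h00 h11
  refine ⟨?_, ?_, ?_⟩ <;> nlinarith [sq_nonneg z.imI, sq_nonneg z.imJ, sq_nonneg z.imK]

theorem theta_commute_imp (x y : Quaternion ℝ) (hx : x ≠ 0) (hy : y ≠ 0)
    (h : theta x * theta y = theta y * theta x) :
    x * y = y * x ∨ x * y = -(y * x) := by
  have hxy : x * y ≠ 0 := mul_ne_zero hx hy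
  have hyx : y * x ≠ 0 := mul_ne_zero hy hx
  have hyxi : (y * x)⁻¹ ≠ 0 := inv_ne_zero hyx
  set z : Quaternion ℝ := (x * y) * (y * x)⁻¹ with hzdef
  have hz : z ≠ 0 := mul_ne_zero hxy hyxi
  have hθz : theta z = 1 := by
    have h1 : theta z * theta (y * x) = theta (y * x) := by
      rw [← theta_mul _ _ hz hyx, hzdef, mul_assoc, inv_mul_cancel₀ hyx, mul_one,
        theta_mul _ _ hx hy, h, ← theta_mul _ _ hy hx]
    have h2 : theta (y * x) * theta ((y * x)⁻¹) = 1 := by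
      rw [← theta_mul _ _ hyx hyxi, mul_inv_cancel₀ hyx, theta_one]
    calc theta z = theta z * (theta (y * x) * theta ((y * x)⁻¹)) := by rw [h2, mul_one]
      _ = (theta z * theta (y * x)) * theta ((y * x)⁻¹) := by rw [mul_assoc]
      _ = 1 := by rw [h1, h2]
  obtain ⟨h1, h2, h3⟩ := theta_ker z hz hθz
  have hzr : z = ((z.re : ℝ) : Quaternion ℝ) := by
    ext <;> simp [h1, h2, h3]
  have hxyz : x * y = ((z.re : ℝ) : Quaternion ℝ) * (y * x) := by
    rw [← hzr, hzdef, mul_assoc, inv_mul_cancel₀ hyx, mul_one]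
  have hns : Quaternion.normSq (x * y) = Quaternion.normSq (y * x) := by
    rw [map_mul, map_mul, mul_comm]
  have hr2 : z.re ^ 2 = 1 := by
    have := hns
    rw [hxyz, map_mul, Quaternion.normSq_coe] at this
    have hn : Quaternion.normSq (y * x) ≠ 0 := Quaternion.normSq_ne_zero.2 hyx
    have : z.re ^ 2 * Quaternion.normSq (y * x) = 1 * Quaternion.normSq (y * x) := by
      rw [one_mul]; linarith [this]
    exact mul_right_cancel₀ hn this
  have : (z.re - 1) * (z.re + 1) = 0 := by nlinarith
  rcases mul_eq_zero.mp this with h' | h'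
  · left
    have : z.re = 1 := by linarith
    rw [hxyz, this]
    push_cast
    rw [one_mul]
  · right
    have : z.re = -1 := by linarith
    rw [hxyz, this]
    push_cast
    rw [neg_one_mul]
end

section
/- Let G1 × G2 be a subgroup of SO_3(R) with G1 and G2 nontrivial. If G1 × G2 is not abelian, then both G1 and G2 contain an element of order 2. -/
open Matrix RealInnerProductSpace


lemma rotcls (p q r t : ℝ) (h1 : p*p + q*q = 1) (h2 : r*r + t*t = 1)
    (h3 : p*r + q*t = 0) (h4 : p*t - q*r = 1) : t = p ∧ r = -q := by
  have key : (t-p)^2 + (r+q)^2 = 0 := by nlinarith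
  constructor <;> nlinarith [sq_nonneg (t-p), sq_nonneg (r+q)]

lemma refcls (p q r t : ℝ) (h1 : p*p + q*q = 1) (h2 : r*r + t*t = 1)
    (h3 : p*r + q*t = 0) (h4 : p*t - q*r = -1) : t = -p ∧ r = q := by
  have key : (t+p)^2 + (r-q)^2 = 0 := by nlinarith
  constructor <;> nlinarith [sq_nonneg (t+p), sq_nonneg (r-q)]

lemma solve2 (a b x y : ℝ) (hab : a*a + b*b = 1) (hane : a ≠ 1)
    (h1 : (1-a)*x + b*y = 0) (h2 : -b*x + (1-a)*y = 0) : x = 0 ∧ y = 0 := by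
  have h2a : 2 - 2*a ≠ 0 := fun h => hane (by linarith)
  constructor
  · have hx : (2 - 2*a) * x = 0 := by linear_combination (1-a)*h1 - b*h2 - x*hab
    exact (mul_eq_zero.mp hx).resolve_left h2a
  · have hy : (2 - 2*a) * y = 0 := by linear_combination b*h1 + (1-a)*h2 - y*hab
    exact (mul_eq_zero.mp hy).resolve_left h2a



lemma fixvec (M : Matrix (Fin 3) (Fin 3) ℝ) (ho : M * Mᵀ = 1) (hd : M.det = 1) :
    ∃ v : Fin 3 → ℝ, v ≠ 0 ∧ M.mulVec v = v := by
  have h1 : (M - 1) = M * (1 - Mᵀ) := by rw [mul_sub, mul_one, ho]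
  have h2 : (M - 1).det = (1 - Mᵀ).det := by rw [h1, Matrix.det_mul, hd, one_mul]
  have h3 : (1 - Mᵀ) = (1 - M)ᵀ := by simp [Matrix.transpose_sub]
  have h4 : (1 - M : Matrix (Fin 3) (Fin 3) ℝ) = -(M - 1) := by rw [neg_sub]
  have h5 : (M - 1).det = 0 := by
    rw [h3, Matrix.det_transpose, h4, Matrix.det_neg] at h2
    simp at h2
    linarith
  obtain ⟨v, hv, hv0⟩ := (Matrix.exists_mulVec_eq_zero_iff).mpr h5
  refine ⟨v, hv, ?_⟩
  rw [Matrix.sub_mulVec, Matrix.one_mulVec, sub_eq_zero] at hv0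
  exact hv0



lemma conj_e0 (e : Fin 3 → ℝ) (he : e ≠ 0) :
    ∃ Q : Matrix (Fin 3) (Fin 3) ℝ, Q * Qᵀ = 1 ∧ Qᵀ * Q = 1 ∧
      ∃ c : ℝ, c ≠ 0 ∧ Q.mulVec e = c • (Pi.single 0 1 : Fin 3 → ℝ) := by
  set eE : EuclideanSpace ℝ (Fin 3) := (WithLp.equiv 2 (Fin 3 → ℝ)).symm e with heE
  have heEc : ∀ i, eE i = e i := fun i => rfl
  have he' : eE ≠ 0 := by
    intro h; apply he; funext i
    have := congrArg (fun v => (WithLp.equiv 2 (Fin 3 → ℝ)) v) h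
    simpa [heEc] using congrArg (fun v : EuclideanSpace ℝ (Fin 3) => v i) h
  set u : EuclideanSpace ℝ (Fin 3) := (‖eE‖)⁻¹ • eE with hu
  have hnorm : ‖eE‖ ≠ 0 := norm_ne_zero_iff.mpr he'
  have hun : ‖u‖ = 1 := by
    rw [hu, norm_smul, Real.norm_eq_abs, abs_of_nonneg (inv_nonneg.mpr (norm_nonneg _))]
    exact inv_mul_cancel₀ hnorm
  have hcard : Module.finrank ℝ (EuclideanSpace ℝ (Fin 3)) = Fintype.card (Fin 3) := by
    simp [finrank_euclideanSpace]
  have horth : Orthonormal ℝ (({0} : Set (Fin 3)).restrict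
      (fun _ : Fin 3 => u)) := by
    constructor
    · intro i; exact hun
    · intro i j hij
      exact absurd (Subtype.ext (by
        have hi := i.2; have hj := j.2
        simp only [Set.mem_singleton_iff] at hi hj
        rw [hi, hj])) hij
  obtain ⟨b, hb⟩ := Orthonormal.exists_orthonormalBasis_extension_of_card_eq hcard horth
  have hb0 : b 0 = u := hb 0 rfl
  set Q : Matrix (Fin 3) (Fin 3) ℝ := Matrix.of (fun i j => b i j) with hQ
  have hQ1 : Q * Qᵀ = 1 := by
    ext i j
    have h : ⟪b i, b j⟫ = if i = j then 1 else 0 := orthonormal_iff_ite.mp b.orthonormal i j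
    rw [PiLp.inner_apply] at h
    simp only [Matrix.mul_apply, Matrix.of_apply, Matrix.transpose_apply, Matrix.one_apply]
    simpa [hQ, RCLike.inner_apply, starRingEnd_apply, mul_comm] using h
  refine ⟨Q, hQ1, mul_eq_one_comm.mp hQ1, ‖eE‖, hnorm, ?_⟩
  · have key : ∀ i, ⟪b i, eE⟫ = if i = 0 then ‖eE‖ else 0 := by
      intro i
      have hee : eE = ‖eE‖ • u := by
        rw [hu, smul_smul, mul_inv_cancel₀ hnorm, one_smul]
      conv_lhs => rw [hee, real_inner_smul_right]
      rw [← hb0]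
      have h := orthonormal_iff_ite.mp b.orthonormal i 0
      rw [h]
      by_cases hi : i = 0 <;> simp [hi]
    funext i
    have h := key i
    rw [PiLp.inner_apply] at h
    simp only [RCLike.inner_apply, starRingEnd_apply, star_trivial] at h
    simp only [Matrix.mulVec, dotProduct, Matrix.of_apply, Pi.smul_apply,
      Pi.single_apply, smul_eq_mul]
    by_cases hi : i = 0 <;> simp only [hi, if_true, if_false, mul_one, mul_zero] <;>
      simp [hi] at h <;> rw [← h] <;> exact Finset.sum_congr rfl fun j _ => by rw [hQ, heEc]; exact mul_comm _ _



lemma entry_eq {M N : Matrix (Fin 3) (Fin 3) ℝ} (h : M = N) (i j : Fin 3) : M i j = N i j := by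
  rw [h]

lemma row0 (M : Matrix (Fin 3) (Fin 3) ℝ) (ho : M * Mᵀ = 1)
    (hs : M.mulVec (Pi.single 0 1) = Pi.single 0 1) :
    M 0 0 = 1 ∧ M 1 0 = 0 ∧ M 2 0 = 0 ∧ M 0 1 = 0 ∧ M 0 2 = 0 := by
  have hcol : ∀ i, M i 0 = (Pi.single 0 1 : Fin 3 → ℝ) i := by
    intro i
    have := congrFun hs i
    simpa [Matrix.mulVec, dotProduct, Fin.sum_univ_three] using this
  have ho' : Mᵀ * M = 1 := mul_eq_one_comm.mp ho
  have hrow : ∀ i, M 0 i = (Pi.single 0 1 : Fin 3 → ℝ) i := by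
    intro i
    have h2 : Mᵀ.mulVec (Pi.single 0 1) = Pi.single 0 1 := by
      conv_lhs => rw [← hs]
      rw [Matrix.mulVec_mulVec, ho', Matrix.one_mulVec]
    have := congrFun h2 i
    simpa [Matrix.mulVec, dotProduct, Fin.sum_univ_three, Matrix.transpose_apply] using this
  refine ⟨by simpa using hcol 0, by simpa using hcol 1, by simpa using hcol 2,
    by simpa using hrow 1, by simpa using hrow 2⟩



set_option maxHeartbeats 1000000 in
lemma L1core (A B : Matrix (Fin 3) (Fin 3) ℝ)
    (hAo : A * Aᵀ = 1) (hAd : A.det = 1)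
    (hBo : B * Bᵀ = 1) (hBd : B.det = 1)
    (hA1 : A.mulVec (Pi.single 0 1) = Pi.single 0 1)
    (hAB : A * B = B * A) (hAne : A ≠ 1) (hA2 : A * A ≠ 1) :
    B 0 1 = 0 ∧ B 0 2 = 0 ∧ B 1 0 = 0 ∧ B 2 0 = 0 ∧ B 0 0 = 1 ∧
    B 2 2 = B 1 1 ∧ B 2 1 = - B 1 2 := by
  obtain ⟨a00, a10, a20, a01, a02⟩ := row0 A hAo hA1
  have oA11 := entry_eq hAo 1 1
  have oA22 := entry_eq hAo 2 2
  have oA12 := entry_eq hAo 1 2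
  simp only [Matrix.mul_apply, Fin.sum_univ_three, Matrix.one_apply, Matrix.transpose_apply,
    a10, a20, a01, a02, mul_zero, zero_mul, add_zero, zero_add, if_true, if_false,
    Fin.isValue] at oA11 oA22 oA12
  norm_num at oA11 oA22 oA12
  have dA := hAd
  rw [Matrix.det_fin_three, a10, a20, a01, a02] at dA
  obtain ⟨hA22, hA21⟩ := rotcls (A 1 1) (A 1 2) (A 2 1) (A 2 2) oA11 oA22 oA12
    (by rw [a00] at dA; linear_combination dA)
  have hane : A 1 1 ≠ 1 := by
    intro h
    have hb0 : A 1 2 = 0 := by nlinarith [oA11]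
    exact hAne (by
      ext i j
      fin_cases i <;> fin_cases j <;>
        simp [Matrix.one_apply, a00, a10, a20, a01, a02, hA22, hA21, h, hb0])
  have hbne : A 1 2 ≠ 0 := by
    intro h
    have ha1 : A 1 1 = -1 := by
      rcases mul_self_eq_one_iff.mp (by linear_combination oA11 - (A 1 2)*h : A 1 1 * A 1 1 = 1)
        with h1 | h1
      · exact absurd h1 hane
      · exact h1
    exact hA2 (by
      ext i j
      fin_cases i <;> fin_cases j <;>
        simp [Matrix.mul_apply, Fin.sum_univ_three, Matrix.one_apply,
          a00, a10, a20, a01, a02, hA22, hA21, h, ha1])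
  have e01 := entry_eq hAB 0 1
  have e02 := entry_eq hAB 0 2
  have e10 := entry_eq hAB 1 0
  have e20 := entry_eq hAB 2 0
  simp only [Matrix.mul_apply, Fin.sum_univ_three, a00, a10, a20, a01, a02, hA22, hA21,
    mul_zero, zero_mul, add_zero, zero_add, one_mul, mul_one, Fin.isValue] at e01 e02 e10 e20
  obtain ⟨hB01, hB02⟩ := solve2 (A 1 1) (A 1 2) (B 0 1) (B 0 2) oA11 hane
    (by linear_combination e01) (by linear_combination e02)
  obtain ⟨hB10, hB20⟩ := solve2 (A 1 1) (-(A 1 2)) (B 1 0) (B 2 0)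
    (by linear_combination oA11) hane
    (by linear_combination -e10) (by linear_combination -e20)
  have oB00 := entry_eq hBo 0 0
  have oB11 := entry_eq hBo 1 1
  have oB22 := entry_eq hBo 2 2
  have oB12 := entry_eq hBo 1 2
  simp only [Matrix.mul_apply, Fin.sum_univ_three, Matrix.one_apply, Matrix.transpose_apply,
    hB01, hB02, hB10, hB20, mul_zero, zero_mul, add_zero, zero_add, if_true, if_false,
    Fin.isValue] at oB00 oB11 oB22 oB12
  norm_num at oB00 oB11 oB22 oB12
  have dB := hBd
  rw [Matrix.det_fin_three, hB01, hB02, hB10, hB20] at dB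
  rcases mul_self_eq_one_iff.mp (by linear_combination oB00 : B 0 0 * B 0 0 = 1) with h1 | h1
  · obtain ⟨c1, c2⟩ := rotcls (B 1 1) (B 1 2) (B 2 1) (B 2 2) oB11 oB22 oB12
      (by rw [h1] at dB; linear_combination dB)
    exact ⟨hB01, hB02, hB10, hB20, h1, c1, c2⟩
  · exfalso
    obtain ⟨hB22, hB21⟩ := refcls (B 1 1) (B 1 2) (B 2 1) (B 2 2) oB11 oB22 oB12
      (by rw [h1] at dB; linear_combination -dB)
    have e11 := entry_eq hAB 1 1
    have e12 := entry_eq hAB 1 2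
    simp only [Matrix.mul_apply, Fin.sum_univ_three, a00, a10, a20, a01, a02, hA22, hA21,
      hB01, hB02, hB10, hB20, hB22, hB21, mul_zero, zero_mul, add_zero, zero_add,
      one_mul, mul_one, Fin.isValue] at e11 e12
    have hq : B 1 2 = 0 := by
      have h : A 1 2 * B 1 2 = 0 := by linear_combination e11/2
      exact (mul_eq_zero.mp h).resolve_left hbne
    have hp : B 1 1 = 0 := by
      have h : A 1 2 * B 1 1 = 0 := by linear_combination -e12/2
      exact (mul_eq_zero.mp h).resolve_left hbne
    rw [hp, hq] at oB11
    norm_num at oB11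



lemma conj_mul3 {Q X Y : Matrix (Fin 3) (Fin 3) ℝ} (hQ2 : Qᵀ * Q = 1) :
    (Q*X*Qᵀ)*(Q*Y*Qᵀ) = Q*(X*Y)*Qᵀ := by
  have h : (Q*X*Qᵀ)*(Q*Y*Qᵀ) = Q*(X*((Qᵀ*Q)*(Y*Qᵀ))) := by simp only [Matrix.mul_assoc]
  rw [h, hQ2, one_mul]
  simp only [Matrix.mul_assoc]

lemma conj_cancel {Q X : Matrix (Fin 3) (Fin 3) ℝ} (hQ2 : Qᵀ * Q = 1) :
    Qᵀ*(Q*X*Qᵀ)*Q = X := by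
  simp only [← Matrix.mul_assoc]
  rw [hQ2, one_mul, Matrix.mul_assoc, hQ2, mul_one]

lemma conj_inj {Q X Y : Matrix (Fin 3) (Fin 3) ℝ} (hQ2 : Qᵀ * Q = 1)
    (h : Q*X*Qᵀ = Q*Y*Qᵀ) : X = Y := by
  have := congrArg (fun Z => Qᵀ*Z*Q) h
  simpa only [conj_cancel hQ2] using this

lemma conj_one {Q : Matrix (Fin 3) (Fin 3) ℝ} (hQ1 : Q * Qᵀ = 1) : Q*(1:Matrix (Fin 3) (Fin 3) ℝ)*Qᵀ = 1 := by
  rw [mul_one, hQ1]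

lemma conj_orth {Q X : Matrix (Fin 3) (Fin 3) ℝ} (hQ1 : Q * Qᵀ = 1) (hQ2 : Qᵀ * Q = 1)
    (hX : X * Xᵀ = 1) : (Q*X*Qᵀ) * (Q*X*Qᵀ)ᵀ = 1 := by
  have ht : (Q*X*Qᵀ)ᵀ = Q*Xᵀ*Qᵀ := by
    rw [Matrix.transpose_mul, Matrix.transpose_mul, Matrix.transpose_transpose,
      Matrix.mul_assoc]
  rw [ht, conj_mul3 hQ2, hX, conj_one hQ1]

lemma conj_det {Q X : Matrix (Fin 3) (Fin 3) ℝ} (hQ1 : Q * Qᵀ = 1) (hX : X.det = 1) :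
    (Q*X*Qᵀ).det = 1 := by
  have h1 : Q.det * Qᵀ.det = 1 := by rw [← Matrix.det_mul, hQ1, Matrix.det_one]
  rw [Matrix.det_mul, Matrix.det_mul, hX, mul_one, h1]

lemma conj_fix (M : Matrix (Fin 3) (Fin 3) ℝ) (ho : M * Mᵀ = 1) (hd : M.det = 1) :
    ∃ Q : Matrix (Fin 3) (Fin 3) ℝ, Q * Qᵀ = 1 ∧ Qᵀ * Q = 1 ∧
      (Q*M*Qᵀ).mulVec (Pi.single 0 1) = Pi.single 0 1 := by
  obtain ⟨e, he, hfix⟩ := fixvec M ho hd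
  obtain ⟨Q, hQ1, hQ2, c, hc, hQe⟩ := conj_e0 e he
  refine ⟨Q, hQ1, hQ2, ?_⟩
  have hs : (Pi.single 0 1 : Fin 3 → ℝ) = c⁻¹ • Q.mulVec e := by
    rw [hQe, smul_smul, inv_mul_cancel₀ hc, one_smul]
  rw [hs, Matrix.mulVec_smul]
  congr 1
  rw [← Matrix.mulVec_mulVec, ← Matrix.mulVec_mulVec]
  have h2 : Qᵀ.mulVec (Q.mulVec e) = e := by
    rw [Matrix.mulVec_mulVec, hQ2, Matrix.one_mulVec]
  rw [h2, hfix]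



def IsRotForm (X : Matrix (Fin 3) (Fin 3) ℝ) : Prop :=
  X 0 1 = 0 ∧ X 0 2 = 0 ∧ X 1 0 = 0 ∧ X 2 0 = 0 ∧ X 0 0 = 1 ∧
  X 2 2 = X 1 1 ∧ X 2 1 = - X 1 2

set_option maxHeartbeats 1000000 in
lemma rotcomm {X Y : Matrix (Fin 3) (Fin 3) ℝ} (hx : IsRotForm X) (hy : IsRotForm Y) :
    X * Y = Y * X := by
  obtain ⟨x1, x2, x3, x4, x5, x6, x7⟩ := hx
  obtain ⟨y1, y2, y3, y4, y5, y6, y7⟩ := hy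
  ext i j
  fin_cases i <;> fin_cases j <;>
    simp [Matrix.mul_apply, Fin.sum_univ_three, x1, x2, x3, x4, x5, x6, x7,
      y1, y2, y3, y4, y5, y6, y7] <;> ring

set_option maxHeartbeats 1000000 in
lemma invol_diag (B : Matrix (Fin 3) (Fin 3) ℝ)
    (hBo : B * Bᵀ = 1) (hBd : B.det = 1)
    (hB1 : B.mulVec (Pi.single 0 1) = Pi.single 0 1)
    (hB2 : B * B = 1) (hBne : B ≠ 1) :
    B 0 0 = 1 ∧ B 0 1 = 0 ∧ B 0 2 = 0 ∧ B 1 0 = 0 ∧ B 1 1 = -1 ∧ B 1 2 = 0 ∧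
    B 2 0 = 0 ∧ B 2 1 = 0 ∧ B 2 2 = -1 := by
  obtain ⟨b00, b10, b20, b01, b02⟩ := row0 B hBo hB1
  have oB11 := entry_eq hBo 1 1
  have oB22 := entry_eq hBo 2 2
  have oB12 := entry_eq hBo 1 2
  simp only [Matrix.mul_apply, Fin.sum_univ_three, Matrix.one_apply, Matrix.transpose_apply,
    b10, b20, b01, b02, mul_zero, zero_mul, add_zero, zero_add, if_true, if_false,
    Fin.reduceEq, reduceIte, Fin.isValue] at oB11 oB22 oB12
  have dB := hBd
  rw [Matrix.det_fin_three, b00, b10, b20, b01, b02] at dB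
  obtain ⟨hB22, hB21⟩ := rotcls (B 1 1) (B 1 2) (B 2 1) (B 2 2) oB11 oB22
    (by linear_combination oB12) (by linear_combination dB)
  have i11 := entry_eq hB2 1 1
  simp only [Matrix.mul_apply, Fin.sum_univ_three, Matrix.one_apply, b10, b20, b01, b02,
    hB22, hB21, mul_zero, zero_mul, add_zero, zero_add, if_true, if_false,
    Fin.reduceEq, reduceIte, Fin.isValue] at i11
  norm_num at i11
  have hq : B 1 2 = 0 := by
    have h : B 1 2 * B 1 2 = 0 := by linear_combination (oB11 - i11)/2
    exact mul_self_eq_zero.mp h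
  have hp : B 1 1 = -1 := by
    rcases mul_self_eq_one_iff.mp (by linear_combination oB11 - (B 1 2)*hq : B 1 1 * B 1 1 = 1)
      with h | h
    · exact absurd (by
        ext i j
        fin_cases i <;> fin_cases j <;>
          simp [Matrix.one_apply, b00, b10, b20, b01, b02, hB22, hB21, h, hq]) hBne
    · exact h
  exact ⟨b00, b01, b02, b10, hp, hq, b20, by rw [hB21, hq, neg_zero], by rw [hB22, hp]⟩

set_option maxHeartbeats 1000000 in
lemma centr {B C : Matrix (Fin 3) (Fin 3) ℝ}
    (hb : B 0 0 = 1 ∧ B 0 1 = 0 ∧ B 0 2 = 0 ∧ B 1 0 = 0 ∧ B 1 1 = -1 ∧ B 1 2 = 0 ∧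
      B 2 0 = 0 ∧ B 2 1 = 0 ∧ B 2 2 = -1)
    (hCo : C * Cᵀ = 1) (hCd : C.det = 1) (hBC : B * C = C * B) :
    C * C = 1 ∨ IsRotForm C := by
  obtain ⟨b1, b2, b3, b4, b5, b6, b7, b8, b9⟩ := hb
  have e01 := entry_eq hBC 0 1
  have e02 := entry_eq hBC 0 2
  have e10 := entry_eq hBC 1 0
  have e20 := entry_eq hBC 2 0
  simp only [Matrix.mul_apply, Fin.sum_univ_three, b1, b2, b3, b4, b5, b6, b7, b8, b9,
    mul_zero, zero_mul, add_zero, zero_add, one_mul, mul_one, mul_neg, neg_mul,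
    Fin.reduceEq, reduceIte, Fin.isValue] at e01 e02 e10 e20
  have hC01 : C 0 1 = 0 := by linear_combination e01/2
  have hC02 : C 0 2 = 0 := by linear_combination e02/2
  have hC10 : C 1 0 = 0 := by linear_combination -e10/2
  have hC20 : C 2 0 = 0 := by linear_combination -e20/2
  have oC00 := entry_eq hCo 0 0
  have oC11 := entry_eq hCo 1 1
  have oC22 := entry_eq hCo 2 2
  have oC12 := entry_eq hCo 1 2
  simp only [Matrix.mul_apply, Fin.sum_univ_three, Matrix.one_apply, Matrix.transpose_apply,
    hC01, hC02, hC10, hC20, mul_zero, zero_mul, add_zero, zero_add, if_true, if_false,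
    Fin.reduceEq, reduceIte, Fin.isValue] at oC00 oC11 oC22 oC12
  norm_num at oC00 oC11 oC22 oC12
  have dC := hCd
  rw [Matrix.det_fin_three, hC01, hC02, hC10, hC20] at dC
  rcases mul_self_eq_one_iff.mp (by linear_combination oC00 : C 0 0 * C 0 0 = 1) with h1 | h1
  · obtain ⟨c1, c2⟩ := rotcls (C 1 1) (C 1 2) (C 2 1) (C 2 2) oC11 oC22
      (by linear_combination oC12) (by rw [h1] at dC; linear_combination dC)
    exact Or.inr ⟨hC01, hC02, hC10, hC20, h1, c1, c2⟩
  · obtain ⟨c1, c2⟩ := refcls (C 1 1) (C 1 2) (C 2 1) (C 2 2) oC11 oC22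
      (by linear_combination oC12) (by rw [h1] at dC; linear_combination -dC)
    left
    have hsym : Cᵀ = C := by
      ext i j
      fin_cases i <;> fin_cases j <;>
        simp [Matrix.transpose_apply, hC01, hC02, hC10, hC20, c1, c2]
    conv_lhs => rw [← hsym, hsym]
    nth_rewrite 2 [← hsym]
    exact hCo



lemma L1full {A B C : Matrix (Fin 3) (Fin 3) ℝ}
    (hAo : A * Aᵀ = 1) (hAd : A.det = 1) (hBo : B * Bᵀ = 1) (hBd : B.det = 1)
    (hCo : C * Cᵀ = 1) (hCd : C.det = 1)
    (hAB : A * B = B * A) (hAC : A * C = C * A) (hBC : B * C ≠ C * B) :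
    A * A = 1 := by
  by_cases hA1 : A = 1
  · rw [hA1, one_mul]
  by_contra hA2
  obtain ⟨Q, hQ1, hQ2, hfix⟩ := conj_fix A hAo hAd
  have hA'ne : Q*A*Qᵀ ≠ 1 := fun h => hA1 (conj_inj hQ2 (h.trans (conj_one hQ1).symm))
  have hA'2 : (Q*A*Qᵀ)*(Q*A*Qᵀ) ≠ 1 := by
    rw [conj_mul3 hQ2]
    exact fun h => hA2 (conj_inj hQ2 (h.trans (conj_one hQ1).symm))
  have hcommB : (Q*A*Qᵀ)*(Q*B*Qᵀ) = (Q*B*Qᵀ)*(Q*A*Qᵀ) := by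
    rw [conj_mul3 hQ2, conj_mul3 hQ2, hAB]
  have hcommC : (Q*A*Qᵀ)*(Q*C*Qᵀ) = (Q*C*Qᵀ)*(Q*A*Qᵀ) := by
    rw [conj_mul3 hQ2, conj_mul3 hQ2, hAC]
  have hB' := L1core (Q*A*Qᵀ) (Q*B*Qᵀ) (conj_orth hQ1 hQ2 hAo) (conj_det hQ1 hAd)
    (conj_orth hQ1 hQ2 hBo) (conj_det hQ1 hBd) hfix hcommB hA'ne hA'2
  have hC' := L1core (Q*A*Qᵀ) (Q*C*Qᵀ) (conj_orth hQ1 hQ2 hAo) (conj_det hQ1 hAd)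
    (conj_orth hQ1 hQ2 hCo) (conj_det hQ1 hCd) hfix hcommC hA'ne hA'2
  apply hBC
  apply conj_inj hQ2
  rw [← conj_mul3 hQ2, ← conj_mul3 hQ2]
  exact rotcomm hB' hC'

lemma L2full {B C D : Matrix (Fin 3) (Fin 3) ℝ}
    (hBo : B * Bᵀ = 1) (hBd : B.det = 1) (hCo : C * Cᵀ = 1) (hCd : C.det = 1)
    (hDo : D * Dᵀ = 1) (hDd : D.det = 1)
    (hB2 : B * B = 1) (hBne : B ≠ 1)
    (hBC : B * C = C * B) (hBD : B * D = D * B) :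
    C * C = 1 ∨ D * D = 1 ∨ C * D = D * C := by
  obtain ⟨Q, hQ1, hQ2, hfix⟩ := conj_fix B hBo hBd
  have hB'ne : Q*B*Qᵀ ≠ 1 := fun h => hBne (conj_inj hQ2 (h.trans (conj_one hQ1).symm))
  have hB'2 : (Q*B*Qᵀ)*(Q*B*Qᵀ) = 1 := by rw [conj_mul3 hQ2, hB2, conj_one hQ1]
  have hdiag := invol_diag (Q*B*Qᵀ) (conj_orth hQ1 hQ2 hBo) (conj_det hQ1 hBd) hfix hB'2 hB'ne
  have hcommC : (Q*B*Qᵀ)*(Q*C*Qᵀ) = (Q*C*Qᵀ)*(Q*B*Qᵀ) := by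
    rw [conj_mul3 hQ2, conj_mul3 hQ2, hBC]
  have hcommD : (Q*B*Qᵀ)*(Q*D*Qᵀ) = (Q*D*Qᵀ)*(Q*B*Qᵀ) := by
    rw [conj_mul3 hQ2, conj_mul3 hQ2, hBD]
  rcases centr hdiag (conj_orth hQ1 hQ2 hCo) (conj_det hQ1 hCd) hcommC with hC | hC
  · left
    exact conj_inj hQ2 ((conj_mul3 hQ2).symm.trans (hC.trans (conj_one hQ1).symm))
  · rcases centr hdiag (conj_orth hQ1 hQ2 hDo) (conj_det hQ1 hDd) hcommD with hD | hD
    · right; left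
      exact conj_inj hQ2 ((conj_mul3 hQ2).symm.trans (hD.trans (conj_one hQ1).symm))
    · right; right
      apply conj_inj hQ2
      rw [← conj_mul3 hQ2, ← conj_mul3 hQ2]
      exact rotcomm hC hD



lemma glue {G₁ G₂ : Type*} [Group G₁] [Group G₂]
    (f : G₁ × G₂ →* Matrix (Fin 3) (Fin 3) ℝ)
    (hrange : ∀ g, f g ∈ Matrix.specialOrthogonalGroup (Fin 3) ℝ)
    (hinj : Function.Injective f)
    (x y : G₁) (hxy : x * y ≠ y * x) (g : G₂) (hg : g ≠ 1) :
    (∃ a : G₁, a ≠ 1 ∧ a ^ 2 = 1) ∧ (∃ b : G₂, b ≠ 1 ∧ b ^ 2 = 1) := by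
  have ho : ∀ z, f z * (f z)ᵀ = 1 := by
    intro z
    have h := (Matrix.mem_specialOrthogonalGroup_iff.mp (hrange z)).1
    have h2 := (Matrix.mem_orthogonalGroup_iff (Fin 3) ℝ).mp h
    exact h2
  have hd : ∀ z, (f z).det = 1 := fun z =>
    (Matrix.mem_specialOrthogonalGroup_iff.mp (hrange z)).2
  set A := f (1, g) with hA
  set B := f (x, 1) with hB
  set C := f (y, 1) with hC
  have hAB : A * B = B * A := by
    rw [hA, hB, ← _root_.map_mul, ← _root_.map_mul, Prod.mk_mul_mk, Prod.mk_mul_mk, one_mul, mul_one,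
      one_mul, mul_one]
  have hAC : A * C = C * A := by
    rw [hA, hC, ← _root_.map_mul, ← _root_.map_mul, Prod.mk_mul_mk, Prod.mk_mul_mk, one_mul, mul_one,
      one_mul, mul_one]
  have hBC : B * C ≠ C * B := by
    rw [hB, hC, ← _root_.map_mul, ← _root_.map_mul]
    intro h
    have h2 := hinj h
    rw [Prod.mk_mul_mk, Prod.mk_mul_mk, Prod.mk.injEq] at h2
    exact hxy h2.1
  have hA2 : A * A = 1 := L1full (ho _) (hd _) (ho _) (hd _) (ho _) (hd _) hAB hAC hBC
  have hgg : g * g = 1 := by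
    have h : f ((1, g) * (1, g)) = f 1 := by
      rw [_root_.map_mul, _root_.map_one, ← hA, hA2]
    have h2 := hinj h
    rw [Prod.mk_mul_mk, Prod.mk.injEq] at h2
    exact h2.2
  have hAne : A ≠ 1 := by
    intro h
    have h2 := hinj (show f (1, g) = f 1 by rw [_root_.map_one, ← hA, h])
    rw [Prod.mk.injEq] at h2
    exact hg h2.2
  have hfirst : ∃ a : G₁, a ≠ 1 ∧ a ^ 2 = 1 := by
    rcases L2full (ho _) (hd _) (ho _) (hd _) (ho _) (hd _) hA2 hAne hAB hAC with h | h | h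
    · refine ⟨x, ?_, ?_⟩
      · intro hx1; apply hxy; rw [hx1, one_mul, mul_one]
      · have h2 : f ((x, 1) * (x, 1)) = f 1 := by rw [_root_.map_mul, _root_.map_one, ← hB, h]
        have h3 := hinj h2
        rw [Prod.mk_mul_mk, Prod.mk.injEq] at h3
        rw [pow_two]
        exact h3.1
    · refine ⟨y, ?_, ?_⟩
      · intro hy1; apply hxy; rw [hy1, one_mul, mul_one]
      · have h2 : f ((y, 1) * (y, 1)) = f 1 := by rw [_root_.map_mul, _root_.map_one, ← hC, h]
        have h3 := hinj h2
        rw [Prod.mk_mul_mk, Prod.mk.injEq] at h3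
        rw [pow_two]
        exact h3.1
    · exact absurd h hBC
  exact ⟨hfirst, ⟨g, hg, by rw [pow_two]; exact hgg⟩⟩

theorem so3_direct_product_order_two (G₁ G₂ : Type*) [Group G₁] [Group G₂]
    (h₁ : ∃ g : G₁, g ≠ 1) (h₂ : ∃ g : G₂, g ≠ 1)
    (f : G₁ × G₂ →* Matrix (Fin 3) (Fin 3) ℝ)
    (hrange : ∀ g, f g ∈ Matrix.specialOrthogonalGroup (Fin 3) ℝ)
    (hinj : Function.Injective f)
    (hnonab : ¬ ∀ a b : G₁ × G₂, a * b = b * a) :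
    (∃ a : G₁, a ≠ 1 ∧ a ^ 2 = 1) ∧ (∃ b : G₂, b ≠ 1 ∧ b ^ 2 = 1) := by
  push_neg at hnonab
  obtain ⟨a, b, hab⟩ := hnonab
  have hcase : a.1 * b.1 ≠ b.1 * a.1 ∨ a.2 * b.2 ≠ b.2 * a.2 := by
    by_contra h
    push_neg at h
    exact hab (Prod.ext h.1 h.2)
  rcases hcase with h | h
  · obtain ⟨g2, hg2⟩ := h₂
    exact glue f hrange hinj a.1 b.1 h g2 hg2
  · obtain ⟨g1, hg1⟩ := h₁
    have res := glue (f.comp (MulEquiv.prodComm (M := G₂) (N := G₁)).toMonoidHom)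
      (fun z => hrange _) (hinj.comp (MulEquiv.prodComm (M := G₂) (N := G₁)).injective)
      a.2 b.2 h g1 hg1
    exact ⟨res.2, res.1⟩
end

section
/- SO_3(R) contains no subgroup isomorphic to Z × F_2, where F_2 is the free group of rank 2. -/
open Matrix

namespace SO3Aux

/-- `A` is a special orthogonal 3×3 real matrix. -/
def SO3 (A : Matrix (Fin 3) (Fin 3) ℝ) : Prop := Aᵀ * A = 1 ∧ A.det = 1

lemma dot_mulVec {A : Matrix (Fin 3) (Fin 3) ℝ} (hA : SO3 A) (x y : Fin 3 → ℝ) :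
    (A.mulVec x) ⬝ᵥ (A.mulVec y) = x ⬝ᵥ y := by
  rw [Matrix.dotProduct_mulVec, ← Matrix.vecMul_transpose, Matrix.vecMul_vecMul, hA.1,
    Matrix.vecMul_one]

lemma triple (a b c : Fin 3 → ℝ) : a ⨯₃ (b ⨯₃ c) = (a ⬝ᵥ c) • b - (a ⬝ᵥ b) • c := by
  ext i
  fin_cases i <;> simp [crossProduct, dotProduct, Fin.sum_univ_three] <;> ring

lemma resolution {v w : Fin 3 → ℝ} (h : v ⬝ᵥ w = 0) (x : Fin 3 → ℝ) :
    ((v ⬝ᵥ v) * (w ⬝ᵥ w)) • x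
      = ((x ⬝ᵥ v) * (w ⬝ᵥ w)) • v + ((x ⬝ᵥ w) * (v ⬝ᵥ v)) • w
        + (x ⬝ᵥ (v ⨯₃ w)) • (v ⨯₃ w) := by
  simp only [dotProduct, Fin.sum_univ_three, crossProduct] at h ⊢
  ext i
  fin_cases i <;> simp
  · linear_combination (-((x 0 * v 0 + x 1 * v 1 + x 2 * v 2) * w 0
      + (x 0 * w 0 + x 1 * w 1 + x 2 * w 2) * v 0
      - (v 0 * w 0 + v 1 * w 1 + v 2 * w 2) * x 0)) * h
  · linear_combination (-((x 0 * v 0 + x 1 * v 1 + x 2 * v 2) * w 1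
      + (x 0 * w 0 + x 1 * w 1 + x 2 * w 2) * v 1
      - (v 0 * w 0 + v 1 * w 1 + v 2 * w 2) * x 1)) * h
  · linear_combination (-((x 0 * v 0 + x 1 * v 1 + x 2 * v 2) * w 2
      + (x 0 * w 0 + x 1 * w 1 + x 2 * w 2) * v 2
      - (v 0 * w 0 + v 1 * w 1 + v 2 * w 2) * x 2)) * h

lemma equivar {A : Matrix (Fin 3) (Fin 3) ℝ} (hA : SO3 A) (x y : Fin 3 → ℝ) :
    A.mulVec (x ⨯₃ y) = (A.mulVec x) ⨯₃ (A.mulVec y) := by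
  have hA' : A * Aᵀ = 1 := mul_eq_one_comm.mp hA.1
  have key : ∀ z, (A.mulVec z) ⬝ᵥ (A.mulVec (x ⨯₃ y))
      = (A.mulVec z) ⬝ᵥ ((A.mulVec x) ⨯₃ (A.mulVec y)) := by
    intro z
    have h1 : (A.mulVec z) ⬝ᵥ (A.mulVec (x ⨯₃ y)) = z ⬝ᵥ (x ⨯₃ y) := dot_mulVec hA z _
    have h2 : ![A.mulVec z, A.mulVec x, A.mulVec y] = Matrix.of ![z, x, y] * Aᵀ := by
      ext i j
      fin_cases i <;>
        simp [Matrix.mul_apply, Matrix.mulVec, dotProduct, Fin.sum_univ_three, mul_comm]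
    rw [h1, triple_product_eq_det, triple_product_eq_det,
      show (![z, x, y] : Matrix (Fin 3) (Fin 3) ℝ) = Matrix.of ![z, x, y] from rfl, h2,
      Matrix.det_mul, Matrix.det_transpose, hA.2, mul_one]
  funext i
  have := key (Aᵀ.mulVec (Pi.single i 1))
  rw [Matrix.mulVec_mulVec, hA', Matrix.one_mulVec] at this
  simpa [dotProduct, Pi.single_apply] using this

lemma exists_fixed {A : Matrix (Fin 3) (Fin 3) ℝ} (hA : SO3 A) :
    ∃ v ≠ 0, A.mulVec v = v := by
  have h1 : Aᵀ * (A - 1) = (1 - A)ᵀ := by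
    rw [mul_sub, hA.1, mul_one, Matrix.transpose_sub, Matrix.transpose_one]
  have h2 : (Aᵀ * (A - 1)).det = (A - 1).det := by
    rw [Matrix.det_mul, Matrix.det_transpose, hA.2, one_mul]
  rw [h1, Matrix.det_transpose, ← neg_sub A 1, Matrix.det_neg] at h2
  simp [Fintype.card_fin] at h2
  have hdet : (A - 1).det = 0 := by linarith
  obtain ⟨v, hv, hv2⟩ := (Matrix.exists_mulVec_eq_zero_iff).2 hdet
  refine ⟨v, hv, ?_⟩
  rwa [Matrix.sub_mulVec, Matrix.one_mulVec, sub_eq_zero] at hv2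

lemma eq_one_of_fixes {A : Matrix (Fin 3) (Fin 3) ℝ} {v w : Fin 3 → ℝ} (hA : SO3 A)
    (hv : A.mulVec v = v) (hw : A.mulVec w = w) (hvw : v ⬝ᵥ w = 0)
    (hv0 : v ≠ 0) (hw0 : w ≠ 0) : A = 1 := by
  have hu : A.mulVec (v ⨯₃ w) = v ⨯₃ w := by rw [equivar hA, hv, hw]
  have hk : (v ⬝ᵥ v) * (w ⬝ᵥ w) ≠ 0 :=
    mul_ne_zero (fun h => hv0 ((dotProduct_self_eq_zero).mp h))
      (fun h => hw0 ((dotProduct_self_eq_zero).mp h))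
  have hfix : ∀ x, A.mulVec x = x := by
    intro x
    have h1 := congrArg A.mulVec (resolution hvw x)
    rw [Matrix.mulVec_smul, Matrix.mulVec_add, Matrix.mulVec_add, Matrix.mulVec_smul,
      Matrix.mulVec_smul, Matrix.mulVec_smul, hv, hw, hu, ← resolution hvw x] at h1
    exact smul_right_injective _ hk h1
  ext i j
  simpa [Matrix.mulVec_single, Matrix.one_apply, Pi.single_apply, eq_comm] using
    congrFun (hfix (Pi.single j 1)) i

lemma sq_fixes {A B : Matrix (Fin 3) (Fin 3) ℝ} {v : Fin 3 → ℝ} (hA : SO3 A) (hB : SO3 B)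
    (hAne : A ≠ 1) (hcomm : A * B = B * A) (hv : A.mulVec v = v) (hv0 : v ≠ 0) :
    (B * B).mulVec v = v := by
  have hABv : A.mulVec (B.mulVec v) = B.mulVec v := by
    rw [Matrix.mulVec_mulVec, hcomm, ← Matrix.mulVec_mulVec, hv]
  set w : Fin 3 → ℝ := (v ⬝ᵥ v) • (B.mulVec v) - (v ⬝ᵥ (B.mulVec v)) • v with hwdef
  have hAw : A.mulVec w = w := by
    rw [hwdef, Matrix.mulVec_sub, Matrix.mulVec_smul, Matrix.mulVec_smul, hABv, hv]
  have hvw : v ⬝ᵥ w = 0 := by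
    rw [hwdef, dotProduct_sub, dotProduct_smul, dotProduct_smul]
    simp [mul_comm]
  have hw0 : w = 0 := by
    by_contra hw0
    exact hAne (eq_one_of_fixes hA hv hAw hvw hv0 hw0)
  have hkey : (v ⬝ᵥ v) • (B.mulVec v) = (v ⬝ᵥ (B.mulVec v)) • v := by
    rwa [hwdef, sub_eq_zero] at hw0
  set k : ℝ := v ⬝ᵥ v with hkdef
  set β : ℝ := v ⬝ᵥ (B.mulVec v) with hβdef
  have hk0 : k ≠ 0 := fun h => hv0 ((dotProduct_self_eq_zero).mp h)
  -- norm preservation gives β² = k²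
  have hnorm : (B.mulVec v) ⬝ᵥ (B.mulVec v) = k := dot_mulVec hB v v
  have hββ : β * β = k * k := by
    have h1 : (k • B.mulVec v) ⬝ᵥ (k • B.mulVec v) = k * (k * k) := by
      rw [smul_dotProduct, dotProduct_smul, hnorm, smul_eq_mul, smul_eq_mul]
    rw [hkey, smul_dotProduct, dotProduct_smul, smul_eq_mul, smul_eq_mul, ← hkdef] at h1
    exact mul_right_cancel₀ hk0 (by linear_combination h1)
  have h2 : (k * k) • (B.mulVec (B.mulVec v)) = (k * k) • v := by
    calc (k * k) • (B.mulVec (B.mulVec v)) = k • (B.mulVec (k • B.mulVec v)) := by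
          rw [Matrix.mulVec_smul, smul_smul]
      _ = k • (B.mulVec (β • v)) := by rw [hkey]
      _ = β • (k • B.mulVec v) := by rw [Matrix.mulVec_smul, smul_comm]
      _ = β • (β • v) := by rw [hkey]
      _ = (k * k) • v := by rw [smul_smul, hββ]
  rw [← Matrix.mulVec_mulVec]
  exact smul_right_injective _ (mul_ne_zero hk0 hk0) h2

lemma exists_perp {v : Fin 3 → ℝ} (hv0 : v ≠ 0) : ∃ w, w ≠ 0 ∧ v ⬝ᵥ w = 0 := by
  by_cases h1 : (![0, v 2, -(v 1)] : Fin 3 → ℝ) = 0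
  · refine ⟨![-(v 2), 0, v 0], ?_, by simp [dotProduct, Fin.sum_univ_three]; ring⟩
    intro h2
    apply hv0
    have e1 := congrFun h1 1
    have e2 := congrFun h1 2
    have e0 := congrFun h2 2
    simp at e1 e2 e0
    ext i; fin_cases i <;> simp [e0, e1, e2]
  · exact ⟨_, h1, by simp [dotProduct, Fin.sum_univ_three]; ring⟩

lemma coords {X : Matrix (Fin 3) (Fin 3) ℝ} {v w : Fin 3 → ℝ} (hX : SO3 X)
    (hXv : X.mulVec v = v) (hvw : v ⬝ᵥ w = 0) :
    ∃ p q : ℝ,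
      ((v ⬝ᵥ v) * (w ⬝ᵥ w)) • (X.mulVec w) = p • w + q • (v ⨯₃ w) ∧
      ((v ⬝ᵥ v) * (w ⬝ᵥ w)) • (X.mulVec (v ⨯₃ w))
        = (-(v ⬝ᵥ v) * q) • w + p • (v ⨯₃ w) := by
  have hperp : (X.mulVec w) ⬝ᵥ v = 0 := by
    have := dot_mulVec hX w v
    rw [hXv] at this
    rw [this, dotProduct_comm, hvw]
  refine ⟨((X.mulVec w) ⬝ᵥ w) * (v ⬝ᵥ v), (X.mulVec w) ⬝ᵥ (v ⨯₃ w), ?_, ?_⟩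
  · have := resolution hvw (X.mulVec w)
    rwa [hperp, zero_mul, zero_smul, zero_add] at this
  · have h1 : X.mulVec (v ⨯₃ w) = v ⨯₃ (X.mulVec w) := by
      rw [equivar hX, hXv]
    rw [h1, ← LinearMap.map_smul,
      show ((v ⬝ᵥ v) * (w ⬝ᵥ w)) • (X.mulVec w)
        = ((X.mulVec w) ⬝ᵥ w * (v ⬝ᵥ v)) • w + ((X.mulVec w) ⬝ᵥ (v ⨯₃ w)) • (v ⨯₃ w) from by
          have := resolution hvw (X.mulVec w)
          rwa [hperp, zero_mul, zero_smul, zero_add] at this]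
    rw [map_add, LinearMap.map_smul, LinearMap.map_smul, triple, hvw]
    simp only [zero_smul, zero_sub, dotProduct_self_eq_zero]
    module

lemma comm_of_fixes {D E : Matrix (Fin 3) (Fin 3) ℝ} {v : Fin 3 → ℝ} (hD : SO3 D) (hE : SO3 E)
    (hv0 : v ≠ 0) (hDv : D.mulVec v = v) (hEv : E.mulVec v = v) : D * E = E * D := by
  obtain ⟨w, hw0, hvw⟩ := exists_perp hv0
  set u : Fin 3 → ℝ := v ⨯₃ w with hudef
  set k : ℝ := (v ⬝ᵥ v) * (w ⬝ᵥ w) with hkdef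
  have hk0 : k ≠ 0 :=
    mul_ne_zero (fun h => hv0 ((dotProduct_self_eq_zero).mp h))
      (fun h => hw0 ((dotProduct_self_eq_zero).mp h))
  obtain ⟨p, q, hp1, hp2⟩ := coords hD hDv hvw
  obtain ⟨p', q', hq1, hq2⟩ := coords hE hEv hvw
  rw [← hkdef, ← hudef] at hp1 hp2 hq1 hq2
  have main : ∀ (P Q : Matrix (Fin 3) (Fin 3) ℝ) (a b a' b' : ℝ),
      k • P.mulVec w = a • w + b • u → k • P.mulVec u = (-(v ⬝ᵥ v) * b) • w + a • u →
      k • Q.mulVec w = a' • w + b' • u → k • Q.mulVec u = (-(v ⬝ᵥ v) * b') • w + a' • u →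
      k • (k • P.mulVec (Q.mulVec w))
          = (a * a' - (v ⬝ᵥ v) * b * b') • w + (a * b' + b * a') • u
        ∧ k • (k • P.mulVec (Q.mulVec u))
          = (-(v ⬝ᵥ v) * (a * b' + b * a')) • w + (a * a' - (v ⬝ᵥ v) * b * b') • u := by
    intro P Q a b a' b' hPw hPu hQw hQu
    constructor
    · calc k • (k • P.mulVec (Q.mulVec w)) = k • P.mulVec (k • Q.mulVec w) := by
            rw [Matrix.mulVec_smul, smul_comm]
        _ = a' • (k • P.mulVec w) + b' • (k • P.mulVec u) := by
            rw [hQw, Matrix.mulVec_add, Matrix.mulVec_smul, Matrix.mulVec_smul, smul_add,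
              smul_comm k a', smul_comm k b']
        _ = a' • (a • w + b • u) + b' • ((-(v ⬝ᵥ v) * b) • w + a • u) := by rw [hPw, hPu]
        _ = (a * a' - (v ⬝ᵥ v) * b * b') • w + (a * b' + b * a') • u := by module
    · calc k • (k • P.mulVec (Q.mulVec u)) = k • P.mulVec (k • Q.mulVec u) := by
            rw [Matrix.mulVec_smul, smul_comm]
        _ = (-(v ⬝ᵥ v) * b') • (k • P.mulVec w) + a' • (k • P.mulVec u) := by
            rw [hQu, Matrix.mulVec_add, Matrix.mulVec_smul, Matrix.mulVec_smul, smul_add,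
              smul_comm k a', smul_comm k (-(v ⬝ᵥ v) * b')]
        _ = (-(v ⬝ᵥ v) * b') • (a • w + b • u) + a' • ((-(v ⬝ᵥ v) * b) • w + a • u) := by
            rw [hPw, hPu]
        _ = (-(v ⬝ᵥ v) * (a * b' + b * a')) • w + (a * a' - (v ⬝ᵥ v) * b * b') • u := by module
  obtain ⟨tDE_w, tDE_u⟩ := main D E p q p' q' hp1 hp2 hq1 hq2
  obtain ⟨tED_w, tED_u⟩ := main E D p' q' p q hq1 hq2 hp1 hp2
  have eDEw : k • (k • (D.mulVec (E.mulVec w))) = k • (k • (E.mulVec (D.mulVec w))) := by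
    rw [tDE_w, tED_w]; module
  have eDEu : k • (k • (D.mulVec (E.mulVec u))) = k • (k • (E.mulVec (D.mulVec u))) := by
    rw [tDE_u, tED_u]; module
  have hDEw : D.mulVec (E.mulVec w) = E.mulVec (D.mulVec w) :=
    smul_right_injective _ hk0 (smul_right_injective _ hk0 eDEw)
  have hDEu : D.mulVec (E.mulVec u) = E.mulVec (D.mulVec u) :=
    smul_right_injective _ hk0 (smul_right_injective _ hk0 eDEu)
  have hDEv : D.mulVec (E.mulVec v) = v := by rw [hEv, hDv]
  have hEDv : E.mulVec (D.mulVec v) = v := by rw [hDv, hEv]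
  have hres' : ∀ x : Fin 3 → ℝ, k • x
      = ((x ⬝ᵥ v) * (w ⬝ᵥ w)) • v + ((x ⬝ᵥ w) * (v ⬝ᵥ v)) • w + (x ⬝ᵥ u) • u := by
    intro x
    rw [hkdef, hudef]
    exact resolution hvw x
  have key : ∀ x, (D * E).mulVec x = (E * D).mulVec x := by
    intro x
    have h1 := congrArg (fun z => D.mulVec (E.mulVec z)) (hres' x)
    have h2 := congrArg (fun z => E.mulVec (D.mulVec z)) (hres' x)
    simp only [Matrix.mulVec_add, Matrix.mulVec_smul] at h1 h2
    rw [hDEv, hDEw, hDEu] at h1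
    rw [hEDv] at h2
    have h3 : k • (D.mulVec (E.mulVec x)) = k • (E.mulVec (D.mulVec x)) := h1.trans h2.symm
    rw [← Matrix.mulVec_mulVec, ← Matrix.mulVec_mulVec]
    exact smul_right_injective _ hk0 h3
  ext i j
  simpa [Matrix.mulVec_single, Matrix.one_apply] using congrFun (key (Pi.single j 1)) i

end SO3Aux

theorem so3_no_Z_times_F2 :
    ¬ ∃ f : Multiplicative ℤ × FreeGroup (Fin 2) →* Matrix (Fin 3) (Fin 3) ℝ,
      (∀ g, f g ∈ Matrix.specialOrthogonalGroup (Fin 3) ℝ) ∧ Function.Injective f := by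
  rintro ⟨f, hmem, hinj⟩
  have hso : ∀ g, SO3Aux.SO3 (f g) := by
    intro g
    have h := hmem g
    rw [Matrix.mem_specialOrthogonalGroup_iff, Matrix.mem_orthogonalGroup_iff'] at h
    exact ⟨by simpa using h.1, h.2⟩
  set a : Multiplicative ℤ × FreeGroup (Fin 2) := (Multiplicative.ofAdd 1, 1) with ha
  have hAne : f a ≠ 1 := by
    intro h
    have : a = 1 := hinj (h.trans (map_one f).symm)
    exact absurd (congrArg Prod.fst this) (by decide)
  obtain ⟨v, hv0, hAv⟩ := SO3Aux.exists_fixed (hso a)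
  have hfix : ∀ g : FreeGroup (Fin 2), (f (1, g) * f (1, g)).mulVec v = v := by
    intro g
    refine SO3Aux.sq_fixes (hso a) (hso (1, g)) hAne ?_ hAv hv0
    rw [← _root_.map_mul, ← _root_.map_mul]
    congr 1
    rw [ha, Prod.mk_mul_mk, Prod.mk_mul_mk, one_mul, mul_one, mul_one, one_mul]
  have hsq : ∀ g : FreeGroup (Fin 2), f (1, g * g) = f (1, g) * f (1, g) := by
    intro g
    rw [← _root_.map_mul, Prod.mk_mul_mk, one_mul]
  have hfix2 : ∀ g : FreeGroup (Fin 2), (f (1, g * g)).mulVec v = v := by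
    intro g; rw [hsq]; exact hfix g
  have hcomm :
      f (1, FreeGroup.of (0 : Fin 2) * FreeGroup.of 0)
        * f (1, FreeGroup.of (1 : Fin 2) * FreeGroup.of 1)
      = f (1, FreeGroup.of (1 : Fin 2) * FreeGroup.of 1)
        * f (1, FreeGroup.of (0 : Fin 2) * FreeGroup.of 0) :=
    SO3Aux.comm_of_fixes (hso _) (hso _) hv0 (hfix2 _) (hfix2 _)
  rw [← _root_.map_mul, ← _root_.map_mul] at hcomm
  have heq := hinj hcomm
  rw [Prod.mk_mul_mk, Prod.mk_mul_mk, one_mul] at heq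
  have := congrArg Prod.snd heq
  simp only at this
  exact absurd this (by decide)
end

section
/- SO_3(R) contains no subgroup isomorphic to F_2 × F_2. -/
open Matrix

namespace SO3F2F2

local notation "M3" => Matrix (Fin 3) (Fin 3) ℝ

def e3 : Fin 3 → ℝ := ![0,0,1]

/-- being a rotation about the z-axis -/
def Rot (M : M3) : Prop :=
  M 0 2 = 0 ∧ M 1 2 = 0 ∧ M 2 0 = 0 ∧ M 2 1 = 0 ∧ M 2 2 = 1 ∧
  M 1 1 = M 0 0 ∧ M 0 1 = - (M 1 0)

lemma rot_comm {M N : M3} (hM : Rot M) (hN : Rot N) : M * N = N * M := by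
  obtain ⟨a1,a2,a3,a4,a5,a6,a7⟩ := hM
  obtain ⟨b1,b2,b3,b4,b5,b6,b7⟩ := hN
  ext i j
  fin_cases i <;> fin_cases j <;>
    simp [Matrix.mul_apply, Fin.sum_univ_three, a1,a2,a3,a4,a5,a6,a7,b1,b2,b3,b4,b5,b6,b7] <;>
    ring

lemma rot_of {M : M3} (hMo : Mᵀ * M = 1) (hMd : M.det = 1)
    (h1 : M *ᵥ e3 = e3) (h2 : Mᵀ *ᵥ e3 = e3) : Rot M := by
  have c0 : M 0 2 = 0 := by simpa [e3, Matrix.mulVec, dotProduct, Fin.sum_univ_three] using congrFun h1 0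
  have c1 : M 1 2 = 0 := by simpa [e3, Matrix.mulVec, dotProduct, Fin.sum_univ_three] using congrFun h1 1
  have c2 : M 2 2 = 1 := by simpa [e3, Matrix.mulVec, dotProduct, Fin.sum_univ_three] using congrFun h1 2
  have r0 : M 2 0 = 0 := by simpa [e3, Matrix.mulVec, dotProduct, Fin.sum_univ_three, Matrix.transpose_apply] using congrFun h2 0
  have r1 : M 2 1 = 0 := by simpa [e3, Matrix.mulVec, dotProduct, Fin.sum_univ_three, Matrix.transpose_apply] using congrFun h2 1
  have o00 : M 0 0 * M 0 0 + M 1 0 * M 1 0 = 1 := by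
    have := congrFun (congrFun hMo 0) 0
    simp [Matrix.mul_apply, Fin.sum_univ_three, Matrix.transpose_apply, r0, Matrix.one_apply] at this
    linarith
  have o01 : M 0 0 * M 0 1 + M 1 0 * M 1 1 = 0 := by
    have := congrFun (congrFun hMo 0) 1
    simp [Matrix.mul_apply, Fin.sum_univ_three, Matrix.transpose_apply, r0, r1, Matrix.one_apply] at this
    linarith
  have hdet : M 0 0 * M 1 1 - M 0 1 * M 1 0 = 1 := by
    rw [Matrix.det_fin_three] at hMd
    rw [c0, c1, c2, r0, r1] at hMd
    linarith
  refine ⟨c0, c1, r0, r1, c2, ?_, ?_⟩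
  · linear_combination M 1 0 * o01 + M 0 0 * hdet - M 1 1 * o00
  · linear_combination M 0 0 * o01 - M 1 0 * hdet - M 0 1 * o00

/-- a nontrivial rotation about the z-axis fixes only vectors on the axis -/
lemma fix_parallel {M : M3} (hR : Rot M) (hMo : Mᵀ * M = 1) (hM1 : M ≠ 1)
    {w : Fin 3 → ℝ} (hw : M *ᵥ w = w) : w 0 = 0 ∧ w 1 = 0 := by
  obtain ⟨a1,a2,a3,a4,a5,a6,a7⟩ := hR
  have oa : M 0 0 * M 0 0 + M 1 0 * M 1 0 = 1 := by
    have := congrFun (congrFun hMo 0) 0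
    simp [Matrix.mul_apply, Fin.sum_univ_three, Matrix.transpose_apply, a3, Matrix.one_apply] at this
    linarith
  have ha : M 0 0 ≠ 1 := by
    intro h
    apply hM1
    have hc : M 1 0 = 0 := by nlinarith
    ext i j
    fin_cases i <;> fin_cases j <;>
      simp [a1,a2,a3,a4,a5,a6,a7,h,hc, Matrix.one_apply]
  have e0 : M 0 0 * w 0 + M 0 1 * w 1 + M 0 2 * w 2 = w 0 := by
    have := congrFun hw 0
    simpa [Matrix.mulVec, dotProduct, Fin.sum_univ_three] using this
  have e1 : M 1 0 * w 0 + M 1 1 * w 1 + M 1 2 * w 2 = w 1 := by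
    have := congrFun hw 1
    simpa [Matrix.mulVec, dotProduct, Fin.sum_univ_three] using this
  rw [a1] at e0; rw [a2] at e1; rw [a6] at e1; rw [a7] at e0
  have hne : (2 : ℝ) - 2 * M 0 0 ≠ 0 := by
    intro h; exact ha (by linarith)
  constructor
  · have key : (2 - 2 * M 0 0) * w 0 = 0 := by
      linear_combination (M 0 0 - 1) * e0 + M 1 0 * e1 - w 0 * oa
    exact (mul_eq_zero.mp key).resolve_left hne
  · have key : (2 - 2 * M 0 0) * w 1 = 0 := by
      linear_combination (- M 1 0) * e0 + (M 0 0 - 1) * e1 - w 1 * oa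
    exact (mul_eq_zero.mp key).resolve_left hne

/-- every special orthogonal 3×3 matrix fixes a nonzero vector -/
lemma exists_fixed {A : M3} (hAo : Aᵀ * A = 1) (hAd : A.det = 1) :
    ∃ v, v ≠ 0 ∧ A *ᵥ v = v := by
  have hAAt : A * Aᵀ = 1 := mul_eq_one_comm.mp hAo
  have hdz : (A - 1).det = 0 := by
    have e : A - 1 = A * (1 - Aᵀ) := by
      rw [Matrix.mul_sub, Matrix.mul_one, hAAt]
    have h1 : (A - 1).det = (1 - Aᵀ).det := by
      rw [e, Matrix.det_mul, hAd, one_mul]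
    have h2 : (1 - Aᵀ) = (1 - A)ᵀ := by
      rw [Matrix.transpose_sub, Matrix.transpose_one]
    have h3 : (1 - A) = -(A - 1) := by rw [neg_sub]
    rw [h2, Matrix.det_transpose, h3, Matrix.det_neg] at h1
    simp at h1
    linarith
  obtain ⟨v, hv, hv0⟩ := (Matrix.exists_mulVec_eq_zero_iff).mpr hdz
  refine ⟨v, hv, ?_⟩
  have := hv0
  rw [Matrix.sub_mulVec, Matrix.one_mulVec, sub_eq_zero] at this
  exact this

/-- matrix with orthonormal columns `p q r` -/
lemma colMatrix (p q r : Fin 3 → ℝ)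
    (hpp : p 0^2 + p 1^2 + p 2^2 = 1) (hqq : q 0^2 + q 1^2 + q 2^2 = 1)
    (hrr : r 0^2 + r 1^2 + r 2^2 = 1) (hpq : p 0*q 0 + p 1*q 1 + p 2*q 2 = 0)
    (hpr : p 0*r 0 + p 1*r 1 + p 2*r 2 = 0) (hqr : q 0*r 0 + q 1*r 1 + q 2*r 2 = 0) :
    ∃ P : M3, Pᵀ * P = 1 ∧ P *ᵥ e3 = r := by
  refine ⟨!![p 0, q 0, r 0; p 1, q 1, r 1; p 2, q 2, r 2], ?_, ?_⟩
  · have hT : (!![p 0, q 0, r 0; p 1, q 1, r 1; p 2, q 2, r 2])ᵀ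
        = !![p 0, p 1, p 2; q 0, q 1, q 2; r 0, r 1, r 2] := by
      ext i j; fin_cases i <;> fin_cases j <;> rfl
    rw [hT, Matrix.mul_fin_three, Matrix.one_fin_three]
    ext i j
    fin_cases i <;> fin_cases j <;> simp [Matrix.vecHead, Matrix.vecTail] <;>
      first
        | linear_combination hpp | linear_combination hqq | linear_combination hrr
        | linear_combination hpq | linear_combination hpr | linear_combination hqr
  · funext i
    fin_cases i <;> simp [e3, Matrix.mulVec, dotProduct, Fin.sum_univ_three]

/-- there is an orthogonal matrix whose third column spans the line of `v` -/
lemma exists_P {v : Fin 3 → ℝ} (hv : v ≠ 0) :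
    ∃ P : M3, Pᵀ * P = 1 ∧ ∃ c : ℝ, c ≠ 0 ∧ P *ᵥ e3 = c • v := by
  by_cases h12 : v 1 = 0 ∧ v 2 = 0
  · -- v is along the x-axis
    have h0 : v 0 ≠ 0 := by
      intro h0
      apply hv
      funext i
      fin_cases i
      · exact h0
      · exact h12.1
      · exact h12.2
    obtain ⟨P, hP, hPe⟩ := colMatrix ![0,1,0] ![0,0,1] ![1,0,0]
      (by norm_num [Matrix.cons_val_two]) (by norm_num [Matrix.cons_val_two]) (by norm_num [Matrix.cons_val_two]) (by norm_num [Matrix.cons_val_two]) (by norm_num [Matrix.cons_val_two]) (by norm_num [Matrix.cons_val_two])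
    refine ⟨P, hP, (v 0)⁻¹, inv_ne_zero h0, ?_⟩
    rw [hPe]
    funext i
    fin_cases i <;> simp [h12.1, h12.2, h0]
  · -- general position: build the basis with cross products
    push_neg at h12
    set s : ℝ := Real.sqrt (v 0^2 + v 1^2 + v 2^2) with hs
    have hs0 : 0 < s := by
      apply Real.sqrt_pos.mpr
      rcases eq_or_ne (v 1) 0 with h | h
      · have := h12 h
        positivity
      · positivity
    have hss : s^2 = v 0^2 + v 1^2 + v 2^2 := Real.sq_sqrt (by positivity)
    set u : Fin 3 → ℝ := s⁻¹ • v with hudef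
    have hu : u 0^2 + u 1^2 + u 2^2 = 1 := by
      simp only [hudef, Pi.smul_apply, smul_eq_mul]
      field_simp
      linarith [hss]
    have hd0 : 0 < u 1^2 + u 2^2 := by
      rcases eq_or_ne (v 1) 0 with h | h
      · have h2 := h12 h
        have : u 2 ≠ 0 := by
          simp only [hudef, Pi.smul_apply, smul_eq_mul]
          exact mul_ne_zero (by positivity) h2
        positivity
      · have : u 1 ≠ 0 := by
          simp only [hudef, Pi.smul_apply, smul_eq_mul]
          exact mul_ne_zero (by positivity) h
        positivity
    set t : ℝ := Real.sqrt (u 1^2 + u 2^2) with ht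
    have ht0 : 0 < t := Real.sqrt_pos.mpr hd0
    have htt : t^2 = u 1^2 + u 2^2 := Real.sq_sqrt (le_of_lt hd0)
    have htne : t ≠ 0 := ne_of_gt ht0
    obtain ⟨P, hP, hPe⟩ := colMatrix ![0, u 2/t, -(u 1)/t]
      ![(u 0^2 - 1)/t, u 0 * u 1/t, u 0 * u 2/t] ![u 0, u 1, u 2]
      (by simp only [Matrix.cons_val_zero, Matrix.cons_val_one, Matrix.cons_val_two, Matrix.head_cons, Matrix.tail_cons]; field_simp; linarith [htt])
      (by simp only [Matrix.cons_val_zero, Matrix.cons_val_one, Matrix.cons_val_two, Matrix.head_cons, Matrix.tail_cons]; field_simp; nlinarith [htt, hu])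
      (by simpa using hu)
      (by simp only [Matrix.cons_val_zero, Matrix.cons_val_one, Matrix.cons_val_two, Matrix.head_cons, Matrix.tail_cons]; field_simp; ring)
      (by simp only [Matrix.cons_val_zero, Matrix.cons_val_one, Matrix.cons_val_two, Matrix.head_cons, Matrix.tail_cons]; field_simp; ring)
      (by simp only [Matrix.cons_val_zero, Matrix.cons_val_one, Matrix.cons_val_two, Matrix.head_cons, Matrix.tail_cons]; field_simp; linear_combination u 0 * hu)
    refine ⟨P, hP, s⁻¹, inv_ne_zero (ne_of_gt hs0), ?_⟩
    rw [hPe]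
    funext i
    fin_cases i <;> simp [hudef]


lemma conj_mul {P X Y : M3} (hPPt : P * Pᵀ = 1) :
    (Pᵀ * X * P) * (Pᵀ * Y * P) = Pᵀ * (X * Y) * P := by
  calc (Pᵀ * X * P) * (Pᵀ * Y * P) = Pᵀ * X * ((P * Pᵀ) * (Y * P)) := by
        simp only [Matrix.mul_assoc]
    _ = Pᵀ * (X * Y) * P := by rw [hPPt, one_mul]; simp only [Matrix.mul_assoc]

lemma conj_cancel {P X Y : M3} (hPo : Pᵀ * P = 1) (hPPt : P * Pᵀ = 1)
    (h : Pᵀ * X * P = Pᵀ * Y * P) : X = Y := by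
  have key : ∀ Z : M3, P * (Pᵀ * Z * P) * Pᵀ = Z := by
    intro Z
    calc P * (Pᵀ * Z * P) * Pᵀ = (P * Pᵀ) * (Z * (P * Pᵀ)) := by simp only [Matrix.mul_assoc]
      _ = Z := by rw [hPPt, one_mul, mul_one]
  calc X = P * (Pᵀ * X * P) * Pᵀ := (key X).symm
    _ = P * (Pᵀ * Y * P) * Pᵀ := by rw [h]
    _ = Y := key Y

lemma mul_orth {X Y : M3} (hX : Xᵀ * X = 1) (hY : Yᵀ * Y = 1) : (X * Y)ᵀ * (X * Y) = 1 := by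
  rw [Matrix.transpose_mul]
  calc Yᵀ * Xᵀ * (X * Y) = Yᵀ * ((Xᵀ * X) * Y) := by simp only [Matrix.mul_assoc]
    _ = 1 := by rw [hX, one_mul, hY]

lemma conj_orth {P X : M3} (hPo : Pᵀ * P = 1) (hPPt : P * Pᵀ = 1) (hX : Xᵀ * X = 1) :
    (Pᵀ * X * P)ᵀ * (Pᵀ * X * P) = 1 := by
  have h1 : (Pᵀ * X * P)ᵀ = Pᵀ * Xᵀ * P := by
    simp only [Matrix.transpose_mul, Matrix.transpose_transpose, Matrix.mul_assoc]
  rw [h1]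
  calc Pᵀ * Xᵀ * P * (Pᵀ * X * P) = Pᵀ * (Xᵀ * X) * P := conj_mul hPPt
    _ = Pᵀ * P := by rw [hX, mul_one]
    _ = 1 := hPo

lemma conj_det {P X : M3} (hPo : Pᵀ * P = 1) : (Pᵀ * X * P).det = X.det := by
  have hP2 : P.det * P.det = 1 := by
    have := congrArg Matrix.det hPo
    simpa [Matrix.det_mul, Matrix.det_transpose, mul_comm] using this
  rw [Matrix.det_mul, Matrix.det_mul, Matrix.det_transpose]
  linear_combination X.det * hP2

/-- The key fact: in SO(3), if `B` and `C` commute with a nontrivial `A`,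
then `B²` and `C²` commute. -/
lemma key {A B C : M3} (hAo : Aᵀ * A = 1) (hAd : A.det = 1)
    (hBo : Bᵀ * B = 1) (hBd : B.det = 1) (hCo : Cᵀ * C = 1) (hCd : C.det = 1)
    (hA1 : A ≠ 1) (hAB : A * B = B * A) (hAC : A * C = C * A) :
    (B * B) * (C * C) = (C * C) * (B * B) := by
  obtain ⟨v, hv, hAv⟩ := exists_fixed hAo hAd
  obtain ⟨P, hPo, c, hc, hPe⟩ := exists_P hv
  have hPPt : P * Pᵀ = 1 := mul_eq_one_comm.mp hPo
  set A' := Pᵀ * A * P with hA'def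
  set B' := Pᵀ * B * P with hB'def
  set C' := Pᵀ * C * P with hC'def
  have hA'o : A'ᵀ * A' = 1 := conj_orth hPo hPPt hAo
  have hB'o : B'ᵀ * B' = 1 := conj_orth hPo hPPt hBo
  have hC'o : C'ᵀ * C' = 1 := conj_orth hPo hPPt hCo
  have hA'd : A'.det = 1 := by rw [hA'def, conj_det hPo, hAd]
  have hA'1 : A' ≠ 1 := by
    intro h
    apply hA1
    apply conj_cancel hPo hPPt (X := A) (Y := 1)
    rw [← hA'def, h, mul_one, hPo]
  have hA'B' : A' * B' = B' * A' := by
    rw [hA'def, hB'def, conj_mul hPPt, conj_mul hPPt, hAB]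
  have hA'C' : A' * C' = C' * A' := by
    rw [hA'def, hC'def, conj_mul hPPt, conj_mul hPPt, hAC]
  -- A' fixes e3 on both sides
  have hAcv : A *ᵥ (c • v) = c • v := by rw [Matrix.mulVec_smul, hAv]
  have hAtv : Aᵀ *ᵥ (c • v) = c • v := by
    rw [Matrix.mulVec_smul]
    have : Aᵀ *ᵥ v = v := by
      conv_lhs => rw [← hAv]
      rw [Matrix.mulVec_mulVec, hAo, Matrix.one_mulVec]
    rw [this]
  have hA'e : A' *ᵥ e3 = e3 := by
    rw [hA'def, ← Matrix.mulVec_mulVec, ← Matrix.mulVec_mulVec, hPe, hAcv, ← hPe,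
      Matrix.mulVec_mulVec, hPo, Matrix.one_mulVec]
  have hA'te : A'ᵀ *ᵥ e3 = e3 := by
    have h1 : A'ᵀ = Pᵀ * Aᵀ * P := by
      simp only [hA'def, Matrix.transpose_mul, Matrix.transpose_transpose, Matrix.mul_assoc]
    rw [h1, ← Matrix.mulVec_mulVec, ← Matrix.mulVec_mulVec, hPe, hAtv, ← hPe,
      Matrix.mulVec_mulVec, hPo, Matrix.one_mulVec]
  have hRotA' : Rot A' := rot_of hA'o hA'd hA'e hA'te
  -- A'ᵀ data
  have hA'to : A'ᵀᵀ * A'ᵀ = 1 := by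
    rw [Matrix.transpose_transpose]
    exact mul_eq_one_comm.mp hA'o
  have hA'td : A'ᵀ.det = 1 := by rw [Matrix.det_transpose, hA'd]
  have hA'tte : A'ᵀᵀ *ᵥ e3 = e3 := by rw [Matrix.transpose_transpose, hA'e]
  have hRotA't : Rot A'ᵀ := rot_of hA'to hA'td hA'te hA'tte
  have hA't1 : A'ᵀ ≠ 1 := by
    intro h
    apply hA'1
    calc A' = A'ᵀᵀ := (Matrix.transpose_transpose A').symm
      _ = (1 : M3)ᵀ := by rw [h]
      _ = 1 := Matrix.transpose_one
  -- entries of a matrix commuting with A'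
  have entries : ∀ X : M3, Xᵀ * X = 1 → A' * X = X * A' →
      X 0 2 = 0 ∧ X 1 2 = 0 ∧ X 2 0 = 0 ∧ X 2 1 = 0 ∧ X 2 2 * X 2 2 = 1 := by
    intro X hXo hcomm
    have h1 : A' *ᵥ (X *ᵥ e3) = X *ᵥ e3 := by
      rw [Matrix.mulVec_mulVec, hcomm, ← Matrix.mulVec_mulVec, hA'e]
    obtain ⟨hw0, hw1⟩ := fix_parallel hRotA' hA'o hA'1 h1
    have h2 : A'ᵀ *ᵥ (Xᵀ *ᵥ e3) = Xᵀ *ᵥ e3 := by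
      rw [Matrix.mulVec_mulVec, ← Matrix.transpose_mul, ← hcomm, Matrix.transpose_mul,
        ← Matrix.mulVec_mulVec, hA'te]
    obtain ⟨hu0, hu1⟩ := fix_parallel hRotA't hA'to hA't1 h2
    have e02 : X 0 2 = 0 := by
      simpa [Matrix.mulVec, dotProduct, Fin.sum_univ_three, e3] using hw0
    have e12 : X 1 2 = 0 := by
      simpa [Matrix.mulVec, dotProduct, Fin.sum_univ_three, e3] using hw1
    have e20 : X 2 0 = 0 := by
      simpa [Matrix.mulVec, dotProduct, Fin.sum_univ_three, e3,
        Matrix.transpose_apply] using hu0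
    have e21 : X 2 1 = 0 := by
      simpa [Matrix.mulVec, dotProduct, Fin.sum_univ_three, e3,
        Matrix.transpose_apply] using hu1
    have e22 : X 2 2 * X 2 2 = 1 := by
      have := congrFun (congrFun hXo 2) 2
      simp [Matrix.mul_apply, Fin.sum_univ_three, Matrix.transpose_apply, e02, e12,
        Matrix.one_apply] at this
      linarith
    exact ⟨e02, e12, e20, e21, e22⟩
  -- squares are rotations about the z-axis
  have sqRot : ∀ X : M3, Xᵀ * X = 1 → X.det = 1 → A' * X = X * A' → Rot (X * X) := by
    intro X hXo hXd hcomm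
    obtain ⟨e02, e12, e20, e21, e22⟩ := entries X hXo hcomm
    apply rot_of (mul_orth hXo hXo) (by rw [Matrix.det_mul, hXd, one_mul])
    · funext i
      fin_cases i <;>
        simp [Matrix.mulVec, dotProduct, Fin.sum_univ_three, Matrix.mul_apply, e3,
          e02, e12, e20, e21, e22]
    · funext i
      fin_cases i <;>
        simp [Matrix.mulVec, dotProduct, Fin.sum_univ_three, Matrix.mul_apply, e3,
          Matrix.transpose_apply, e02, e12, e20, e21, e22]
  have hB'2 : Rot (B' * B') := sqRot B' hB'o (by rw [hB'def, conj_det hPo, hBd]) hA'B'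
  have hC'2 : Rot (C' * C') := sqRot C' hC'o (by rw [hC'def, conj_det hPo, hCd]) hA'C'
  have hfinal := rot_comm hB'2 hC'2
  apply conj_cancel hPo hPPt (X := B * B * (C * C)) (Y := C * C * (B * B))
  calc Pᵀ * (B * B * (C * C)) * P = (B' * B') * (C' * C') := by
        rw [hB'def, hC'def, conj_mul hPPt, conj_mul hPPt, conj_mul hPPt]
    _ = (C' * C') * (B' * B') := hfinal
    _ = Pᵀ * (C * C * (B * B)) * P := by
        rw [hB'def, hC'def, conj_mul hPPt, conj_mul hPPt, conj_mul hPPt]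

end SO3F2F2

theorem so3_no_F2_times_F2 :
    ¬ ∃ f : FreeGroup (Fin 2) × FreeGroup (Fin 2) →* Matrix (Fin 3) (Fin 3) ℝ,
      (∀ g, f g ∈ Matrix.specialOrthogonalGroup (Fin 3) ℝ) ∧ Function.Injective f := by
  rintro ⟨f, hmem, hinj⟩
  have hso : ∀ g, (f g)ᵀ * (f g) = 1 ∧ (f g).det = 1 := by
    intro g
    obtain ⟨⟨h1, h2⟩, h3⟩ := hmem g
    exact ⟨by simpa [Matrix.star_eq_conjTranspose] using h1, by simpa using h3⟩
  set x0 : FreeGroup (Fin 2) := FreeGroup.of 0 with hx0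
  set x1 : FreeGroup (Fin 2) := FreeGroup.of 1 with hx1
  have hA1 : f (x0, 1) ≠ 1 := by
    intro h
    have h2 : f (x0, 1) = f 1 := by rw [h, _root_.map_one]
    have h3 : (x0, (1 : FreeGroup (Fin 2))) = 1 := hinj h2
    rw [Prod.ext_iff] at h3
    exact (by decide : FreeGroup.of (0 : Fin 2) ≠ 1) h3.1
  have hAB : f (x0, 1) * f (1, x0) = f (1, x0) * f (x0, 1) := by
    rw [← _root_.map_mul, ← _root_.map_mul]
    exact congrArg f (by simp [Prod.ext_iff])
  have hAC : f (x0, 1) * f (1, x1) = f (1, x1) * f (x0, 1) := by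
    rw [← _root_.map_mul, ← _root_.map_mul]
    exact congrArg f (by simp [Prod.ext_iff])
  have hkey := SO3F2F2.key (hso (x0, 1)).1 (hso (x0, 1)).2 (hso (1, x0)).1 (hso (1, x0)).2
    (hso (1, x1)).1 (hso (1, x1)).2 hA1 hAB hAC
  have hcol : f (1, x0 * x0 * (x1 * x1)) = f (1, x1 * x1 * (x0 * x0)) := by
    have l : f (1, x0 * x0 * (x1 * x1)) = f (1, x0) * f (1, x0) * (f (1, x1) * f (1, x1)) := by
      rw [← _root_.map_mul, ← _root_.map_mul, ← _root_.map_mul]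
      exact congrArg f (by simp [Prod.ext_iff])
    have r : f (1, x1 * x1 * (x0 * x0)) = f (1, x1) * f (1, x1) * (f (1, x0) * f (1, x0)) := by
      rw [← _root_.map_mul, ← _root_.map_mul, ← _root_.map_mul]
      exact congrArg f (by simp [Prod.ext_iff])
    rw [l, r, hkey]
  have := hinj hcol
  rw [Prod.ext_iff] at this
  exact (by decide : FreeGroup.of (0 : Fin 2) * FreeGroup.of 0 * (FreeGroup.of 1 * FreeGroup.of 1)
    ≠ FreeGroup.of 1 * FreeGroup.of 1 * (FreeGroup.of 0 * FreeGroup.of 0)) this.2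
end

section
/- Any subgroup of SO_3(R) containing no element of order 2 is commutative transitive: if A, B, C are nonidentity elements of such a subgroup with AB = BA and AC = CA, then BC = CB. -/
open Matrix

private lemma so3ct_ch3 (X : Matrix (Fin 3) (Fin 3) ℝ) :
    X*X*X - X.trace • (X*X) + (X.adjugate.trace) • X - X.det • 1 = 0 := by
  rw [adjugate_fin_three, det_fin_three]
  ext i j
  fin_cases i <;> fin_cases j <;>
    simp [Matrix.mul_apply, Fin.sum_univ_succ, Matrix.trace_fin_three] <;> ring

private lemma so3ct_key (X : Matrix (Fin 3) (Fin 3) ℝ) (h1 : X * Xᵀ = 1) (h2 : Xᵀ * X = 1)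
    (h3 : X.det = 1) : Xᵀ = X*X - X.trace • X + X.trace • 1 := by
  have hadj : X.adjugate = Xᵀ := by
    have hinv : X⁻¹ = Xᵀ := inv_eq_right_inv h1
    rw [Matrix.inv_def, h3] at hinv
    simpa using hinv
  have hc : X.adjugate.trace = X.trace := by rw [hadj, trace_transpose]
  have ch := so3ct_ch3 X
  rw [hc, h3, one_smul] at ch
  have ch' : X*X*X + X.trace • X = X.trace • (X*X) + 1 := by
    linear_combination (norm := abel) ch
  have := congrArg (fun M => Xᵀ * M) ch'
  simp only [Matrix.mul_add, Matrix.mul_smul, ← Matrix.mul_assoc, h2,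
    Matrix.one_mul, Matrix.mul_one] at this
  linear_combination (norm := abel) -this

private lemma so3ct_Ssq (X : Matrix (Fin 3) (Fin 3) ℝ) (h1 : X * Xᵀ = 1) (h2 : Xᵀ * X = 1)
    (h3 : X.det = 1) :
    (X - Xᵀ) * (X - Xᵀ) = (X.trace + 1) • (X + Xᵀ - (2:ℝ) • 1) := by
  have k1 := so3ct_key X h1 h2 h3
  have k2 := so3ct_key Xᵀ (by rwa [transpose_transpose]) (by rwa [transpose_transpose])
    (by rwa [det_transpose])
  rw [transpose_transpose, trace_transpose] at k2
  have e1 : X*X = Xᵀ + X.trace • X - X.trace • 1 := by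
    linear_combination (norm := module) -k1
  have e2 : Xᵀ*Xᵀ = X + X.trace • Xᵀ - X.trace • 1 := by
    linear_combination (norm := module) -k2
  rw [sub_mul, mul_sub, mul_sub, e1, e2, h1, h2]
  module

private lemma so3ct_rod (X : Matrix (Fin 3) (Fin 3) ℝ) (h1 : X * Xᵀ = 1) (h2 : Xᵀ * X = 1)
    (h3 : X.det = 1) (ht : X.trace ≠ -1) :
    X = 1 + (1/2 : ℝ) • (X - Xᵀ) + (1/(2*(X.trace+1))) • ((X - Xᵀ)*(X - Xᵀ)) := by
  rw [so3ct_Ssq X h1 h2 h3]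
  have h : X.trace + 1 ≠ 0 := fun h => ht (by linarith)
  match_scalars <;> field_simp <;> ring

private lemma so3ct_skew_sq_zero (S : Matrix (Fin 3) (Fin 3) ℝ) (hS : Sᵀ = -S)
    (h : S * S = 0) : S = 0 := by
  have ha : ∀ i j, S j i = - S i j := by
    intro i j
    have := congrFun (congrFun hS i) j
    simpa using this
  have hd : ∀ i, S i i = 0 := fun i => by have := ha i i; linarith
  have d : ∀ i : Fin 3, (S*S) i i = 0 := fun i => by rw [h]; simp
  have d0 := d 0; have d1 := d 1
  simp [Matrix.mul_apply, Fin.sum_univ_succ] at d0 d1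
  rw [ha 0 1, ha 0 2] at d0
  rw [ha 0 1, ha 1 2] at d1
  rw [hd 0] at d0; rw [hd 1] at d1
  ext i j
  fin_cases i <;> fin_cases j <;> simp [hd] <;>
    nlinarith [d0, d1, ha 0 1, ha 0 2, ha 1 2, sq_nonneg (S 0 1), sq_nonneg (S 0 2),
      sq_nonneg (S 1 2)]

private lemma so3ct_halfturn (X : Matrix (Fin 3) (Fin 3) ℝ) (h1 : X * Xᵀ = 1)
    (h2 : Xᵀ * X = 1) (h3 : X.det = 1) (ht : X.trace = -1) : X * X = 1 := by
  have hs := so3ct_Ssq X h1 h2 h3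
  rw [ht] at hs
  simp at hs
  have hS0 : X - Xᵀ = 0 :=
    so3ct_skew_sq_zero _ (by rw [transpose_sub, transpose_transpose, neg_sub]) hs
  have hX : X = Xᵀ := by rwa [sub_eq_zero] at hS0
  nth_rewrite 2 [hX]
  exact h1

private lemma so3ct_skew_prop (S T : Matrix (Fin 3) (Fin 3) ℝ) (hS : Sᵀ = -S) (hT : Tᵀ = -T)
    (h0 : S ≠ 0) (hc : S*T = T*S) : ∃ c : ℝ, T = c • S := by
  have ha : ∀ i j, S j i = - S i j := fun i j => by
    have := congrFun (congrFun hS i) j; simpa using this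
  have hb : ∀ i j, T j i = - T i j := fun i j => by
    have := congrFun (congrFun hT i) j; simpa using this
  have hd : ∀ i, S i i = 0 := fun i => by have := ha i i; linarith
  have he : ∀ i, T i i = 0 := fun i => by have := hb i i; linarith
  have e01 := congrFun (congrFun hc 0) 1
  have e02 := congrFun (congrFun hc 0) 2
  have e12 := congrFun (congrFun hc 1) 2
  simp [Matrix.mul_apply, Fin.sum_univ_succ, hd, he, ha 0 1, ha 0 2, ha 1 2,
    hb 0 1, hb 0 2, hb 1 2] at e01 e02 e12
  have hnz : S 0 1 ≠ 0 ∨ S 0 2 ≠ 0 ∨ S 1 2 ≠ 0 := by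
    by_contra h
    push_neg at h
    obtain ⟨k1, k2, k3⟩ := h
    apply h0
    ext i j
    fin_cases i <;> fin_cases j <;>
      simp [hd, ha 0 1, ha 0 2, ha 1 2, k1, k2, k3]
  obtain ⟨c, h1, h2, h3⟩ : ∃ c, T 0 1 = c * S 0 1 ∧ T 0 2 = c * S 0 2 ∧ T 1 2 = c * S 1 2 := by
    rcases hnz with hx | hy | hz
    · refine ⟨T 0 1 / S 0 1, by field_simp, ?_, ?_⟩ <;> field_simp
      · linear_combination e12
      · linear_combination e02
    · refine ⟨T 0 2 / S 0 2, ?_, by field_simp, ?_⟩ <;> field_simp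
      · linear_combination -e12
      · linear_combination e01
    · refine ⟨T 1 2 / S 1 2, ?_, ?_, by field_simp⟩ <;> field_simp
      · linear_combination -e02
      · linear_combination -e01
  refine ⟨c, ?_⟩
  ext i j
  fin_cases i <;> fin_cases j <;>
    simp [hd, he, ha 0 1, ha 0 2, ha 1 2, hb 0 1, hb 0 2, hb 1 2, h1, h2, h3]

private lemma so3ct_comm_inv (X Y : Matrix (Fin 3) (Fin 3) ℝ) (h1 : X * Xᵀ = 1)
    (h2 : Xᵀ * X = 1) (h : X*Y = Y*X) : Xᵀ*Y = Y*Xᵀ := by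
  have e : Xᵀ * (Y * X) * Xᵀ = Xᵀ * (X * Y) * Xᵀ := by rw [h]
  calc Xᵀ * Y = Xᵀ * Y * (X * Xᵀ) := by rw [h1, Matrix.mul_one]
    _ = Xᵀ * (Y * X) * Xᵀ := by simp only [Matrix.mul_assoc]
    _ = Xᵀ * (X * Y) * Xᵀ := e
    _ = (Xᵀ * X) * (Y * Xᵀ) := by simp only [Matrix.mul_assoc]
    _ = Y * Xᵀ := by rw [h2, Matrix.one_mul]

theorem so3_subgroup_no_involution_commutative_transitive
    (H : Set (Matrix (Fin 3) (Fin 3) ℝ))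
    (hsub : H ⊆ Matrix.specialOrthogonalGroup (Fin 3) ℝ)
    (hone : (1 : Matrix (Fin 3) (Fin 3) ℝ) ∈ H)
    (hmul : ∀ A ∈ H, ∀ B ∈ H, A * B ∈ H)
    (hinv : ∀ A ∈ H, A.transpose ∈ H)
    (hno2 : ∀ A ∈ H, A * A = 1 → A = 1)
    (A B C : Matrix (Fin 3) (Fin 3) ℝ)
    (hA : A ∈ H) (hB : B ∈ H) (hC : C ∈ H)
    (hA1 : A ≠ 1) (hB1 : B ≠ 1) (hC1 : C ≠ 1)
    (hAB : A * B = B * A) (hAC : A * C = C * A) :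
    B * C = C * B := by
  have ortho : ∀ X ∈ H, X * Xᵀ = 1 ∧ Xᵀ * X = 1 ∧ X.det = 1 := by
    intro X hX
    obtain ⟨⟨o1, o2⟩, o3⟩ := hsub hX
    refine ⟨?_, ?_, o3⟩
    · simpa [Matrix.star_eq_conjTranspose, Matrix.conjTranspose_eq_transpose_of_trivial] using o2
    · simpa [Matrix.star_eq_conjTranspose, Matrix.conjTranspose_eq_transpose_of_trivial] using o1
  obtain ⟨a1, a2, a3⟩ := ortho A hA
  obtain ⟨b1, b2, b3⟩ := ortho B hB
  obtain ⟨c1, c2, c3⟩ := ortho C hC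
  -- skewness of the S-parts
  have skewA : (A - Aᵀ)ᵀ = -(A - Aᵀ) := by rw [transpose_sub, transpose_transpose, neg_sub]
  have skewB : (B - Bᵀ)ᵀ = -(B - Bᵀ) := by rw [transpose_sub, transpose_transpose, neg_sub]
  have skewC : (C - Cᵀ)ᵀ = -(C - Cᵀ) := by rw [transpose_sub, transpose_transpose, neg_sub]
  -- S_A ≠ 0
  have hSA0 : A - Aᵀ ≠ 0 := by
    intro h
    have hAs : A = Aᵀ := by rwa [sub_eq_zero] at h
    apply hA1
    apply hno2 A hA
    nth_rewrite 2 [hAs]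
    exact a1
  -- commutation transfer to skew parts
  have commS : ∀ Y : Matrix (Fin 3) (Fin 3) ℝ, Y * Yᵀ = 1 → Yᵀ * Y = 1 →
      A * Y = Y * A → (A - Aᵀ) * (Y - Yᵀ) = (Y - Yᵀ) * (A - Aᵀ) := by
    intro Y hY1 hY2 hcomm
    have d1 : Commute A Y := hcomm
    have d2 : Commute Aᵀ Y := so3ct_comm_inv A Y a1 a2 hcomm
    have d3 : Commute A Yᵀ := (so3ct_comm_inv Y A hY1 hY2 hcomm.symm).symm
    have d4 : Commute Aᵀ Yᵀ := (so3ct_comm_inv Y Aᵀ hY1 hY2 d2.symm).symm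
    exact ((d1.sub_right d3).sub_left (d2.sub_right d4))
  have hSASB := commS B b1 b2 hAB
  have hSASC := commS C c1 c2 hAC
  -- skew parts of B and C are multiples of that of A
  obtain ⟨sb, hsb⟩ := so3ct_skew_prop (A - Aᵀ) (B - Bᵀ) skewA skewB hSA0 hSASB
  obtain ⟨sc, hsc⟩ := so3ct_skew_prop (A - Aᵀ) (C - Cᵀ) skewA skewC hSA0 hSASC
  have hBC : Commute (B - Bᵀ) (C - Cᵀ) := by
    unfold Commute SemiconjBy
    rw [hsb, hsc]
    rw [smul_mul_assoc, smul_mul_assoc, mul_smul_comm, mul_smul_comm, smul_smul, smul_smul,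
      mul_comm sb sc]
  -- traces are not -1
  have htB : B.trace ≠ -1 := by
    intro h
    exact hB1 (hno2 B hB (so3ct_halfturn B b1 b2 b3 h))
  have htC : C.trace ≠ -1 := by
    intro h
    exact hC1 (hno2 C hC (so3ct_halfturn C c1 c2 c3 h))
  -- Rodrigues decompositions
  have rodB := so3ct_rod B b1 b2 b3 htB
  have rodC := so3ct_rod C c1 c2 c3 htC
  have h1 : Commute (B - Bᵀ)
      (1 + (1/2 : ℝ) • (C - Cᵀ) + (1/(2*(C.trace+1))) • ((C - Cᵀ)*(C - Cᵀ))) :=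
    ((Commute.one_right _).add_right (hBC.smul_right _)).add_right
      ((hBC.mul_right hBC).smul_right _)
  have h2 : Commute B C := by
    rw [rodB, rodC]
    exact ((Commute.one_left _).add_left (h1.smul_left _)).add_left
      ((h1.mul_left h1).smul_left _)
  exact h2
end

section
/- Let G1 × G2 be a subgroup of SO_3(R) with G1 and G2 nontrivial. Then at least one of G1 and G2 is abelian. -/
open Matrix

namespace SO3Aux

def cr (u w : Fin 3 → ℝ) : Fin 3 → ℝ :=
  ![u 1 * w 2 - u 2 * w 1, u 2 * w 0 - u 0 * w 2, u 0 * w 1 - u 1 * w 0]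

def dot (u w : Fin 3 → ℝ) : ℝ := u 0 * w 0 + u 1 * w 1 + u 2 * w 2

lemma cr_mulVec (M : Matrix (Fin 3) (Fin 3) ℝ) (x y : Fin 3 → ℝ) :
    cr (M *ᵥ x) (M *ᵥ y) = (adjugate M)ᵀ *ᵥ cr x y := by
  funext i
  fin_cases i <;>
    simp [cr, Matrix.adjugate_fin_three, Matrix.mulVec, dotProduct,
      Fin.sum_univ_three] <;> ring

lemma adj_eq (B : Matrix (Fin 3) (Fin 3) ℝ) (h : B * Bᵀ = 1) (hd : B.det = 1) :
    adjugate B = Bᵀ := by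
  calc adjugate B = adjugate B * (B * Bᵀ) := by rw [h, mul_one]
  _ = (adjugate B * B) * Bᵀ := by rw [mul_assoc]
  _ = Bᵀ := by rw [adjugate_mul, hd, one_smul, one_mul]

lemma so3_cross (B : Matrix (Fin 3) (Fin 3) ℝ) (h : B * Bᵀ = 1) (hd : B.det = 1)
    (x y : Fin 3 → ℝ) : B *ᵥ cr x y = cr (B *ᵥ x) (B *ᵥ y) := by
  rw [cr_mulVec, adj_eq B h hd, transpose_transpose]

lemma dot_comm (u w : Fin 3 → ℝ) : dot u w = dot w u := by simp [dot]; ring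

lemma dot_so3 (B : Matrix (Fin 3) (Fin 3) ℝ) (h : Bᵀ * B = 1) (x y : Fin 3 → ℝ) :
    dot (B *ᵥ x) (B *ᵥ y) = dot x y := by
  have key : (B *ᵥ x) ⬝ᵥ (B *ᵥ y) = x ⬝ᵥ y := by
    calc (B *ᵥ x) ⬝ᵥ (B *ᵥ y) = ((B *ᵥ x) ᵥ* B) ⬝ᵥ y := dotProduct_mulVec _ _ _
    _ = ((x ᵥ* Bᵀ) ᵥ* B) ⬝ᵥ y := by rw [vecMul_transpose]
    _ = (x ᵥ* (Bᵀ * B)) ⬝ᵥ y := by rw [vecMul_vecMul]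
    _ = x ⬝ᵥ y := by rw [h, vecMul_one]
  simpa [dot, dotProduct, Fin.sum_univ_three] using key

lemma dot_cr_left (v w : Fin 3 → ℝ) : dot v (cr v w) = 0 := by simp [dot, cr]; ring

lemma dot_cr_right (v w : Fin 3 → ℝ) : dot w (cr v w) = 0 := by simp [dot, cr]; ring

lemma cr_cr (a u : Fin 3 → ℝ) (i : Fin 3) :
    cr a (cr a u) i = dot a u * a i - dot a a * u i := by
  fin_cases i <;> simp [dot, cr] <;> ring

lemma dot_cr_self (v w : Fin 3 → ℝ) :
    dot (cr v w) (cr v w) = dot v v * dot w w - dot v w * dot v w := by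
  simp [dot, cr]; ring

lemma dot_pos (v : Fin 3 → ℝ) (hv : v ≠ 0) : 0 < dot v v := by
  have h : v 0 ≠ 0 ∨ v 1 ≠ 0 ∨ v 2 ≠ 0 := by
    by_contra h
    push_neg at h
    exact hv (funext fun i => by fin_cases i <;> simp [h.1, h.2.1, h.2.2])
  rcases h with h | h | h <;>
    · have := mul_self_pos.mpr h
      simp only [dot]
      nlinarith [mul_self_nonneg (v 0), mul_self_nonneg (v 1), mul_self_nonneg (v 2)]

lemma orth3 (v w u : Fin 3 → ℝ) (h1 : dot u v = 0) (h2 : dot u w = 0)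
    (h3 : dot u (cr v w) = 0) (hn : dot (cr v w) (cr v w) ≠ 0) : u = 0 := by
  set n := cr v w with hn_def
  have idA : cr n u = 0 := by
    funext i
    simp only [dot] at h1 h2
    fin_cases i
    · simp [cr, hn_def]; linear_combination w 0 * h1 - v 0 * h2
    · simp [cr, hn_def]; linear_combination w 1 * h1 - v 1 * h2
    · simp [cr, hn_def]; linear_combination w 2 * h1 - v 2 * h2
  funext i
  have h := cr_cr n u i
  rw [idA] at h
  have hz : cr n 0 i = 0 := by fin_cases i <;> simp [cr]
  rw [hz] at h
  rw [dot_comm n u] at h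
  rw [h3] at h
  have : dot n n * u i = 0 := by linarith
  have := mul_eq_zero.mp this
  tauto

lemma cr_left_cancel (u v : Fin 3 → ℝ) (h : ∀ y, cr u y = cr v y) : u = v := by
  have h0 := h ![1, 0, 0]
  have h1 := h ![0, 1, 0]
  funext i
  fin_cases i
  · have := congrFun h1 2; simpa [cr] using this
  · have := congrFun h0 2; simpa [cr] using this
  · have := congrFun h0 1; simpa [cr] using this

lemma exists_cr_ne (v : Fin 3 → ℝ) (hv : v ≠ 0) : ∃ x, cr v x ≠ 0 := by
  by_contra h
  push_neg at h
  apply hv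
  have h0 := h ![1, 0, 0]
  have h1 := h ![0, 1, 0]
  funext i
  fin_cases i
  · have := congrFun h1 2; simpa [cr] using this
  · have := congrFun h0 2; simpa [cr, neg_eq_zero] using this
  · have := congrFun h0 1; simpa [cr] using this

lemma mulVec_comb (M : Matrix (Fin 3) (Fin 3) ℝ) (x y : Fin 3 → ℝ) (a b : ℝ) :
    M *ᵥ (fun i => a * x i + b * y i) = fun i => a * (M *ᵥ x) i + b * (M *ᵥ y) i := by
  funext i
  simp [Matrix.mulVec, dotProduct, Fin.sum_univ_three]
  ring

lemma fix_of_comm (A B : Matrix (Fin 3) (Fin 3) ℝ) (hA : A * Aᵀ = 1)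
    (hB : B * Bᵀ = 1) (hBd : B.det = 1) (hc : B * A = A * B) (v : Fin 3 → ℝ)
    (hv : ∀ x, (A - Aᵀ) *ᵥ x = cr v x) : B *ᵥ v = v := by
  have hA' : Aᵀ * A = 1 := mul_eq_one_comm.mp hA
  have hBA' : B * Aᵀ = Aᵀ * B := by
    calc B * Aᵀ = (Aᵀ * A) * B * Aᵀ := by rw [hA', one_mul]
    _ = Aᵀ * (B * A) * Aᵀ := by rw [mul_assoc Aᵀ A B, hc]
    _ = Aᵀ * B * (A * Aᵀ) := by rw [mul_assoc, mul_assoc, mul_assoc]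
    _ = Aᵀ * B := by rw [hA, mul_one]
  have hskew : B * (A - Aᵀ) = (A - Aᵀ) * B := by
    rw [mul_sub, sub_mul, hc, hBA']
  apply cr_left_cancel
  intro y
  have hy : B *ᵥ (Bᵀ *ᵥ y) = y := by rw [mulVec_mulVec, hB, one_mulVec]
  set x := Bᵀ *ᵥ y with hx
  have e1 : B *ᵥ cr v x = cr (B *ᵥ v) (B *ᵥ x) := so3_cross B hB hBd v x
  have e2 : B *ᵥ cr v x = cr v (B *ᵥ x) := by
    rw [← hv x, mulVec_mulVec, hskew, ← mulVec_mulVec, hv]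
  rw [hy] at e1 e2
  rw [← e1, ← e2]

lemma cr_comb (a x y : Fin 3 → ℝ) (p q : ℝ) :
    cr a (fun i => p * x i + q * y i) = fun i => p * cr a x i + q * cr a y i := by
  funext i; fin_cases i <;> simp [cr] <;> ring

lemma stab_comm (B C : Matrix (Fin 3) (Fin 3) ℝ) (hB : B * Bᵀ = 1) (hBd : B.det = 1)
    (hC : C * Cᵀ = 1) (hCd : C.det = 1) (v : Fin 3 → ℝ) (hv : v ≠ 0)
    (hBv : B *ᵥ v = v) (hCv : C *ᵥ v = v) : B * C = C * B := by
  obtain ⟨x, hx⟩ := exists_cr_ne v hv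
  have hvv : 0 < dot v v := dot_pos v hv
  obtain ⟨w, hw_def⟩ : ∃ w : Fin 3 → ℝ, w = cr v x := ⟨_, rfl⟩
  obtain ⟨n, hn_def⟩ : ∃ n : Fin 3 → ℝ, n = cr v w := ⟨_, rfl⟩
  have hww : 0 < dot w w := dot_pos w (hw_def ▸ hx)
  have hvw : dot v w = 0 := hw_def ▸ dot_cr_left v x
  have hvn : dot v n = 0 := hn_def ▸ dot_cr_left v w
  have hwn : dot w n = 0 := hn_def ▸ dot_cr_right v w
  have hnn : dot n n = dot v v * dot w w := by
    rw [hn_def, dot_cr_self, hvw]; ring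
  have hnn_pos : 0 < dot n n := by rw [hnn]; positivity
  have key : ∀ M : Matrix (Fin 3) (Fin 3) ℝ, M * Mᵀ = 1 → M.det = 1 → M *ᵥ v = v →
      ∃ α β : ℝ, (M *ᵥ w = fun i => α * w i + β * n i) ∧
        (M *ᵥ n = fun i => (-(β * dot v v)) * w i + α * n i) := by
    intro M hM hMd hMv
    have hM' : Mᵀ * M = 1 := mul_eq_one_comm.mp hM
    set α : ℝ := dot (M *ᵥ w) w / dot w w with hα
    set β : ℝ := dot (M *ᵥ w) n / dot n n with hβ
    have d1 : dot (M *ᵥ w) v = 0 := by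
      rw [← hMv, dot_so3 M hM', dot_comm, hvw]
    have d2 : dot (M *ᵥ w) w = α * dot w w := by
      rw [hα]; field_simp
    have d3 : dot (M *ᵥ w) n = β * dot n n := by
      rw [hβ]; field_simp
    have hexp : M *ᵥ w = fun i => α * w i + β * n i := by
      have hu : (fun i => (M *ᵥ w) i - α * w i - β * n i) = 0 := by
        apply orth3 v w
        · have : dot (fun i => (M *ᵥ w) i - α * w i - β * n i) v
              = dot (M *ᵥ w) v - α * dot w v - β * dot n v := by simp [dot]; ring
          rw [this, d1, dot_comm w v, hvw, dot_comm n v, hvn]; ring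
        · have : dot (fun i => (M *ᵥ w) i - α * w i - β * n i) w
              = dot (M *ᵥ w) w - α * dot w w - β * dot w n := by simp [dot]; ring
          rw [this, d2, hwn]; ring
        · have : dot (fun i => (M *ᵥ w) i - α * w i - β * n i) (cr v w)
              = dot (M *ᵥ w) n - α * dot w n - β * dot n n := by
            rw [← hn_def]; simp [dot]; ring
          rw [this, d3, hwn]; ring
        · rw [← hn_def]; exact ne_of_gt hnn_pos
      funext i
      have := congrFun hu i
      simp only [Pi.zero_apply] at this
      linarith
    refine ⟨α, β, hexp, ?_⟩
    have e : M *ᵥ n = cr v (M *ᵥ w) := by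
      rw [hn_def, so3_cross M hM hMd, hMv]
    rw [hexp, cr_comb] at e
    funext i
    have e1 := congrFun e i
    have e2 := cr_cr v w i
    have hni : n i = cr v w i := congrFun hn_def i
    rw [e1]
    have ecvn : cr v n i = cr v (cr v w) i := by rw [hn_def]
    rw [ecvn, e2, hvw, ← hni]
    ring
  obtain ⟨a1, b1, hBw, hBn⟩ := key B hB hBd hBv
  obtain ⟨a2, b2, hCw, hCn⟩ := key C hC hCd hCv
  have hBCv : (B * C) *ᵥ v = v := by rw [← mulVec_mulVec, hCv, hBv]
  have hCBv : (C * B) *ᵥ v = v := by rw [← mulVec_mulVec, hBv, hCv]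
  have hBCw : (B * C) *ᵥ w = fun i =>
      (a1 * a2 - b1 * b2 * dot v v) * w i + (b1 * a2 + a1 * b2) * n i := by
    rw [← mulVec_mulVec, hCw, mulVec_comb]
    funext i
    rw [congrFun hBw i, congrFun hBn i]; ring
  have hCBw : (C * B) *ᵥ w = fun i =>
      (a1 * a2 - b1 * b2 * dot v v) * w i + (b1 * a2 + a1 * b2) * n i := by
    rw [← mulVec_mulVec, hBw, mulVec_comb]
    funext i
    rw [congrFun hCw i, congrFun hCn i]; ring
  have hBCn : (B * C) *ᵥ n = fun i =>
      (-((b1 * a2 + a1 * b2) * dot v v)) * w i + (a1 * a2 - b1 * b2 * dot v v) * n i := by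
    rw [← mulVec_mulVec, hCn, mulVec_comb]
    funext i
    rw [congrFun hBw i, congrFun hBn i]; ring
  have hCBn : (C * B) *ᵥ n = fun i =>
      (-((b1 * a2 + a1 * b2) * dot v v)) * w i + (a1 * a2 - b1 * b2 * dot v v) * n i := by
    rw [← mulVec_mulVec, hBn, mulVec_comb]
    funext i
    rw [congrFun hCw i, congrFun hCn i]; ring
  obtain ⟨P, hP_def⟩ : ∃ P : Matrix (Fin 3) (Fin 3) ℝ, P = Matrix.of ![v, w, n] := ⟨_, rfl⟩
  have hP0 : P 0 = v := by rw [hP_def]; rfl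
  have hP1 : P 1 = w := by rw [hP_def]; rfl
  have hP2 : P 2 = n := by rw [hP_def]; rfl
  have hdetP : P.det = dot n n := by
    rw [det_fin_three, hn_def, hP0, hP1, hP2, hn_def]
    simp [dot, cr]
    ring
  have hPd : Pᵀ.det ≠ 0 := by rw [det_transpose, hdetP]; exact ne_of_gt hnn_pos
  have hmul : ∀ (M : Matrix (Fin 3) (Fin 3) ℝ) (i j : Fin 3),
      (M * Pᵀ) i j = (M *ᵥ P j) i := by
    intro M i j
    simp [Matrix.mul_apply, Matrix.mulVec, dotProduct, Matrix.transpose_apply]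
  have h1 : (B * C) * Pᵀ = (C * B) * Pᵀ := by
    ext i j
    rw [hmul, hmul]
    fin_cases j
    · exact congrFun (show (B * C) *ᵥ P 0 = (C * B) *ᵥ P 0 by rw [hP0, hBCv, hCBv]) i
    · exact congrFun (show (B * C) *ᵥ P 1 = (C * B) *ᵥ P 1 by rw [hP1, hBCw, hCBw]) i
    · exact congrFun (show (B * C) *ᵥ P 2 = (C * B) *ᵥ P 2 by rw [hP2, hBCn, hCBn]) i
  have hPu : IsUnit Pᵀ.det := isUnit_iff_ne_zero.mpr hPd
  calc B * C = (B * C) * (Pᵀ * Pᵀ⁻¹) := by rw [mul_nonsing_inv _ hPu, mul_one]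
  _ = ((B * C) * Pᵀ) * Pᵀ⁻¹ := (mul_assoc _ _ _).symm
  _ = ((C * B) * Pᵀ) * Pᵀ⁻¹ := by rw [h1]
  _ = (C * B) * (Pᵀ * Pᵀ⁻¹) := mul_assoc _ _ _
  _ = C * B := by rw [mul_nonsing_inv _ hPu, mul_one]

end SO3Aux
theorem so3_direct_product_one_factor_abelian (G₁ G₂ : Type*) [Group G₁] [Group G₂]
    (h₁ : ∃ g : G₁, g ≠ 1) (h₂ : ∃ g : G₂, g ≠ 1)
    (f : G₁ × G₂ →* Matrix (Fin 3) (Fin 3) ℝ)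
    (hrange : ∀ g, f g ∈ Matrix.specialOrthogonalGroup (Fin 3) ℝ)
    (hinj : Function.Injective f) :
    (∀ a b : G₁, a * b = b * a) ∨ (∀ a b : G₂, a * b = b * a) := by
  classical
  by_cases hinv : ∀ g : G₂, g * g = 1
  · right
    intro a b
    have ia : a⁻¹ = a := inv_eq_of_mul_eq_one_right (hinv a)
    have ib : b⁻¹ = b := inv_eq_of_mul_eq_one_right (hinv b)
    have iab : (a * b)⁻¹ = a * b := inv_eq_of_mul_eq_one_right (hinv (a * b))
    calc a * b = (a * b)⁻¹ := iab.symm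
    _ = b⁻¹ * a⁻¹ := mul_inv_rev a b
    _ = b * a := by rw [ia, ib]
  · push_neg at hinv
    obtain ⟨b₀, hb₀⟩ := hinv
    left
    intro a b
    have hso : ∀ g : G₁ × G₂, (f g) * (f g)ᵀ = 1 ∧ (f g).det = 1 := by
      intro g
      obtain ⟨ho, hd⟩ := (Matrix.mem_specialOrthogonalGroup_iff).mp (hrange g)
      rw [Matrix.mem_orthogonalGroup_iff] at ho
      refine ⟨?_, hd⟩
      exact ho
    obtain ⟨A, hA_def⟩ : ∃ A, A = f (1, b₀) := ⟨_, rfl⟩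
    have hA : A * Aᵀ = 1 ∧ A.det = 1 := hA_def ▸ hso (1, b₀)
    have hAsq : A * A ≠ 1 := by
      intro h
      apply hb₀
      have he : f ((1, b₀) * (1, b₀)) = f 1 := by
        rw [_root_.map_mul, _root_.map_one, ← hA_def, h]
      have := hinj he
      simpa [Prod.ext_iff] using this
    have hAT : A ≠ Aᵀ := by
      intro h
      apply hAsq
      calc A * A = A * Aᵀ := by rw [← h]
      _ = 1 := hA.1
    obtain ⟨v, hv_def⟩ : ∃ v : Fin 3 → ℝ,
        v = ![A 2 1 - A 1 2, A 0 2 - A 2 0, A 1 0 - A 0 1] := ⟨_, rfl⟩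
    have hv_cr : ∀ x, (A - Aᵀ) *ᵥ x = SO3Aux.cr v x := by
      intro x
      funext i
      fin_cases i <;>
        simp [SO3Aux.cr, hv_def, Matrix.mulVec, Matrix.sub_apply, Matrix.transpose_apply,
          dotProduct, Fin.sum_univ_three] <;> ring
    have hv : v ≠ 0 := by
      intro h
      apply hAT
      rw [hv_def] at h
      have e0 : A 2 1 = A 1 2 := by
        have := congrFun h 0; rw [← sub_eq_zero]; simpa using this
      have e1 : A 0 2 = A 2 0 := by
        have := congrFun h 1; rw [← sub_eq_zero]; simpa using this
      have e2 : A 1 0 = A 0 1 := by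
        have := congrFun h 2; rw [← sub_eq_zero]; simpa using this
      ext i j
      fin_cases i <;> fin_cases j <;> simp [Matrix.transpose_apply] <;> linarith
    have hcommA : ∀ c : G₁, f (c, 1) * A = A * f (c, 1) := by
      intro c
      rw [hA_def, ← _root_.map_mul, ← _root_.map_mul]
      congr 1
      rw [Prod.mk_mul_mk, Prod.mk_mul_mk, one_mul, mul_one, one_mul, mul_one]
    have hfix : ∀ c : G₁, f (c, 1) *ᵥ v = v := fun c =>
      SO3Aux.fix_of_comm A (f (c, 1)) hA.1 (hso _).1 (hso _).2 (hcommA c) v hv_cr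
    have hcomm : f (a, 1) * f (b, 1) = f (b, 1) * f (a, 1) :=
      SO3Aux.stab_comm (f (a, 1)) (f (b, 1)) (hso _).1 (hso _).2 (hso _).1 (hso _).2
        v hv (hfix a) (hfix b)
    have he : f (a * b, (1 : G₂)) = f (b * a, (1 : G₂)) := by
      have h1 : ((a, (1 : G₂)) * (b, (1 : G₂))) = (a * b, (1 : G₂)) := by
        rw [Prod.mk_mul_mk, mul_one]
      have h2 : ((b, (1 : G₂)) * (a, (1 : G₂))) = (b * a, (1 : G₂)) := by
        rw [Prod.mk_mul_mk, mul_one]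
      rw [← h1, ← h2, _root_.map_mul, _root_.map_mul, hcomm]
    have := hinj he
    simpa [Prod.ext_iff] using this
end

section
/- Let G1 × G2 be a subgroup of SO_3(R) with G1 abelian and nontrivial and G2 non-abelian. Then every nontrivial element of G1 has order 2. -/
open Matrix Polynomial

noncomputable section SO3Aux

/-- A real 3×3 matrix `B` with `Bᵀ * B = 1` and trace `3` is the identity. -/
private lemma so3aux_eq_one_of_trace (B : Matrix (Fin 3) (Fin 3) ℝ)
    (hO : Bᵀ * B = 1) (htr : B.trace = 3) : B = 1 := by
  have h0 : (B - 1)ᵀ * (B - 1) = Bᵀ * B - Bᵀ - B + 1 := by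
    rw [Matrix.transpose_sub, Matrix.transpose_one]
    noncomm_ring
  have htr0 : ((B - 1)ᵀ * (B - 1)).trace = 0 := by
    rw [h0, hO]
    simp [Matrix.trace_add, Matrix.trace_sub, Matrix.trace_one, Matrix.trace_transpose, htr]
  have hs : ∑ k : Fin 3, ∑ i : Fin 3, (B - 1) i k * (B - 1) i k = 0 := by
    simpa [Matrix.trace, Matrix.diag, Matrix.mul_apply, Matrix.transpose_apply, -Matrix.sub_apply,
      -Matrix.transpose_sub] using htr0
  have hz : ∀ k i : Fin 3, (B - 1) i k = 0 := by
    intro k i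
    have h1 := (Finset.sum_eq_zero_iff_of_nonneg
      (fun k _ => Finset.sum_nonneg fun i _ => mul_self_nonneg ((B - 1) i k))).mp hs k
      (Finset.mem_univ k)
    have h2 := (Finset.sum_eq_zero_iff_of_nonneg
      (fun i _ => mul_self_nonneg ((B - 1) i k))).mp h1 i (Finset.mem_univ i)
    exact mul_self_eq_zero.mp h2
  have hB1 : B - 1 = 0 := by ext i j; exact hz j i
  exact sub_eq_zero.mp hB1

/-- Existence of eigenvectors for roots of the characteristic polynomial. -/
private lemma so3aux_exists_eigenvector {A : Matrix (Fin 3) (Fin 3) ℂ} {μ : ℂ}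
    (h : (Matrix.charpoly A).IsRoot μ) : ∃ v, v ≠ 0 ∧ A *ᵥ v = μ • v := by
  have hdet : (Matrix.scalar (Fin 3) μ - A).det = 0 := by
    have h1 := _root_.eval_det (charmatrix A) μ
    rw [matPolyEquiv_charmatrix] at h1
    rw [← Matrix.charpoly] at h1
    simp only [Polynomial.eval_sub, Polynomial.eval_X, Polynomial.eval_C] at h1
    rw [← h1]
    exact h
  obtain ⟨v, hv, hmv⟩ := Matrix.exists_mulVec_eq_zero_iff.mpr hdet
  refine ⟨v, hv, ?_⟩
  rw [Matrix.sub_mulVec] at hmv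
  have hscal : Matrix.scalar (Fin 3) μ *ᵥ v = μ • v := by
    rw [Matrix.scalar_apply]
    ext i
    simp [Matrix.mulVec_diagonal]
  rw [hscal] at hmv
  exact (sub_eq_zero.mp hmv).symm

/-- Roots of the characteristic polynomial of `A` with `Aᴴ * A = 1` have modulus one. -/
private lemma so3aux_star_mul_self {A : Matrix (Fin 3) (Fin 3) ℂ} (hA : Aᴴ * A = 1)
    {μ : ℂ} {v : Fin 3 → ℂ} (hv : v ≠ 0) (he : A *ᵥ v = μ • v) : star μ * μ = 1 := by
  have h1 : star (A *ᵥ v) ⬝ᵥ (A *ᵥ v) = star v ⬝ᵥ v := by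
    rw [Matrix.star_mulVec, Matrix.dotProduct_mulVec, Matrix.vecMul_vecMul, hA,
      Matrix.vecMul_one]
  have h2 : star (A *ᵥ v) ⬝ᵥ (A *ᵥ v) = (star μ * μ) * (star v ⬝ᵥ v) := by
    rw [he, star_smul, smul_dotProduct, dotProduct_smul, smul_eq_mul,
      smul_eq_mul]
    ring
  have h3 : star v ⬝ᵥ v ≠ 0 := by
    intro h
    apply hv
    have hcast : ((∑ i, Complex.normSq (v i) : ℝ) : ℂ) = 0 := by
      rw [← h]
      simp only [dotProduct, Pi.star_apply, Complex.ofReal_sum]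
      refine Finset.sum_congr rfl fun i _ => ?_
      rw [Complex.star_def, mul_comm, Complex.mul_conj]
    have hsum : ∑ i, Complex.normSq (v i) = 0 := by exact_mod_cast hcast
    ext i
    have h4 := (Finset.sum_eq_zero_iff_of_nonneg
      (fun i _ => Complex.normSq_nonneg (v i))).mp hsum i (Finset.mem_univ i)
    simpa using Complex.normSq_eq_zero.mp h4
  have h4 : (star μ * μ) * (star v ⬝ᵥ v) = 1 * (star v ⬝ᵥ v) := by
    rw [← h2, h1, one_mul]
  exact mul_right_cancel₀ h3 h4

/-- If `A` has three distinct eigenvalues, then any two matrices commuting with `A`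
commute with each other. -/
private lemma so3aux_commute_of_distinct (A B C : Matrix (Fin 3) (Fin 3) ℂ)
    (μ : Fin 3 → ℂ) (hμ : Function.Injective μ) (v : Fin 3 → Fin 3 → ℂ)
    (hv0 : ∀ i, v i ≠ 0) (hve : ∀ i, A *ᵥ v i = μ i • v i)
    (hAB : A * B = B * A) (hAC : A * C = C * A) : B * C = C * B := by
  have heig : ∀ i, Module.End.HasEigenvector (Matrix.mulVecLin A) (μ i) (v i) := fun i =>
    ⟨Module.End.mem_eigenspace_iff.mpr (by simpa [Matrix.mulVecLin_apply] using hve i), hv0 i⟩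
  have li : LinearIndependent ℂ v :=
    Module.End.eigenvectors_linearIndependent' (Matrix.mulVecLin A) μ hμ v heig
  have hcard : Fintype.card (Fin 3) = Module.finrank ℂ (Fin 3 → ℂ) := by simp
  let bv : Module.Basis (Fin 3) ℂ (Fin 3 → ℂ) := basisOfLinearIndependentOfCardEqFinrank li hcard
  have hbv : ∀ i, bv i = v i := fun i => by
    simp [bv, coe_basisOfLinearIndependentOfCardEqFinrank]
  have key : ∀ M : Matrix (Fin 3) (Fin 3) ℂ, A * M = M * A →
      ∀ i, ∃ c : ℂ, M *ᵥ v i = c • v i := by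
    intro M hM i
    set w := M *ᵥ v i with hw
    have hAw : A *ᵥ w = μ i • w := by
      rw [hw, Matrix.mulVec_mulVec, hM, ← Matrix.mulVec_mulVec, hve i, Matrix.mulVec_smul]
    set d : Fin 3 → ℂ := fun j => bv.repr w j with hd
    have hsum : w = ∑ j, d j • v j := by
      conv_lhs => rw [← bv.sum_repr w]
      exact Finset.sum_congr rfl fun j _ => by rw [hbv]
    have e0 : ∀ j, (μ j - μ i) * d j = 0 := by
      have h1 : A *ᵥ w = ∑ j, (μ j * d j) • v j := by
        rw [hsum]
        simp only [← Matrix.mulVecLin_apply, map_sum, _root_.map_smul]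
        refine Finset.sum_congr rfl fun j _ => ?_
        rw [Matrix.mulVecLin_apply, hve j, smul_smul, mul_comm]
      have h2 : μ i • w = ∑ j, (μ i * d j) • v j := by
        rw [hsum, Finset.smul_sum]
        exact Finset.sum_congr rfl fun j _ => by rw [smul_smul]
      have h3 := hAw
      rw [h1, h2] at h3
      have h4 : ∑ j, ((μ j - μ i) * d j) • v j = 0 := by
        rw [← sub_eq_zero] at h3
        rw [← Finset.sum_sub_distrib] at h3
        simpa [sub_smul, sub_mul] using h3
      exact fun j => Fintype.linearIndependent_iff.mp li _ h4 j
    have hdj : ∀ j, j ≠ i → d j = 0 := by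
      intro j hj
      rcases mul_eq_zero.mp (e0 j) with h | h
      · exact absurd (hμ (sub_eq_zero.mp h)) hj
      · exact h
    refine ⟨d i, ?_⟩
    rw [hsum, Finset.sum_eq_single i (fun j _ hj => by rw [hdj j hj, zero_smul]) (by simp)]
  obtain ⟨β, hβ⟩ : ∃ β : Fin 3 → ℂ, ∀ i, B *ᵥ v i = β i • v i :=
    ⟨fun i => (key B hAB i).choose, fun i => (key B hAB i).choose_spec⟩
  obtain ⟨γ, hγ⟩ : ∃ γ : Fin 3 → ℂ, ∀ i, C *ᵥ v i = γ i • v i :=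
    ⟨fun i => (key C hAC i).choose, fun i => (key C hAC i).choose_spec⟩
  refine Matrix.toLin'.injective (bv.ext fun i => ?_)
  rw [Matrix.toLin'_apply, Matrix.toLin'_apply, hbv i, ← Matrix.mulVec_mulVec,
    ← Matrix.mulVec_mulVec, hβ i, hγ i, Matrix.mulVec_smul, Matrix.mulVec_smul, hβ i, hγ i,
    smul_smul, smul_smul, mul_comm]

/-- The degenerate case: a repeated root of the characteristic polynomial forces `A * A = 1`. -/
private lemma so3aux_degenerate (A : Matrix (Fin 3) (Fin 3) ℝ) (hO : Aᵀ * A = 1)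
    (hdet : A.det = 1) (r s : ℂ)
    (hroots : (Matrix.charpoly (A.map Complex.ofRealHom)).roots = {r, r, s}) :
    A * A = 1 := by
  set M : Matrix (Fin 3) (Fin 3) ℂ := A.map Complex.ofRealHom with hM
  have hMT : Mᴴ = Aᵀ.map Complex.ofRealHom := by
    ext i j
    simp [hM, Matrix.conjTranspose_apply, Matrix.map_apply, Complex.conj_ofReal]
  have hMH : Mᴴ * M = 1 := by
    rw [hMT, hM, ← Matrix.map_mul, hO, Matrix.map_one _ (map_zero _) (map_one _)]
  have hpne : Matrix.charpoly M ≠ 0 := (Matrix.charpoly_monic M).ne_zero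
  have hrroot : (Matrix.charpoly M).IsRoot r := by
    have : r ∈ (Matrix.charpoly M).roots := by rw [hroots]; simp
    exact (Polynomial.mem_roots'.mp this).2
  obtain ⟨v, hv0, hvr⟩ := so3aux_exists_eigenvector hrroot
  have hmod : star r * r = 1 := so3aux_star_mul_self hMH hv0 hvr
  -- the roots are closed under conjugation
  have hconj : (Matrix.charpoly M).roots.map (starRingEnd ℂ) = (Matrix.charpoly M).roots := by
    have hmapeq : (Matrix.charpoly M).map (starRingEnd ℂ) = Matrix.charpoly M := by
      rw [hM, Matrix.charpoly_map, Polynomial.map_map]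
      congr 1
      exact RingHom.ext fun x => Complex.conj_ofReal x
    have h1 := (IsAlgClosed.splits (Matrix.charpoly M)).roots_map
      (starRingEnd ℂ)
    rw [hmapeq] at h1
    exact h1.symm
  have hprod : r * r * s = 1 := by
    have h1 := Matrix.det_eq_prod_roots_charpoly (A := M)
    rw [hroots] at h1
    have h2 : M.det = 1 := by
      have h3 := (RingHom.map_det Complex.ofRealHom A).symm
      rw [RingHom.mapMatrix_apply] at h3
      rw [hM, h3, hdet]
      simp
    rw [h2] at h1
    simpa [mul_assoc] using h1.symm
  -- r is ±1
  have hr1 : r = 1 ∨ r = -1 := by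
    have hmem : star r ∈ ({r, r, s} : Multiset ℂ) := by
      rw [← hroots, ← hconj]
      apply Multiset.mem_map_of_mem
      rw [hroots]; simp
    simp only [Multiset.insert_eq_cons, Multiset.mem_cons, Multiset.mem_singleton] at hmem
    rcases hmem with h | h | h
    · have : r * r = 1 := by rw [← hmod, h]
      exact mul_self_eq_one_iff.mp this
    · have : r * r = 1 := by rw [← hmod, h]
      exact mul_self_eq_one_iff.mp this
    · left
      have hr : r * r * s = r := by
        rw [← h]
        linear_combination r * hmod
      rw [hprod] at hr
      exact hr.symm
  have hrr : r * r = 1 := by rcases hr1 with rfl | rfl <;> ring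
  have hs1 : s = 1 := by
    have h := hprod
    rw [hrr, one_mul] at h
    exact h
  have htrM : M.trace = (A.trace : ℂ) := by
    simp [hM, Matrix.trace, Matrix.diag, Matrix.map_apply]
  have htrsum : M.trace = r + r + s := by
    have h1 := Matrix.trace_eq_sum_roots_charpoly (A := M)
    rw [hroots] at h1
    simpa [add_assoc] using h1
  rcases hr1 with rfl | rfl
  · -- r = 1 : trace 3, A = 1
    have htrA : A.trace = 3 := by
      have h : (A.trace : ℂ) = 3 := by
        rw [← htrM, htrsum, hs1]; norm_num
      exact_mod_cast h
    have hA1 : A = 1 := so3aux_eq_one_of_trace A hO htrA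
    rw [hA1, one_mul]
  · -- r = -1 : trace -1
    have htrA : A.trace = -1 := by
      have h : (A.trace : ℂ) = -1 := by
        rw [← htrM, htrsum, hs1]; norm_num
      exact_mod_cast h
    -- charpoly A = X^3 + X^2 - X - 1
    have hcpM : Matrix.charpoly M = X ^ 3 + X ^ 2 - X - 1 := by
      rw [(IsAlgClosed.splits (Matrix.charpoly M)).eq_prod_roots_of_monic
        (Matrix.charpoly_monic M), hroots, hs1]
      simp only [Multiset.insert_eq_cons, Multiset.map_cons, Multiset.map_singleton,
        Multiset.prod_cons, Multiset.prod_singleton, map_neg, Polynomial.C_1]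
      ring
    have hcpA : Matrix.charpoly A = X ^ 3 + X ^ 2 - X - 1 := by
      apply Polynomial.map_injective Complex.ofRealHom Complex.ofReal_injective
      rw [← Matrix.charpoly_map, ← hM, hcpM]
      simp only [Polynomial.map_add, Polynomial.map_sub, Polynomial.map_pow,
        Polynomial.map_X, Polynomial.map_one]
    have hch : A ^ 3 + A ^ 2 - A - 1 = 0 := by
      have h1 := Matrix.aeval_self_charpoly A
      rw [hcpA] at h1
      simpa using h1
    have hT : Aᵀ = A ^ 2 + A - 1 := by
      have h4 : Aᵀ * (A ^ 3 + A ^ 2 - A - 1) = 0 := by rw [hch, mul_zero]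
      have e3 : Aᵀ * A ^ 3 = A ^ 2 := by
        show Aᵀ * A ^ (2 + 1) = A ^ 2
        rw [pow_succ', ← mul_assoc, hO, one_mul]
      have e2 : Aᵀ * A ^ 2 = A := by
        rw [pow_two, ← mul_assoc, hO, one_mul]
      rw [mul_sub, mul_sub, mul_add, e3, e2, hO, mul_one] at h4
      exact (sub_eq_zero.mp h4).symm
    have htrA2 : (A ^ 2).trace = 3 := by
      have h5 : Aᵀ.trace = A.trace := Matrix.trace_transpose A
      rw [hT, Matrix.trace_sub, Matrix.trace_add, Matrix.trace_one, htrA] at h5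
      norm_num at h5
      linarith
    have hOA2 : (A * A)ᵀ * (A * A) = 1 := by
      rw [Matrix.transpose_mul]
      calc Aᵀ * Aᵀ * (A * A) = Aᵀ * (Aᵀ * A) * A := by noncomm_ring
        _ = 1 := by rw [hO, mul_one, hO]
    have htrAA : (A * A).trace = 3 := by rw [← pow_two]; exact htrA2
    exact so3aux_eq_one_of_trace (A * A) hOA2 htrAA

end SO3Aux

theorem so3_abelian_factor_exponent_two (G₁ G₂ : Type*) [Group G₁] [Group G₂]
    (h₁ab : ∀ a b : G₁, a * b = b * a) (h₁ : ∃ g : G₁, g ≠ 1)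
    (h₂nonab : ¬ ∀ a b : G₂, a * b = b * a)
    (f : G₁ × G₂ →* Matrix (Fin 3) (Fin 3) ℝ)
    (hrange : ∀ g, f g ∈ Matrix.specialOrthogonalGroup (Fin 3) ℝ)
    (hinj : Function.Injective f) :
    ∀ a : G₁, a ≠ 1 → a ^ 2 = 1 := by
  push_neg at h₂nonab
  obtain ⟨b, c, hbc⟩ := h₂nonab
  intro a ha
  classical
  set A : Matrix (Fin 3) (Fin 3) ℝ := f (a, 1) with hAdef
  have hmem := (Matrix.mem_specialOrthogonalGroup_iff.mp (hrange (a, 1)))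
  have hO : Aᵀ * A = 1 := by
    have h1 := (Matrix.mem_orthogonalGroup_iff' (Fin 3) ℝ).mp hmem.1
    simpa [Matrix.star_eq_conjTranspose] using h1
  have hdet : A.det = 1 := hmem.2
  set M : Matrix (Fin 3) (Fin 3) ℂ := A.map Complex.ofRealHom with hM
  have hdeg : (Matrix.charpoly M).natDegree = 3 := by
    rw [Matrix.charpoly_natDegree_eq_dim]
    simp
  have hcard : Multiset.card (Matrix.charpoly M).roots = 3 := by
    have h1 := Polynomial.splits_iff_card_roots.mp (IsAlgClosed.splits (Matrix.charpoly M))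
    rw [hdeg] at h1
    exact h1
  obtain ⟨x, y, z, hroots⟩ := Multiset.card_eq_three.mp hcard
  -- key: either A * A = 1 or the roots are pairwise distinct
  have hAA : A * A = 1 ∨ (x ≠ y ∧ x ≠ z ∧ y ≠ z) := by
    by_cases hd : x ≠ y ∧ x ≠ z ∧ y ≠ z
    · exact Or.inr hd
    · left
      push_neg at hd
      by_cases h1 : x = y
      · subst h1
        exact so3aux_degenerate A hO hdet x z hroots
      · by_cases h2 : x = z
        · subst h2
          refine so3aux_degenerate A hO hdet x y ?_
          rw [hroots, Multiset.insert_eq_cons, Multiset.insert_eq_cons]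
          exact congrArg (x ::ₘ ·) (Multiset.pair_comm y x)
        · have h3 := hd h1 h2
          subst h3
          refine so3aux_degenerate A hO hdet y x ?_
          rw [hroots]
          simp only [Multiset.insert_eq_cons]
          rw [Multiset.cons_swap x y]
          exact congrArg (y ::ₘ ·) (Multiset.pair_comm x y)
  rcases hAA with hAA | ⟨hxy, hxz, hyz⟩
  · -- A * A = 1 gives a ^ 2 = 1
    have heq : f ((a, 1) * (a, 1)) = f 1 := by
      rw [_root_.map_mul, _root_.map_one, ← hAdef, hAA]
    have h2 := hinj heq
    have h3 : a * a = 1 := by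
      have h4 := congrArg Prod.fst h2
      simpa using h4
    rw [pow_two]
    exact h3
  · -- distinct roots: contradiction with non-abelian G₂
    exfalso
    have hpne : Matrix.charpoly M ≠ 0 := (Matrix.charpoly_monic M).ne_zero
    have hroot : ∀ w ∈ ({x, y, z} : Multiset ℂ), (Matrix.charpoly M).IsRoot w := by
      intro w hw
      have hmem2 : w ∈ (Matrix.charpoly M).roots := by rw [hroots]; exact hw
      exact (Polynomial.mem_roots'.mp hmem2).2
    obtain ⟨vx, hvx0, hvx⟩ := so3aux_exists_eigenvector (hroot x (by simp))
    obtain ⟨vy, hvy0, hvy⟩ := so3aux_exists_eigenvector (hroot y (by simp))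
    obtain ⟨vz, hvz0, hvz⟩ := so3aux_exists_eigenvector (hroot z (by simp))
    set μ : Fin 3 → ℂ := ![x, y, z] with hμdef
    have hμ : Function.Injective μ := by
      intro i j hij
      fin_cases i <;> fin_cases j <;> simp_all [hμdef] <;> tauto
    set v : Fin 3 → Fin 3 → ℂ := ![vx, vy, vz] with hvdef
    have hv0 : ∀ i, v i ≠ 0 := by
      intro i; fin_cases i <;> simpa [hvdef]
    have hve : ∀ i, M *ᵥ v i = μ i • v i := by
      intro i; fin_cases i <;> simp [hvdef, hμdef, hvx, hvy, hvz]
    set B : Matrix (Fin 3) (Fin 3) ℝ := f (1, b) with hBdef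
    set C : Matrix (Fin 3) (Fin 3) ℝ := f (1, c) with hCdef
    have hcomm : ∀ g : G₂, A * f (1, g) = f (1, g) * A := by
      intro g
      rw [hAdef, ← _root_.map_mul, ← _root_.map_mul]
      congr 1
      simp [Prod.ext_iff, h₁ab]
    have hABc : M * B.map Complex.ofRealHom = B.map Complex.ofRealHom * M := by
      rw [hM, ← Matrix.map_mul, ← Matrix.map_mul, hcomm b]
    have hACc : M * C.map Complex.ofRealHom = C.map Complex.ofRealHom * M := by
      rw [hM, ← Matrix.map_mul, ← Matrix.map_mul, hcomm c]
    have hBC : B.map Complex.ofRealHom * C.map Complex.ofRealHom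
        = C.map Complex.ofRealHom * B.map Complex.ofRealHom :=
      so3aux_commute_of_distinct M (B.map Complex.ofRealHom) (C.map Complex.ofRealHom)
        μ hμ v hv0 hve hABc hACc
    have hBCr : B * C = C * B := by
      have hmapinj : Function.Injective
          (fun N : Matrix (Fin 3) (Fin 3) ℝ => N.map Complex.ofRealHom) :=
        Matrix.map_injective Complex.ofReal_injective
      apply hmapinj
      simpa [Matrix.map_mul] using hBC
    have heq : f ((1, b) * (1, c)) = f ((1, c) * (1, b)) := by
      rw [_root_.map_mul, _root_.map_mul, ← hBdef, ← hCdef, hBCr]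
    have h2 := hinj heq
    have h3 : b * c = c * b := by
      have h4 := congrArg Prod.snd h2
      simpa using h4
    exact hbc h3
end

section
/- Let G1 × G2 be a subgroup of SO_3(R) with G1 and G2 nontrivial and G1 × G2 non-abelian. Then exactly one of the factors is the group of order 2, and the other factor is non-abelian and contains an element of order 2. -/
open Matrix

namespace SO3Proof

abbrev M3 := Matrix (Fin 3) (Fin 3) ℝ
abbrev V3 := Fin 3 → ℝ

theorem so3_unfold (A : M3) (h : A ∈ Matrix.specialOrthogonalGroup (Fin 3) ℝ) :
    Aᵀ * A = 1 ∧ A * Aᵀ = 1 ∧ A.det = 1 := by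
  obtain ⟨hu, hd⟩ := h
  have h1 : A * star A = 1 := (Matrix.mem_orthogonalGroup_iff (Fin 3) ℝ).mp hu
  have h2 : star A * A = 1 := (Matrix.mem_orthogonalGroup_iff' (Fin 3) ℝ).mp hu
  have hs : star A = Aᵀ := by ext i j; simp [Matrix.star_apply]
  rw [hs] at h1 h2
  exact ⟨h2, h1, hd⟩

theorem dot_self_pos (v : V3) (h : v ≠ 0) : 0 < v ⬝ᵥ v := by
  have h1 := dotProduct_self_eq_zero (v := v)
  have h2 : 0 ≤ v ⬝ᵥ v := by
    simp only [dotProduct, Fin.sum_univ_three, ← sq]; positivity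
  rcases h2.lt_or_eq with h3 | h3
  · exact h3
  · exact absurd (h1.mp h3.symm) h

theorem dot_preserved (A : M3) (hA : Aᵀ * A = 1) (x y : V3) :
    (A.mulVec x) ⬝ᵥ (A.mulVec y) = x ⬝ᵥ y := by
  rw [Matrix.dotProduct_mulVec, ← Matrix.mulVec_transpose, Matrix.mulVec_mulVec, hA,
    Matrix.one_mulVec]

theorem triple_vec (a b c : V3) : a ⨯₃ (b ⨯₃ c) = (a ⬝ᵥ c) • b - (a ⬝ᵥ b) • c := by
  simp only [cross_apply, dotProduct, Fin.sum_univ_three]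
  funext i; fin_cases i <;> simp <;> ring

theorem lagrange (v w : V3) : (v ⨯₃ w) ⬝ᵥ (v ⨯₃ w) = (v ⬝ᵥ v) * (w ⬝ᵥ w) - (v ⬝ᵥ w) ^ 2 := by
  simp only [cross_apply, dotProduct, Fin.sum_univ_three]
  simp; ring

theorem det_rows (v w u : V3) : (Matrix.of ![v, w, u]).det = u ⬝ᵥ (v ⨯₃ w) := by
  rw [Matrix.det_fin_three]
  simp [cross_apply, dotProduct, Fin.sum_univ_three]
  ring

theorem cross_equivariant (A : M3) (hA' : A * Aᵀ = 1) (hdet : A.det = 1) (x y : V3) :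
    A.mulVec (x ⨯₃ y) = (A.mulVec x) ⨯₃ (A.mulVec y) := by
  have key : Aᵀ.mulVec ((A.mulVec x) ⨯₃ (A.mulVec y)) = A.det • (x ⨯₃ y) := by
    funext i
    fin_cases i <;>
      simp [Matrix.mulVec, cross_apply, dotProduct, Fin.sum_univ_three,
        Matrix.det_fin_three, Matrix.transpose_apply] <;> ring
  rw [hdet, one_smul] at key
  calc A.mulVec (x ⨯₃ y) = A.mulVec (Aᵀ.mulVec ((A.mulVec x) ⨯₃ (A.mulVec y))) := by rw [key]
    _ = (A * Aᵀ).mulVec ((A.mulVec x) ⨯₃ (A.mulVec y)) := by rw [Matrix.mulVec_mulVec]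
    _ = (A.mulVec x) ⨯₃ (A.mulVec y) := by rw [hA', Matrix.one_mulVec]

theorem span3 (v w u : V3) (hd : (Matrix.of ![v, w, u]).det ≠ 0) (x : V3) :
    ∃ a b c : ℝ, x = a • v + b • w + c • u := by
  set N : M3 := Matrix.of fun i j => ![v, w, u] j i with hN
  have hNT : N = (Matrix.of ![v, w, u])ᵀ := rfl
  have hdN : N.det ≠ 0 := by rw [hNT, Matrix.det_transpose]; exact hd
  have hinv : N * N⁻¹ = 1 := Matrix.mul_nonsing_inv N (isUnit_iff_ne_zero.mpr hdN)
  set y := N⁻¹.mulVec x with hy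
  refine ⟨y 0, y 1, y 2, ?_⟩
  have h1 : N.mulVec y = x := by rw [hy, Matrix.mulVec_mulVec, hinv, Matrix.one_mulVec]
  rw [← h1]
  funext i
  simp [hN, Matrix.mulVec, dotProduct, Fin.sum_univ_three]
  ring

theorem eq_of_basis (A B : M3) (v w u : V3) (hd : (Matrix.of ![v, w, u]).det ≠ 0)
    (hv : A.mulVec v = B.mulVec v) (hw : A.mulVec w = B.mulVec w)
    (hu : A.mulVec u = B.mulVec u) : A = B := by
  have hall : ∀ x, A.mulVec x = B.mulVec x := by
    intro x
    obtain ⟨a, b, c, rfl⟩ := span3 v w u hd x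
    simp only [Matrix.mulVec_add, Matrix.mulVec_smul, hv, hw, hu]
  ext i j
  have := congrFun (hall (Pi.single j 1)) i
  simpa [Matrix.mulVec_single] using this

theorem exists_fixed (A : M3) (hA : Aᵀ * A = 1) (hdet : A.det = 1) :
    ∃ v : V3, v ≠ 0 ∧ A.mulVec v = v := by
  have hdT : Aᵀ.det = 1 := by rwa [Matrix.det_transpose]
  have key : (A - 1).det = 0 := by
    have h1 : Aᵀ * (A - 1) = (1 - A)ᵀ := by
      rw [Matrix.mul_sub, hA, Matrix.mul_one, Matrix.transpose_sub, Matrix.transpose_one]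
    have h2 : (A - 1).det = (1 - A).det := by
      calc (A - 1).det = Aᵀ.det * (A - 1).det := by rw [hdT, one_mul]
        _ = (Aᵀ * (A - 1)).det := (Matrix.det_mul _ _).symm
        _ = (1 - A).det := by rw [h1, Matrix.det_transpose]
    rw [show (1 : M3) - A = -(A - 1) from (neg_sub A 1).symm, Matrix.det_neg] at h2
    simp at h2
    linarith
  obtain ⟨v, hv0, hv⟩ := (Matrix.exists_mulVec_eq_zero_iff).mpr key
  refine ⟨v, hv0, ?_⟩
  rwa [Matrix.sub_mulVec, Matrix.one_mulVec, sub_eq_zero] at hv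

/-- If the cross product vanishes and `v ≠ 0`, then `w` is a multiple of `v`. -/
theorem cross_zero_dep (v w : V3) (hv : v ≠ 0) (h : v ⨯₃ w = 0) : ∃ t : ℝ, w = t • v := by
  have h1 := triple_vec v v w
  rw [h, LinearMap.map_zero] at h1
  have hvv : v ⬝ᵥ v ≠ 0 := ne_of_gt (dot_self_pos v hv)
  refine ⟨(v ⬝ᵥ v)⁻¹ * (v ⬝ᵥ w), ?_⟩
  have h2 : (v ⬝ᵥ w) • v = (v ⬝ᵥ v) • w := by
    have := h1.symm
    rwa [sub_eq_zero] at this  -- 0 = a - b → ...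
  funext i
  have h3 := congrFun h2 i
  simp only [Pi.smul_apply, smul_eq_mul] at h3 ⊢
  rw [mul_assoc, h3, ← mul_assoc, inv_mul_cancel₀ hvv, one_mul]

/-- Uniqueness of the axis: the fixed vectors of a nontrivial special orthogonal matrix
form a line. -/
theorem axis_unique (A : M3) (hA : Aᵀ * A = 1) (hA' : A * Aᵀ = 1) (hdet : A.det = 1)
    (hA1 : A ≠ 1) (v : V3) (hv0 : v ≠ 0) (hv : A.mulVec v = v)
    (w : V3) (hw : A.mulVec w = w) : ∃ t : ℝ, w = t • v := by
  by_cases hc : v ⨯₃ w = 0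
  · exact cross_zero_dep v w hv0 hc
  · exfalso
    set u := v ⨯₃ w with hu
    have hAu : A.mulVec u = u := by rw [hu, cross_equivariant A hA' hdet, hv, hw]
    have hd : (Matrix.of ![v, w, u]).det ≠ 0 := by
      rw [det_rows]
      exact ne_of_gt (dot_self_pos u hc)
    exact hA1 (eq_of_basis A 1 v w u hd (by rw [hv, Matrix.one_mulVec])
      (by rw [hw, Matrix.one_mulVec]) (by rw [hAu, Matrix.one_mulVec]))

/-- If A commutes with B, B ≠ 1 with axis v, then A preserves the axis with sign ±1. -/
theorem sign_lemma (A B : M3) (hA : Aᵀ * A = 1)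
    (hB : Bᵀ * B = 1) (hB' : B * Bᵀ = 1) (hBdet : B.det = 1) (hB1 : B ≠ 1)
    (hcomm : A * B = B * A) (v : V3) (hv0 : v ≠ 0) (hv : B.mulVec v = v) :
    A.mulVec v = v ∨ A.mulVec v = -v := by
  have h1 : B.mulVec (A.mulVec v) = A.mulVec v := by
    rw [Matrix.mulVec_mulVec, ← hcomm, ← Matrix.mulVec_mulVec, hv]
  obtain ⟨t, ht⟩ := axis_unique B hB hB' hBdet hB1 v hv0 hv (A.mulVec v) h1
  have h2 : (A.mulVec v) ⬝ᵥ (A.mulVec v) = v ⬝ᵥ v := dot_preserved A hA v v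
  rw [ht, smul_dotProduct, dotProduct_smul, smul_eq_mul, smul_eq_mul,
    ← mul_assoc] at h2
  have hvv : v ⬝ᵥ v ≠ 0 := ne_of_gt (dot_self_pos v hv0)
  have h4 : t = 1 ∨ t = -1 := by
    apply mul_self_eq_one_iff.mp
    apply mul_right_cancel₀ hvv
    rw [h2, one_mul]
  rcases h4 with h | h
  · left; rw [ht, h, one_smul]
  · right; rw [ht, h, neg_one_smul]

theorem normalize_vec (x : V3) (hx : x ≠ 0) : ∃ r : ℝ, r ≠ 0 ∧ (r • x) ⬝ᵥ (r • x) = 1 := by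
  have hd : 0 < x ⬝ᵥ x := dot_self_pos x hx
  refine ⟨(Real.sqrt (x ⬝ᵥ x))⁻¹, inv_ne_zero (ne_of_gt (Real.sqrt_pos.mpr hd)), ?_⟩
  have hs : Real.sqrt (x ⬝ᵥ x) * Real.sqrt (x ⬝ᵥ x) = x ⬝ᵥ x := Real.mul_self_sqrt (le_of_lt hd)
  rw [smul_dotProduct, dotProduct_smul, smul_eq_mul, smul_eq_mul, ← mul_assoc,
    ← mul_inv, hs]
  exact inv_mul_cancel₀ (ne_of_gt hd)

theorem exists_perp (v : V3) (hv : v ⬝ᵥ v = 1) : ∃ w : V3, v ⬝ᵥ w = 0 ∧ w ⬝ᵥ w = 1 := by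
  by_cases hc : v ⨯₃ ![1, 0, 0] = 0
  · have h1 : v 1 = 0 := by
      have := congrFun hc 2
      simp [cross_apply] at this
      exact this
    have h2 : v 2 = 0 := by
      have := congrFun hc 1
      simp [cross_apply] at this
      exact this
    refine ⟨![0, 1, 0], ?_, ?_⟩ <;>
      simp [dotProduct, Fin.sum_univ_three, h1]
  · obtain ⟨r, hr, hru⟩ := normalize_vec _ hc
    refine ⟨r • (v ⨯₃ ![1, 0, 0]), ?_, hru⟩
    rw [dotProduct_smul, dot_self_cross, smul_zero]

theorem unit_axis (A : M3) (hA : Aᵀ * A = 1) (hA' : A * Aᵀ = 1) (hdet : A.det = 1)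
    (hA1 : A ≠ 1) :
    ∃ v : V3, v ⬝ᵥ v = 1 ∧ A.mulVec v = v ∧ ∀ z, A.mulVec z = z → ∃ t : ℝ, z = t • v := by
  obtain ⟨v₀, hv0, hv⟩ := exists_fixed A hA hdet
  obtain ⟨r, hr, hru⟩ := normalize_vec v₀ hv0
  refine ⟨r • v₀, hru, by rw [Matrix.mulVec_smul, hv], ?_⟩
  intro z hz
  obtain ⟨t, ht⟩ := axis_unique A hA hA' hdet hA1 v₀ hv0 hv z hz
  exact ⟨t * r⁻¹, by rw [ht, smul_smul, mul_assoc, inv_mul_cancel₀ hr, mul_one]⟩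

theorem expand_orth (v w u : V3) (hvv : v ⬝ᵥ v = 1) (hww : w ⬝ᵥ w = 1) (huu : u ⬝ᵥ u = 1)
    (hvw : v ⬝ᵥ w = 0) (hvu : v ⬝ᵥ u = 0) (hwu : w ⬝ᵥ u = 0)
    (hd : (Matrix.of ![v, w, u]).det ≠ 0) (x : V3) (hx : v ⬝ᵥ x = 0) :
    x = (w ⬝ᵥ x) • w + (u ⬝ᵥ x) • u := by
  obtain ⟨a, b, c, rfl⟩ := span3 v w u hd x
  have hwv : w ⬝ᵥ v = 0 := by rwa [dotProduct_comm]
  have huv : u ⬝ᵥ v = 0 := by rwa [dotProduct_comm]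
  have huw : u ⬝ᵥ w = 0 := by rwa [dotProduct_comm]
  have ha : a = 0 := by
    simpa [dotProduct_add, dotProduct_smul, hvv, hvw, hvu] using hx
  have hb : w ⬝ᵥ (a • v + b • w + c • u) = b := by
    simp [dotProduct_add, dotProduct_smul, hwv, hww, hwu]
  have hc : u ⬝ᵥ (a • v + b • w + c • u) = c := by
    simp [dotProduct_add, dotProduct_smul, huv, huw, huu]
  rw [hb, hc, ha, zero_smul, zero_add]

theorem commute_same_axis (A B : M3)
    (hA : Aᵀ * A = 1) (hA' : A * Aᵀ = 1) (hAdet : A.det = 1)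
    (hB : Bᵀ * B = 1) (hB' : B * Bᵀ = 1) (hBdet : B.det = 1)
    (v : V3) (hv : v ⬝ᵥ v = 1) (hAv : A.mulVec v = v) (hBv : B.mulVec v = v) :
    A * B = B * A := by
  obtain ⟨w, hvw, hww⟩ := exists_perp v hv
  set u := v ⨯₃ w with hu
  have huu : u ⬝ᵥ u = 1 := by rw [hu, lagrange, hv, hww, hvw]; ring
  have hvu : v ⬝ᵥ u = 0 := dot_self_cross v w
  have hwu : w ⬝ᵥ u = 0 := dot_cross_self v w
  have hvxu : v ⨯₃ u = -w := by
    rw [hu, triple_vec, hvw, hv, zero_smul, one_smul, zero_sub]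
  have hd : (Matrix.of ![v, w, u]).det ≠ 0 := by
    rw [det_rows, ← hu]
    rw [show u ⬝ᵥ u = 1 from huu]
    norm_num
  have key : ∀ X : M3, Xᵀ * X = 1 → X * Xᵀ = 1 → X.det = 1 → X.mulVec v = v →
      ∃ a b : ℝ, X.mulVec w = a • w + b • u ∧ X.mulVec u = a • u - b • w := by
    intro X hX hX' hXdet hXv
    have hperp : v ⬝ᵥ (X.mulVec w) = 0 := by
      calc v ⬝ᵥ (X.mulVec w) = (X.mulVec v) ⬝ᵥ (X.mulVec w) := by rw [hXv]
        _ = v ⬝ᵥ w := dot_preserved X hX v w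
        _ = 0 := hvw
    have hXw : X.mulVec w = (w ⬝ᵥ (X.mulVec w)) • w + (u ⬝ᵥ (X.mulVec w)) • u :=
      expand_orth v w u hv hww huu hvw hvu hwu hd _ hperp
    set a := w ⬝ᵥ (X.mulVec w) with ha
    set b := u ⬝ᵥ (X.mulVec w) with hb
    refine ⟨a, b, hXw, ?_⟩
    have h1 : X.mulVec u = (X.mulVec v) ⨯₃ (X.mulVec w) := by
      rw [hu, cross_equivariant X hX' hXdet]
    rw [h1, hXv, hXw, map_add, LinearMap.map_smul, LinearMap.map_smul, ← hu, hvxu]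
    module
  obtain ⟨a, b, hAw, hAu⟩ := key A hA hA' hAdet hAv
  obtain ⟨p, q, hBw, hBu⟩ := key B hB hB' hBdet hBv
  apply eq_of_basis _ _ v w u hd
  · simp only [← Matrix.mulVec_mulVec, hAv, hBv]
  · simp only [← Matrix.mulVec_mulVec, hAw, hBw, Matrix.mulVec_add, Matrix.mulVec_sub,
      Matrix.mulVec_smul, hAu, hAv, hBu, hBv]
    module
  · simp only [← Matrix.mulVec_mulVec, hAu, hBu, Matrix.mulVec_add, Matrix.mulVec_sub,
      Matrix.mulVec_smul, hAw, hAv, hBw, hBv]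
    module

theorem pi_rot_sq (A : M3) (hA' : A * Aᵀ = 1) (hdet : A.det = 1) (v w : V3)
    (hd : (Matrix.of ![v, w, v ⨯₃ w]).det ≠ 0)
    (hv : A.mulVec v = v) (hw : A.mulVec w = -w) : A * A = 1 := by
  have hAu : A.mulVec (v ⨯₃ w) = -(v ⨯₃ w) := by
    rw [cross_equivariant A hA' hdet, hv, hw, map_neg]
  apply eq_of_basis _ _ v w (v ⨯₃ w) hd
  · rw [← Matrix.mulVec_mulVec, hv, hv, Matrix.one_mulVec]
  · rw [← Matrix.mulVec_mulVec, hw, Matrix.mulVec_neg, hw, neg_neg, Matrix.one_mulVec]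
  · rw [← Matrix.mulVec_mulVec, hAu, Matrix.mulVec_neg, hAu, neg_neg, Matrix.one_mulVec]

theorem commute_of_scalars (X Y : M3) (v w u : V3) (hd : (Matrix.of ![v, w, u]).det ≠ 0)
    (hXv : ∃ s : ℝ, X.mulVec v = s • v) (hXw : ∃ s : ℝ, X.mulVec w = s • w)
    (hXu : ∃ s : ℝ, X.mulVec u = s • u)
    (hYv : ∃ s : ℝ, Y.mulVec v = s • v) (hYw : ∃ s : ℝ, Y.mulVec w = s • w)
    (hYu : ∃ s : ℝ, Y.mulVec u = s • u) : X * Y = Y * X := by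
  obtain ⟨s₁, h1⟩ := hXv; obtain ⟨s₂, h2⟩ := hXw; obtain ⟨s₃, h3⟩ := hXu
  obtain ⟨t₁, k1⟩ := hYv; obtain ⟨t₂, k2⟩ := hYw; obtain ⟨t₃, k3⟩ := hYu
  apply eq_of_basis _ _ v w u hd <;>
    simp only [← Matrix.mulVec_mulVec, h1, h2, h3, k1, k2, k3, Matrix.mulVec_smul] <;>
    rw [smul_comm]

theorem cross_smul_smul (s t : ℝ) (x y : V3) : (s • x) ⨯₃ (t • y) = (s * t) • (x ⨯₃ y) := by
  funext i; fin_cases i <;> simp [cross_apply] <;> ring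

theorem unit_ne_zero (v : V3) (hv : v ⬝ᵥ v = 1) : v ≠ 0 := by
  intro h; rw [h] at hv; simp at hv

theorem main_half {G₁ G₂ : Type*} [Group G₁] [Group G₂]
    (f : G₁ × G₂ →* M3)
    (hrange : ∀ g, f g ∈ Matrix.specialOrthogonalGroup (Fin 3) ℝ)
    (hinj : Function.Injective f)
    (h₁ : ∃ g : G₁, g ≠ 1)
    (hG₂ : ¬ ∀ a b : G₂, a * b = b * a) :
    Nat.card G₁ = 2 ∧ ∃ b : G₂, b ≠ 1 ∧ b ^ 2 = 1 := by
  push_neg at hG₂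
  obtain ⟨y₁, y₂, hy⟩ := hG₂
  set A : G₁ → M3 := fun x => f (x, 1) with hAdef
  set B : G₂ → M3 := fun y => f (1, y) with hBdef
  -- SO(3) properties
  have hP : ∀ g : G₁ × G₂, (f g)ᵀ * f g = 1 ∧ f g * (f g)ᵀ = 1 ∧ (f g).det = 1 :=
    fun g => so3_unfold _ (hrange g)
  have hPA : ∀ x : G₁, (A x)ᵀ * A x = 1 ∧ A x * (A x)ᵀ = 1 ∧ (A x).det = 1 := fun x => hP _
  have hPB : ∀ y : G₂, (B y)ᵀ * B y = 1 ∧ B y * (B y)ᵀ = 1 ∧ (B y).det = 1 := fun y => hP _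
  have hABcomm : ∀ (x : G₁) (y : G₂), A x * B y = B y * A x := by
    intro x y
    rw [hAdef, hBdef]
    simp only [← _root_.map_mul]
    congr 1
    simp [Prod.ext_iff]
  have hA1 : ∀ x : G₁, A x = 1 → x = 1 := by
    intro x h
    have : f (x, 1) = f 1 := by rw [_root_.map_one]; exact h
    have := hinj this
    simpa [Prod.ext_iff] using this
  have hB1 : ∀ y : G₂, B y = 1 → y = 1 := by
    intro y h
    have : f (1, y) = f 1 := by rw [_root_.map_one]; exact h
    have := hinj this
    simpa [Prod.ext_iff] using this
  have hnc : B y₁ * B y₂ ≠ B y₂ * B y₁ := by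
    intro h
    apply hy
    rw [hBdef] at h
    simp only [← _root_.map_mul] at h
    have := hinj h
    simpa [Prod.ext_iff] using this
  have hBy₁ : B y₁ ≠ 1 := by intro h; exact hnc (by rw [h, one_mul, mul_one])
  have hBy₂ : B y₂ ≠ 1 := by intro h; exact hnc (by rw [h, one_mul, mul_one])
  -- axes of B y₁ and B y₂
  obtain ⟨a₁, ha₁u, ha₁f, ha₁ax⟩ :=
    unit_axis (B y₁) (hPB y₁).1 (hPB y₁).2.1 (hPB y₁).2.2 hBy₁
  obtain ⟨a₂, ha₂u, ha₂f, ha₂ax⟩ :=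
    unit_axis (B y₂) (hPB y₂).1 (hPB y₂).2.1 (hPB y₂).2.2 hBy₂
  have ha₁0 : a₁ ≠ 0 := unit_ne_zero a₁ ha₁u
  have ha₂0 : a₂ ≠ 0 := unit_ne_zero a₂ ha₂u
  -- a₁ ⨯₃ a₂ ≠ 0
  have hcr0 : a₁ ⨯₃ a₂ ≠ 0 := by
    intro h
    obtain ⟨t, ht⟩ := cross_zero_dep a₁ a₂ ha₁0 h
    have ht0 : t ≠ 0 := by
      intro h0; rw [h0, zero_smul] at ht; exact ha₂0 ht
    have hBa₁ : (B y₂).mulVec a₁ = a₁ := by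
      have h1 : a₁ = t⁻¹ • a₂ := by rw [ht, smul_smul, inv_mul_cancel₀ ht0, one_smul]
      rw [h1, Matrix.mulVec_smul, ha₂f]
    exact hnc (commute_same_axis (B y₁) (B y₂) (hPB y₁).1 (hPB y₁).2.1 (hPB y₁).2.2
      (hPB y₂).1 (hPB y₂).2.1 (hPB y₂).2.2 a₁ ha₁u ha₁f hBa₁)
  have hd12 : (Matrix.of ![a₁, a₂, a₁ ⨯₃ a₂]).det ≠ 0 := by
    rw [det_rows]
    exact ne_of_gt (dot_self_pos _ hcr0)
  -- every A x acts by scalars on a₁, a₂, a₁ ⨯₃ a₂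
  have hsig : ∀ x : G₁, (∃ s : ℝ, (A x).mulVec a₁ = s • a₁) ∧
      (∃ s : ℝ, (A x).mulVec a₂ = s • a₂) ∧
      (∃ s : ℝ, (A x).mulVec (a₁ ⨯₃ a₂) = s • (a₁ ⨯₃ a₂)) := by
    intro x
    have s1 := sign_lemma (A x) (B y₁) (hPA x).1 (hPB y₁).1 (hPB y₁).2.1 (hPB y₁).2.2 hBy₁
      (hABcomm x y₁) a₁ ha₁0 ha₁f
    have s2 := sign_lemma (A x) (B y₂) (hPA x).1 (hPB y₂).1 (hPB y₂).2.1 (hPB y₂).2.2 hBy₂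
      (hABcomm x y₂) a₂ ha₂0 ha₂f
    have e1 : ∃ s : ℝ, (A x).mulVec a₁ = s • a₁ := by
      rcases s1 with h | h
      · exact ⟨1, by rw [h, one_smul]⟩
      · exact ⟨-1, by rw [h, neg_one_smul]⟩
    have e2 : ∃ s : ℝ, (A x).mulVec a₂ = s • a₂ := by
      rcases s2 with h | h
      · exact ⟨1, by rw [h, one_smul]⟩
      · exact ⟨-1, by rw [h, neg_one_smul]⟩
    refine ⟨e1, e2, ?_⟩
    obtain ⟨s, hs⟩ := e1
    obtain ⟨t, ht⟩ := e2
    refine ⟨s * t, ?_⟩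
    rw [cross_equivariant (A x) (hPA x).2.1 (hPA x).2.2, hs, ht, cross_smul_smul]
  have himcomm : ∀ x x' : G₁, A x * A x' = A x' * A x := by
    intro x x'
    exact commute_of_scalars (A x) (A x') a₁ a₂ (a₁ ⨯₃ a₂) hd12
      (hsig x).1 (hsig x).2.1 (hsig x).2.2 (hsig x').1 (hsig x').2.1 (hsig x').2.2
  -- pick a nontrivial element of G₁
  obtain ⟨x₀, hx₀⟩ := h₁
  have hc1 : A x₀ ≠ 1 := fun h => hx₀ (hA1 x₀ h)
  obtain ⟨w, hwu, hcw, hwax⟩ :=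
    unit_axis (A x₀) (hPA x₀).1 (hPA x₀).2.1 (hPA x₀).2.2 hc1
  have hw0 : w ≠ 0 := unit_ne_zero w hwu
  -- some B y sends w to -w
  have hyexists : ∃ y : G₂, B y ≠ 1 ∧ (B y).mulVec w = -w := by
    have s1 := sign_lemma (B y₁) (A x₀) (hPB y₁).1 (hPA x₀).1 (hPA x₀).2.1 (hPA x₀).2.2 hc1
      (hABcomm x₀ y₁).symm w hw0 hcw
    have s2 := sign_lemma (B y₂) (A x₀) (hPB y₂).1 (hPA x₀).1 (hPA x₀).2.1 (hPA x₀).2.2 hc1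
      (hABcomm x₀ y₂).symm w hw0 hcw
    rcases s1 with h1 | h1
    · rcases s2 with h2 | h2
      · exact absurd (commute_same_axis (B y₁) (B y₂) (hPB y₁).1 (hPB y₁).2.1 (hPB y₁).2.2
          (hPB y₂).1 (hPB y₂).2.1 (hPB y₂).2.2 w hwu h1 h2) hnc
      · exact ⟨y₂, hBy₂, h2⟩
    · exact ⟨y₁, hBy₁, h1⟩
  obtain ⟨y, hBy, hyw⟩ := hyexists
  have hyne1 : y ≠ 1 := by
    intro h
    apply hBy
    rw [h, hBdef]
    exact _root_.map_one f
  -- axis of B y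
  obtain ⟨v, hvu, hhv, hvax⟩ := unit_axis (B y) (hPB y).1 (hPB y).2.1 (hPB y).2.2 hBy
  have hv0 : v ≠ 0 := unit_ne_zero v hvu
  -- c sends v to -v
  have hcv : (A x₀).mulVec v = -v := by
    rcases sign_lemma (A x₀) (B y) (hPA x₀).1 (hPB y).1 (hPB y).2.1 (hPB y).2.2 hBy
      (hABcomm x₀ y) v hv0 hhv with h | h
    · exfalso
      obtain ⟨t, ht⟩ := hwax v h
      have h1 : (B y).mulVec v = -v := by
        rw [ht, Matrix.mulVec_smul, hyw, smul_neg]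
      rw [hhv] at h1
      have : v = 0 := by
        funext i
        have h2 := congrFun h1 i
        simp only [Pi.neg_apply] at h2
        simp only [Pi.zero_apply]
        linarith
      exact hv0 this
    · exact h
  -- v is orthogonal to w
  have horth : v ⬝ᵥ w = 0 := by
    have h1 : ((B y).mulVec v) ⬝ᵥ ((B y).mulVec w) = v ⬝ᵥ w := dot_preserved (B y) (hPB y).1 v w
    rw [hhv, hyw, dotProduct_neg] at h1
    linarith
  have huu : (v ⨯₃ w) ⬝ᵥ (v ⨯₃ w) = 1 := by
    rw [lagrange, hvu, hwu, horth]; ring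
  have hd : (Matrix.of ![v, w, v ⨯₃ w]).det ≠ 0 := by
    rw [det_rows, huu]; norm_num
  -- (B y)² = 1, hence y² = 1
  have hsq : B y * B y = 1 := pi_rot_sq (B y) (hPB y).2.1 (hPB y).2.2 v w hd hhv hyw
  have hy2 : y ^ 2 = 1 := by
    have he : f (1, y * y) = f 1 := by
      rw [_root_.map_one, show ((1:G₁), y*y) = ((1:G₁),y) * ((1:G₁),y) by simp [Prod.ext_iff],
        _root_.map_mul]
      exact hsq
    have := hinj he
    rw [Prod.ext_iff] at this
    rw [pow_two]
    exact this.2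
  have hcu : (A x₀).mulVec (v ⨯₃ w) = -(v ⨯₃ w) := by
    rw [cross_equivariant _ (hPA x₀).2.1 (hPA x₀).2.2, hcv, hcw, LinearMap.map_neg₂]
  have hhu : (B y).mulVec (v ⨯₃ w) = -(v ⨯₃ w) := by
    rw [cross_equivariant _ (hPB y).2.1 (hPB y).2.2, hhv, hyw, LinearMap.map_neg]
  -- every nontrivial x' equals x₀
  have hkey : ∀ x' : G₁, x' ≠ 1 → x' = x₀ := by
    intro x' hx'
    have hc'1 : A x' ≠ 1 := fun h => hx' (hA1 x' h)
    have s1 := sign_lemma (A x') (A x₀) (hPA x').1 (hPA x₀).1 (hPA x₀).2.1 (hPA x₀).2.2 hc1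
      (himcomm x' x₀) w hw0 hcw
    have s2 := sign_lemma (A x') (B y) (hPA x').1 (hPB y).1 (hPB y).2.1 (hPB y).2.2 hBy
      (hABcomm x' y) v hv0 hhv
    have hc'u : (A x').mulVec (v ⨯₃ w) = ((A x').mulVec v) ⨯₃ ((A x').mulVec w) :=
      cross_equivariant _ (hPA x').2.1 (hPA x').2.2 v w
    rcases s2 with h2 | h2 <;> rcases s1 with h1 | h1
    · -- A x' = 1, contradiction
      exfalso
      apply hc'1
      apply eq_of_basis _ _ v w (v ⨯₃ w) hd
      · rw [h2, Matrix.one_mulVec]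
      · rw [h1, Matrix.one_mulVec]
      · rw [hc'u, h2, h1, Matrix.one_mulVec]
    · -- A x' = B y, contradiction
      exfalso
      have heq : A x' = B y := by
        apply eq_of_basis _ _ v w (v ⨯₃ w) hd
        · rw [h2, hhv]
        · rw [h1, hyw]
        · rw [hc'u, h2, h1, hhu, LinearMap.map_neg]
      have := hinj (show f (x', 1) = f (1, y) from heq)
      rw [Prod.ext_iff] at this
      exact hx' this.1
    · -- A x' = A x₀
      have heq : A x' = A x₀ := by
        apply eq_of_basis _ _ v w (v ⨯₃ w) hd
        · rw [h2, hcv]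
        · rw [h1, hcw]
        · rw [hc'u, h2, h1, hcu, LinearMap.map_neg₂]
      have := hinj (show f (x', 1) = f (x₀, 1) from heq)
      rw [Prod.ext_iff] at this
      exact this.1
    · -- A x' = A x₀ * B y, contradiction
      exfalso
      have heq : A x' = A x₀ * B y := by
        apply eq_of_basis _ _ v w (v ⨯₃ w) hd
        · rw [h2, ← Matrix.mulVec_mulVec, hhv, hcv]
        · rw [h1, ← Matrix.mulVec_mulVec, hyw, Matrix.mulVec_neg, hcw]
        · rw [hc'u, h2, h1, ← Matrix.mulVec_mulVec, hhu, Matrix.mulVec_neg, hcu, neg_neg,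
            LinearMap.map_neg₂, LinearMap.map_neg, neg_neg]
      have he : f (x', 1) = f (x₀, y) := by
        rw [show ((x₀:G₁), y) = (x₀, (1:G₂)) * ((1:G₁), y) by simp [Prod.ext_iff],
          _root_.map_mul]
        exact heq
      have := hinj he
      rw [Prod.ext_iff] at this
      exact hyne1 this.2.symm
  constructor
  · rw [Nat.card_eq_two_iff]
    refine ⟨1, x₀, Ne.symm hx₀, ?_⟩
    ext z
    simp only [Set.mem_insert_iff, Set.mem_singleton_iff, Set.mem_univ, iff_true]
    by_cases hz : z = 1
    · exact Or.inl hz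
    · exact Or.inr (hkey z hz)
  · exact ⟨y, hyne1, hy2⟩

end SO3Proof

theorem so3_direct_product_structure (G₁ G₂ : Type*) [Group G₁] [Group G₂]
    (h₁ : ∃ g : G₁, g ≠ 1) (h₂ : ∃ g : G₂, g ≠ 1)
    (f : G₁ × G₂ →* Matrix (Fin 3) (Fin 3) ℝ)
    (hrange : ∀ g, f g ∈ Matrix.specialOrthogonalGroup (Fin 3) ℝ)
    (hinj : Function.Injective f)
    (hnonab : ¬ ∀ a b : G₁ × G₂, a * b = b * a) :
    (Nat.card G₁ = 2 ∧ (¬ ∀ a b : G₂, a * b = b * a) ∧ ∃ b : G₂, b ≠ 1 ∧ b ^ 2 = 1) ∨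
    (Nat.card G₂ = 2 ∧ (¬ ∀ a b : G₁, a * b = b * a) ∧ ∃ a : G₁, a ≠ 1 ∧ a ^ 2 = 1) := by
  by_cases hab : ∀ a b : G₂, a * b = b * a
  · -- then G₁ must be non-abelian
    have hG₁ : ¬ ∀ a b : G₁, a * b = b * a := by
      intro h
      apply hnonab
      intro a b
      rw [Prod.ext_iff]
      exact ⟨h a.1 b.1, hab a.2 b.2⟩
    right
    have hmain := SO3Proof.main_half (G₁ := G₂) (G₂ := G₁)
      (f.comp (MulEquiv.prodComm : G₂ × G₁ ≃* G₁ × G₂).toMonoidHom)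
      (fun g => hrange _)
      (fun p q hpq => (MulEquiv.prodComm : G₂ × G₁ ≃* G₁ × G₂).injective (hinj hpq))
      h₂ hG₁
    exact ⟨hmain.1, hG₁, hmain.2⟩
  · left
    have hmain := SO3Proof.main_half f hrange hinj h₁ hab
    exact ⟨hmain.1, hab, hmain.2⟩
end

section
/- The subgroup of SO_3(R) generated by A = diag(1,-1,-1), the rotation B̃ about the x-axis with rows (1,0,0),(0,-3/5,-4/5),(0,4/5,-3/5), and C = diag(-1,1,-1) is a non-abelian group isomorphic to the direct product of the group of order 2 generated by A and the infinite non-abelian group generated by B̃ and C; in particular A does not lie in the subgroup generated by B̃ and C. -/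
open scoped Matrix

namespace SO3Ex

abbrev MR := Matrix (Fin 3) (Fin 3) ℝ

noncomputable def A : MR := !![(1 : ℝ), 0, 0; 0, -1, 0; 0, 0, -1]
noncomputable def B : MR := !![(1 : ℝ), 0, 0; 0, -3/5, -4/5; 0, 4/5, -3/5]
noncomputable def Bt : MR := !![(1 : ℝ), 0, 0; 0, -3/5, 4/5; 0, -4/5, -3/5]
noncomputable def C : MR := !![(-1 : ℝ), 0, 0; 0, 1, 0; 0, 0, -1]

private lemma hA2 : A * A = 1 := by
  ext i j; fin_cases i <;> fin_cases j <;>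
    simp [A, Matrix.mul_apply, Fin.sum_univ_three, Matrix.one_apply,
      Matrix.vecHead, Matrix.vecTail] <;> norm_num

private lemma hBBt : B * Bt = 1 := by
  ext i j; fin_cases i <;> fin_cases j <;>
    simp [B, Bt, Matrix.mul_apply, Fin.sum_univ_three, Matrix.one_apply,
      Matrix.vecHead, Matrix.vecTail] <;> norm_num

private lemma hBtB : Bt * B = 1 := by
  ext i j; fin_cases i <;> fin_cases j <;>
    simp [B, Bt, Matrix.mul_apply, Fin.sum_univ_three, Matrix.one_apply,
      Matrix.vecHead, Matrix.vecTail] <;> norm_num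

private lemma hC2 : C * C = 1 := by
  ext i j; fin_cases i <;> fin_cases j <;>
    simp [C, Matrix.mul_apply, Fin.sum_univ_three, Matrix.one_apply,
      Matrix.vecHead, Matrix.vecTail] <;> norm_num

noncomputable def au : MRˣ := ⟨A, A, hA2, hA2⟩
noncomputable def bu : MRˣ := ⟨B, Bt, hBBt, hBtB⟩
noncomputable def cu : MRˣ := ⟨C, C, hC2, hC2⟩

private lemma hCBC : C * B * C = Bt := by
  ext i j; fin_cases i <;> fin_cases j <;>
    simp [B, Bt, C, Matrix.mul_apply, Fin.sum_univ_three,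
      Matrix.vecHead, Matrix.vecTail] <;> norm_num

private lemma hABBA : A * B = B * A := by
  ext i j; fin_cases i <;> fin_cases j <;>
    simp [A, B, Matrix.mul_apply, Fin.sum_univ_three,
      Matrix.vecHead, Matrix.vecTail] <;> norm_num

private lemma hACCA : A * C = C * A := by
  ext i j; fin_cases i <;> fin_cases j <;>
    simp [A, C, Matrix.mul_apply, Fin.sum_univ_three,
      Matrix.vecHead, Matrix.vecTail] <;> norm_num

/-- unit level lemmas -/
private lemma ha2u : au * au = 1 := Units.ext hA2
private lemma hc2u : cu * cu = 1 := Units.ext hC2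
private lemma hainv : au⁻¹ = au := inv_eq_of_mul_eq_one_right ha2u
private lemma hcinv : cu⁻¹ = cu := inv_eq_of_mul_eq_one_right hc2u

private lemma hcbcu : cu * bu * cu⁻¹ = bu⁻¹ := by
  rw [hcinv]
  apply Units.ext
  exact hCBC

private lemma habu : au * bu = bu * au := Units.ext hABBA
private lemma hacu : au * cu = cu * au := Units.ext hACCA

private lemma hane1 : au ≠ 1 := by
  intro h
  have h1 : A = (1 : MR) := congrArg Units.val h
  have := congrFun (congrFun h1 1) 1
  simp [A, Matrix.one_apply, Matrix.vecHead, Matrix.vecTail] at this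
  norm_num at this

/-- conjugation relation -/
private lemma hconj (n : ℤ) : cu * bu ^ n * cu⁻¹ = bu ^ (-n) := by
  have h1 : MulAut.conj cu (bu ^ n) = (MulAut.conj cu bu) ^ n := map_zpow _ _ _
  rw [MulAut.conj_apply, MulAut.conj_apply, hcbcu] at h1
  rw [h1, inv_zpow, zpow_neg]

private lemma hrel (n : ℤ) : cu * bu ^ n = bu ^ (-n) * cu := by
  have h := hconj n
  calc cu * bu ^ n = cu * bu ^ n * cu⁻¹ * cu := by rw [inv_mul_cancel_right]
  _ = bu ^ (-n) * cu := by rw [h]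

private lemma hrel' (n : ℤ) : bu ^ n * cu = cu * bu ^ (-n) := by
  have := hrel (-n)
  rw [neg_neg] at this
  exact this.symm

/-- The subgroup ⟨bu, cu⟩ described explicitly. -/
noncomputable def H : Subgroup MRˣ where
  carrier := {u | ∃ n : ℤ, u = bu ^ n ∨ u = cu * bu ^ n}
  one_mem' := ⟨0, Or.inl (by simp)⟩
  mul_mem' := by
    rintro x y ⟨n, hn | hn⟩ ⟨m, hm | hm⟩ <;> subst hn hm
    · exact ⟨n + m, Or.inl (zpow_add bu n m).symm⟩
    · refine ⟨-n + m, Or.inr ?_⟩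
      calc bu ^ n * (cu * bu ^ m) = (bu ^ n * cu) * bu ^ m := by rw [mul_assoc]
      _ = cu * bu ^ (-n) * bu ^ m := by rw [hrel']
      _ = cu * bu ^ (-n + m) := by rw [mul_assoc, ← zpow_add]
    · exact ⟨n + m, Or.inr (by rw [mul_assoc, ← zpow_add])⟩
    · refine ⟨-n + m, Or.inl ?_⟩
      calc cu * bu ^ n * (cu * bu ^ m) = cu * ((bu ^ n * cu) * bu ^ m) := by
            rw [mul_assoc, mul_assoc]
      _ = cu * (cu * bu ^ (-n) * bu ^ m) := by rw [hrel']
      _ = (cu * cu) * (bu ^ (-n) * bu ^ m) := by rw [mul_assoc, ← mul_assoc]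
      _ = bu ^ (-n + m) := by rw [hc2u, one_mul, ← zpow_add]
  inv_mem' := by
    rintro x ⟨n, hn | hn⟩ <;> subst hn
    · exact ⟨-n, Or.inl (by rw [zpow_neg])⟩
    · refine ⟨n, Or.inr ?_⟩
      have hsq : (cu * bu ^ n) * (cu * bu ^ n) = 1 := by
        calc (cu * bu ^ n) * (cu * bu ^ n) = cu * ((bu ^ n * cu) * bu ^ n) := by
              rw [mul_assoc, mul_assoc]
        _ = cu * (cu * bu ^ (-n) * bu ^ n) := by rw [hrel']
        _ = (cu * cu) * (bu ^ (-n) * bu ^ n) := by rw [mul_assoc, ← mul_assoc]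
        _ = 1 := by rw [hc2u, one_mul, ← zpow_add, neg_add_cancel, zpow_zero]
      exact inv_eq_of_mul_eq_one_right hsq

/-! ### infinite order of bu -/

def N3 : Matrix (Fin 3) (Fin 3) ℤ := !![5, 0, 0; 0, -3, -4; 0, 4, -3]

def Nbar : Matrix (Fin 3) (Fin 3) (ZMod 5) := !![0, 0, 0; 0, 2, 1; 0, 4, 2]

private lemma hN3R : N3.map (Int.cast : ℤ → ℝ) = (5 : ℝ) • B := by
  ext i j; fin_cases i <;> fin_cases j <;>
    simp [N3, B, Matrix.map_apply, Matrix.vecHead, Matrix.vecTail] <;> norm_num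

private lemma hN3bar : N3.map (Int.cast : ℤ → ZMod 5) = Nbar := by
  ext i j; fin_cases i <;> fin_cases j <;>
    simp [N3, Nbar, Matrix.map_apply, Matrix.vecHead, Matrix.vecTail] <;> decide

private lemma hNbar3 : Nbar * Nbar * Nbar = Nbar := by decide

private lemma hNbar_pow (k : ℕ) : Nbar ^ (k + 1) = Nbar ∨ Nbar ^ (k + 1) = Nbar * Nbar := by
  induction k with
  | zero => exact Or.inl (pow_one _)
  | succ k ih =>
    rcases ih with h | h
    · right; rw [pow_succ, h]
    · left; rw [pow_succ, h, hNbar3]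

private lemma hNbar_ne : Nbar ≠ 0 := by decide
private lemma hNbar2_ne : Nbar * Nbar ≠ 0 := by decide

private lemma hBpow_ne (k : ℕ) : B ^ (k + 1) ≠ 1 := by
  intro h
  -- transfer to ℤ matrices
  have h1 : ((Int.castRingHom ℝ).mapMatrix (N3 ^ (k + 1)) : MR) = (5 : ℝ) ^ (k + 1) • 1 := by
    rw [map_pow, RingHom.mapMatrix_apply]
    show (N3.map (Int.cast : ℤ → ℝ)) ^ (k+1) = _
    rw [hN3R, smul_pow, h]
  have h2 : N3 ^ (k + 1) = (5 : ℤ) ^ (k + 1) • (1 : Matrix (Fin 3) (Fin 3) ℤ) := by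
    ext i j
    have h3 := congrFun (congrFun h1 i) j
    simp only [RingHom.mapMatrix_apply, Matrix.map_apply, Int.coe_castRingHom,
      Matrix.smul_apply, Matrix.one_apply, smul_eq_mul] at h3 ⊢
    split_ifs at h3 ⊢ <;> exact_mod_cast h3
  -- now mod 5
  have h4 : Nbar ^ (k + 1) = 0 := by
    have h5 : ((Int.castRingHom (ZMod 5)).mapMatrix (N3 ^ (k + 1)) : Matrix (Fin 3) (Fin 3) (ZMod 5))
        = Nbar ^ (k + 1) := by
      rw [map_pow, RingHom.mapMatrix_apply]
      show (N3.map (Int.cast : ℤ → ZMod 5)) ^ (k+1) = _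
      rw [hN3bar]
    rw [← h5, h2]
    ext i j
    simp only [RingHom.mapMatrix_apply, Matrix.map_apply, Int.coe_castRingHom,
      Matrix.smul_apply, Matrix.one_apply, smul_eq_mul, Matrix.zero_apply]
    push_cast
    have : (5 : ZMod 5) = 0 := by decide
    rw [this]
    simp
  rcases hNbar_pow k with h6 | h6 <;> rw [h6] at h4
  · exact hNbar_ne h4
  · exact hNbar2_ne h4

private lemma hbu_inf : ¬ IsOfFinOrder bu := by
  intro h
  obtain ⟨n, hn, hpow⟩ := isOfFinOrder_iff_pow_eq_one.mp h
  have : B ^ n = 1 := by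
    have := congrArg Units.val hpow
    simp [Units.val_pow_eq_pow_val] at this; exact this
  obtain ⟨k, rfl⟩ := Nat.exists_eq_add_of_lt hn
  rw [zero_add] at this
  exact hBpow_ne k this

private lemma hbu_zpow_ne (n : ℤ) (hn : n ≠ 0) : bu ^ n ≠ 1 := by
  intro h
  apply hbu_inf
  apply isOfFinOrder_iff_pow_eq_one.mpr
  refine ⟨n.natAbs, Int.natAbs_pos.mpr hn, ?_⟩
  rcases Int.natAbs_eq n with he | he
  · rw [← zpow_natCast, ← he, h]
  · rw [← zpow_natCast, ← neg_neg (n.natAbs : ℤ), ← he, zpow_neg, h, inv_one]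

/-! ### first row invariant -/

noncomputable def K : Subgroup MRˣ where
  carrier := {u | (u : MR) *ᵥ ![1, 0, 0] = ![1, 0, 0]}
  one_mem' := by show ((1 : MRˣ) : MR) *ᵥ _ = _; simp
  mul_mem' := by
    intro x y hx hy
    show ((x * y : MRˣ) : MR) *ᵥ _ = _
    rw [Units.val_mul, ← Matrix.mulVec_mulVec, hy, hx]
  inv_mem' := by
    intro x hx
    show ((x⁻¹ : MRˣ) : MR) *ᵥ _ = _
    conv_lhs => rw [← hx]
    rw [Matrix.mulVec_mulVec, Units.inv_mul, Matrix.one_mulVec]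

private lemma hbK : bu ∈ K := by
  show B *ᵥ ![1, 0, 0] = ![1, 0, 0]
  ext i; fin_cases i <;>
    simp [B, Matrix.mulVec, dotProduct, Fin.sum_univ_three,
      Matrix.vecHead, Matrix.vecTail]

private lemma hBpow00 (n : ℤ) : ((bu ^ n : MRˣ) : MR) 0 0 = 1 := by
  have h := K.zpow_mem hbK n
  have h' : ((bu ^ n : MRˣ) : MR) *ᵥ ![1, 0, 0] = ![1, 0, 0] := h
  have h0 := congrFun h' 0
  simpa [Matrix.mulVec, dotProduct, Fin.sum_univ_three] using h0

/-- a is not in ⟨b, c⟩. -/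
private lemma hanotH : au ∉ H := by
  rintro ⟨n, hn | hn⟩
  · -- au = bu ^ n
    by_cases h0 : n = 0
    · subst h0; simp at hn; exact hane1 hn
    · have h2 : bu ^ (2 * n) = 1 := by
        rw [two_mul, zpow_add, ← hn, ha2u]
      exact hbu_zpow_ne (2 * n) (by omega) h2
  · -- au = cu * bu ^ n : compare (0,0) entries
    have hval : A = C * ((bu ^ n : MRˣ) : MR) := by
      have h := congrArg Units.val hn
      rw [Units.val_mul] at h
      exact h
    have h00 := congrFun (congrFun hval 0) 0
    rw [Matrix.mul_apply, Fin.sum_univ_three] at h00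
    have e1 : A 0 0 = 1 := by norm_num [A]
    have e2 : C 0 0 = -1 := by norm_num [C]
    have e3 : C 0 1 = 0 := by norm_num [C]
    have e4 : C 0 2 = 0 := by norm_num [C]; rfl
    rw [e1, e2, e3, e4, hBpow00 n] at h00
    norm_num at h00

private lemma hclBC_le_H : Subgroup.closure ({bu, cu} : Set MRˣ) ≤ H := by
  rw [Subgroup.closure_le]
  rintro x (rfl | rfl)
  · exact ⟨1, Or.inl (zpow_one bu).symm⟩
  · exact ⟨0, Or.inr (by simp)⟩

private lemma hanot : au ∉ Subgroup.closure ({bu, cu} : Set MRˣ) :=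
  fun h => hanotH (hclBC_le_H h)

private lemma hclA (u : MRˣ) (hu : u ∈ Subgroup.closure ({au} : Set MRˣ)) : u = 1 ∨ u = au := by
  rw [← Subgroup.zpowers_eq_closure] at hu
  obtain ⟨n, rfl⟩ := hu
  show au ^ n = 1 ∨ au ^ n = au
  have ha2 : au ^ (2 : ℤ) = 1 := by rw [zpow_two]; exact ha2u
  have key : au ^ n = au ^ (n % 2) := by
    calc au ^ n = au ^ (2 * (n / 2) + n % 2) := by rw [Int.mul_ediv_add_emod]
    _ = au ^ (2 * (n / 2)) * au ^ (n % 2) := zpow_add _ _ _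
    _ = (au ^ (2 : ℤ)) ^ (n / 2) * au ^ (n % 2) := by rw [zpow_mul]
    _ = au ^ (n % 2) := by rw [ha2, one_zpow, one_mul]
  rcases Int.emod_two_eq n with h | h <;> rw [h] at key <;> rw [key]
  · left; exact zpow_zero au
  · right; exact zpow_one au

private lemma hbc_ne : bu * cu ≠ cu * bu := by
  intro h
  have h1 : B * C = C * B := by
    have := congrArg Units.val h
    simp [Units.val_mul] at this; exact this
  have := congrFun (congrFun h1 1) 2
  rw [Matrix.mul_apply, Matrix.mul_apply] at this
  simp [B, C, Fin.sum_univ_three, Matrix.vecHead, Matrix.vecTail] at this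
  norm_num at this

private lemma hcomm (y : MRˣ) (hy : y ∈ Subgroup.closure ({bu, cu} : Set MRˣ)) : Commute au y := by
  induction hy using Subgroup.closure_induction with
  | mem z hz => rcases hz with rfl | rfl
                · exact habu
                · exact hacu
  | one => exact Commute.one_right au
  | mul _ _ _ _ h1 h2 => exact h1.mul_right h2
  | inv _ _ h1 => exact h1.inv_right

end SO3Ex

open SO3Ex in
theorem so3_nonabelian_direct_product_example :
    ∃ a b c : (Matrix (Fin 3) (Fin 3) ℝ)ˣ,
      (a : Matrix (Fin 3) (Fin 3) ℝ) = !![(1 : ℝ), 0, 0; 0, -1, 0; 0, 0, -1] ∧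
      (b : Matrix (Fin 3) (Fin 3) ℝ) = !![(1 : ℝ), 0, 0; 0, -3/5, -4/5; 0, 4/5, -3/5] ∧
      (c : Matrix (Fin 3) (Fin 3) ℝ) = !![(-1 : ℝ), 0, 0; 0, 1, 0; 0, 0, -1] ∧
      (¬ ∀ x ∈ Subgroup.closure {a, b, c}, ∀ y ∈ Subgroup.closure {a, b, c}, x * y = y * x) ∧
      Nat.card (Subgroup.closure ({a} : Set (Matrix (Fin 3) (Fin 3) ℝ)ˣ)) = 2 ∧
      Infinite (Subgroup.closure ({b, c} : Set (Matrix (Fin 3) (Fin 3) ℝ)ˣ)) ∧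
      (¬ ∀ x ∈ Subgroup.closure {b, c}, ∀ y ∈ Subgroup.closure {b, c}, x * y = y * x) ∧
      a ∉ Subgroup.closure ({b, c} : Set (Matrix (Fin 3) (Fin 3) ℝ)ˣ) ∧
      Nonempty ((Subgroup.closure ({a, b, c} : Set (Matrix (Fin 3) (Fin 3) ℝ)ˣ)) ≃*
        (Subgroup.closure ({a} : Set (Matrix (Fin 3) (Fin 3) ℝ)ˣ)) ×
          (Subgroup.closure ({b, c} : Set (Matrix (Fin 3) (Fin 3) ℝ)ˣ))) := by
  refine ⟨au, bu, cu, rfl, rfl, rfl, ?_, ?_, ?_, ?_, hanot, ?_⟩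
  · -- nonabelian {a,b,c}
    intro h
    have hb : bu ∈ Subgroup.closure ({au, bu, cu} : Set _) := Subgroup.subset_closure (by simp)
    have hc : cu ∈ Subgroup.closure ({au, bu, cu} : Set _) := Subgroup.subset_closure (by simp)
    exact hbc_ne (h bu hb cu hc)
  · -- card
    rw [← Subgroup.zpowers_eq_closure, Nat.card_zpowers]
    have : au ^ 2 = 1 := by rw [pow_two]; exact ha2u
    exact orderOf_eq_prime this hane1
  · -- infinite
    have hb : bu ∈ Subgroup.closure ({bu, cu} : Set _) := Subgroup.subset_closure (by simp)
    refine Infinite.of_injective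
      (fun n : ℤ => (⟨bu ^ n, zpow_mem hb n⟩ : Subgroup.closure ({bu, cu} : Set _))) ?_
    intro n m hnm
    have h1 : bu ^ n = bu ^ m := congrArg Subtype.val hnm
    by_contra hne
    have h2 : bu ^ (n - m) = 1 := by rw [zpow_sub, h1, mul_inv_cancel]
    exact hbu_zpow_ne (n - m) (by omega) h2
  · -- nonabelian {b,c}
    intro h
    have hb : bu ∈ Subgroup.closure ({bu, cu} : Set _) := Subgroup.subset_closure (by simp)
    have hc : cu ∈ Subgroup.closure ({bu, cu} : Set _) := Subgroup.subset_closure (by simp)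
    exact hbc_ne (h bu hb cu hc)
  · -- the MulEquiv
    set HA := Subgroup.closure ({au} : Set MRˣ)
    set HBC := Subgroup.closure ({bu, cu} : Set MRˣ)
    have comm : ∀ (x : HA) (y : HBC), Commute (HA.subtype x) (HBC.subtype y) := by
      rintro ⟨x, hx⟩ ⟨y, hy⟩
      rcases hclA x hx with rfl | rfl
      · exact Commute.one_left y
      · exact hcomm y hy
    set ψ := MonoidHom.noncommCoprod HA.subtype HBC.subtype comm with hψ
    have hinj : Function.Injective ψ := by
      rw [injective_iff_map_eq_one]
      rintro ⟨⟨x, hx⟩, ⟨y, hy⟩⟩ h1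
      have h2 : x * y = 1 := h1
      rcases hclA x hx with rfl | rfl
      · rw [one_mul] at h2
        subst h2
        rfl
      · exfalso
        have : au = y⁻¹ := eq_inv_of_mul_eq_one_left h2
        exact hanot (this ▸ inv_mem hy)
    have hrange : ψ.range = Subgroup.closure ({au, bu, cu} : Set MRˣ) := by
      apply le_antisymm
      · rintro _ ⟨⟨⟨x, hx⟩, ⟨y, hy⟩⟩, rfl⟩
        have hx' : x ∈ Subgroup.closure ({au, bu, cu} : Set MRˣ) :=
          Subgroup.closure_mono (by intro z hz; simp at hz; subst hz; simp) hx
        have hy' : y ∈ Subgroup.closure ({au, bu, cu} : Set MRˣ) :=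
          Subgroup.closure_mono (fun z hz => Set.mem_insert_of_mem _ hz) hy
        exact mul_mem hx' hy'
      · rw [Subgroup.closure_le]
        rintro x (rfl | rfl | rfl)
        · exact ⟨(⟨au, Subgroup.subset_closure rfl⟩, 1),
            by simp [hψ, MonoidHom.noncommCoprod_apply]⟩
        · exact ⟨(1, ⟨bu, Subgroup.subset_closure (by simp)⟩),
            by simp [hψ, MonoidHom.noncommCoprod_apply]⟩
        · exact ⟨(1, ⟨cu, Subgroup.subset_closure (by simp)⟩),
            by simp [hψ, MonoidHom.noncommCoprod_apply]⟩
    exact ⟨(MulEquiv.subgroupCongr hrange.symm).trans (MonoidHom.ofInjective hinj).symm⟩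
end
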